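/- arXiv:0901.3180 — 5 statements merged into one kernel-verified Lean document; each statement's English description precedes it below -/
import Mathlib

section
/- For a totally ordered finite set S, the collection NC(S) of non-crossing partitions of S, ordered by reverse refinement (π ≥ ρ iff π is coarser than ρ), forms a lattice with greatest element the one-class partition {S}. -/
/-- A collection of classes (of a partition) in a linear order is non-crossing if
whenever `i < j` lie in one class and `k < l` in a different class, the crossing
patterns `i < k < j < l` and `k < i < l < j` do not occur. -/
def IsNC {α : Type*} [LinearOrder α] (parts : Finset (Finset α)) : Prop :=
  ∀ i j k l : α, i < k → k < j → j < l →
    ∀ B ∈ parts, ∀ C ∈ parts, B ≠ C →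
      i ∈ B → j ∈ B → k ∈ C → l ∈ C → False

lemma isNC_of_subsingleton {α : Type*} [LinearOrder α] {parts : Finset (Finset α)}
    (h : (parts : Set (Finset α)).Subsingleton) : IsNC parts := by
  intro i j k l _ _ _ B hB C hC hBC _ _ _ _
  exact hBC (h hB hC)

lemma isNC_inf {α : Type*} [LinearOrder α] [Fintype α] {s : Finset α}
    {P Q : Finpartition s} (hP : IsNC P.parts) (hQ : IsNC Q.parts) :
    IsNC (P ⊓ Q).parts := by
  intro i j k l h1 h2 h3 B hB C hC hBC hi hj hk hl
  rw [Finpartition.parts_inf] at hB hC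
  obtain ⟨⟨b1, b2⟩, hb, rfl⟩ := Finset.mem_image.1 (Finset.mem_of_mem_erase hB)
  obtain ⟨⟨c1, c2⟩, hc, rfl⟩ := Finset.mem_image.1 (Finset.mem_of_mem_erase hC)
  rw [Finset.mem_product] at hb hc
  simp only [Finset.inf_eq_inter, Finset.mem_inter] at hi hj hk hl
  rcases eq_or_ne b1 c1 with rfl | hne
  · have hne2 : b2 ≠ c2 := by rintro rfl; exact hBC rfl
    exact hQ i j k l h1 h2 h3 b2 hb.2 c2 hc.2 hne2 hi.2 hj.2 hk.2 hl.2
  · exact hP i j k l h1 h2 h3 b1 hb.1 c1 hc.1 hne hi.1 hj.1 hk.1 hl.1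

/-- for a (nonempty) totally ordered finite set `S`, the collection
`NC(S)` of non-crossing partitions of `S`, ordered by reverse refinement
(`π ≤ ρ` iff `π` refines `ρ`, i.e. `ρ` is coarser), is a lattice — every pair has
a least upper bound and a greatest lower bound — whose greatest element is the
one-class partition `{S}`. -/
theorem stmt_0 (α : Type*) [LinearOrder α] [Fintype α] [Nonempty α] :
    (∀ P Q : {P : Finpartition (Finset.univ : Finset α) // IsNC P.parts},
        ∃ R : {P : Finpartition (Finset.univ : Finset α) // IsNC P.parts}, IsLUB {P, Q} R) ∧
    (∀ P Q : {P : Finpartition (Finset.univ : Finset α) // IsNC P.parts},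
        ∃ R : {P : Finpartition (Finset.univ : Finset α) // IsNC P.parts}, IsGLB {P, Q} R) ∧
    (∃ T : {P : Finpartition (Finset.univ : Finset α) // IsNC P.parts},
        T.1.parts = {Finset.univ} ∧
        ∀ P : {P : Finpartition (Finset.univ : Finset α) // IsNC P.parts}, P ≤ T) := by
  classical
  have huniv : (Finset.univ : Finset α) ≠ ⊥ := by
    simpa using Finset.univ_nonempty.ne_empty
  have htopNC : IsNC (⊤ : Finpartition (Finset.univ : Finset α)).parts :=
    isNC_of_subsingleton (by
      intro B hB C hC
      have hB' := Finpartition.parts_top_subset _ hB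
      have hC' := Finpartition.parts_top_subset _ hC
      rw [Finset.mem_singleton] at hB' hC'
      rw [hB', hC'])
  refine ⟨?_, ?_, ?_⟩
  · -- LUB
    intro P Q
    set s : Finset (Finpartition (Finset.univ : Finset α)) :=
      Finset.univ.filter (fun R => IsNC R.parts ∧ P.1 ≤ R ∧ Q.1 ≤ R) with hs
    have hmem : ∀ R, R ∈ s ↔ IsNC R.parts ∧ P.1 ≤ R ∧ Q.1 ≤ R := by
      intro R; simp [hs]
    have hne : s.Nonempty := ⟨⊤, (hmem ⊤).2 ⟨htopNC, le_top, le_top⟩⟩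
    set R0 := s.inf' hne id with hR0
    have hR0mem : R0 ∈ {R : Finpartition (Finset.univ : Finset α) |
        IsNC R.parts ∧ P.1 ≤ R ∧ Q.1 ≤ R} := by
      apply Finset.inf'_mem
      · rintro x ⟨hx1, hx2, hx3⟩ y ⟨hy1, hy2, hy3⟩
        exact ⟨isNC_inf hx1 hy1, le_inf hx2 hy2, le_inf hx3 hy3⟩
      · intro R hR; exact (hmem R).1 hR
    refine ⟨⟨R0, hR0mem.1⟩, ?_, ?_⟩
    · rintro x (rfl | hx)
      · exact hR0mem.2.1
      · simp only [Set.mem_singleton_iff] at hx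
        subst hx
        exact hR0mem.2.2
    · intro b hb
      have hPb : P ≤ b := hb (Set.mem_insert _ _)
      have hQb : Q ≤ b := hb (Set.mem_insert_of_mem _ rfl)
      have : b.1 ∈ s := (hmem b.1).2 ⟨b.2, hPb, hQb⟩
      exact Finset.inf'_le id this
  · -- GLB
    intro P Q
    refine ⟨⟨P.1 ⊓ Q.1, isNC_inf P.2 Q.2⟩, ?_, ?_⟩
    · intro x hx
      show P.1 ⊓ Q.1 ≤ x.1
      rcases hx with rfl | hx
      · exact inf_le_left
      · simp only [Set.mem_singleton_iff] at hx
        subst hx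
        exact inf_le_right
    · intro b hb
      have h1 : b.1 ≤ P.1 := hb (Set.mem_insert _ _)
      have h2 : b.1 ≤ Q.1 := hb (Set.mem_insert_of_mem _ rfl)
      show b.1 ≤ P.1 ⊓ Q.1
      exact le_inf h1 h2
  · -- top
    refine ⟨⟨⊤, htopNC⟩, ?_, fun P => show P.1 ≤ (⊤ : Finpartition _) from le_top⟩
    have h1 : (⊤ : Finpartition (Finset.univ : Finset α)).parts ⊆ {Finset.univ} :=
      Finpartition.parts_top_subset _
    have h2 : (⊤ : Finpartition (Finset.univ : Finset α)).parts.Nonempty :=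
      Finpartition.parts_nonempty _ huniv
    rcases Finset.subset_singleton_iff.1 h1 with h | h
    · exact absurd h h2.ne_empty
    · exact h
end

section
/- The map sending a Temperley–Lieb diagram on 2n boundary points to the partition of {1,...,n} given by its black (shaded) regions is a bijection between Temperley–Lieb diagrams with n strands and non-crossing partitions of {1,...,n}. In particular, the number of non-crossing partitions of {1,...,n} equals the n-th Catalan number. -/
open scoped Classical

namespace TL
open Finset
def IsPartOn (s : Finset ℕ) (P : Finset (Finset ℕ)) : Prop :=
  (∀ B ∈ P, B.Nonempty) ∧ (∀ B ∈ P, B ⊆ s) ∧ ∀ x ∈ s, ∃! B, B ∈ P ∧ x ∈ B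
noncomputable def ncp (s : Finset ℕ) : Finset (Finset (Finset ℕ)) :=
  s.powerset.powerset.filter fun P => IsPartOn s P ∧ IsNC P
noncomputable def ncm (s : Finset ℕ) : Finset (Finset (Finset ℕ)) :=
  (ncp s).filter fun P => ∀ B ∈ P, B.card = 2
lemma mem_ncp {s : Finset ℕ} {P : Finset (Finset ℕ)} :
    P ∈ ncp s ↔ IsPartOn s P ∧ IsNC P := by
  constructor
  · intro h; exact (mem_filter.mp h).2
  · intro h
    refine mem_filter.mpr ⟨?_, h⟩
    rw [mem_powerset]
    intro B hB
    rw [mem_powerset]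
    exact h.1.2.1 B hB

lemma mem_ncm {s : Finset ℕ} {P : Finset (Finset ℕ)} :
    P ∈ ncm s ↔ (IsPartOn s P ∧ IsNC P) ∧ ∀ B ∈ P, B.card = 2 := by
  rw [ncm, mem_filter, mem_ncp]

section transport
variable {s t : Finset ℕ} {f : ℕ → ℕ}

lemma map_mem_ncp (hft : ∀ x ∈ s, f x ∈ t) (hsurj : ∀ y ∈ t, ∃ x ∈ s, f x = y)
    (hmono : StrictMonoOn f s) {P : Finset (Finset ℕ)} (hP : P ∈ ncp s) :
    P.image (fun B => B.image f) ∈ ncp t := by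
  rw [mem_ncp] at hP ⊢
  obtain ⟨⟨hne, hsub, hcov⟩, hnc⟩ := hP
  have hinj : Set.InjOn f s := hmono.injOn
  refine ⟨⟨?_, ?_, ?_⟩, ?_⟩
  · rintro B' hB'
    obtain ⟨B, hB, rfl⟩ := mem_image.mp hB'
    exact (hne B hB).image f
  · rintro B' hB'
    obtain ⟨B, hB, rfl⟩ := mem_image.mp hB'
    intro y hy
    obtain ⟨x, hx, rfl⟩ := mem_image.mp hy
    exact hft x (hsub B hB hx)
  · intro y hy
    obtain ⟨x, hxs, rfl⟩ := hsurj y hy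
    obtain ⟨B, ⟨hB, hxB⟩, huniq⟩ := hcov x hxs
    refine ⟨B.image f, ⟨mem_image_of_mem _ hB, mem_image_of_mem _ hxB⟩, ?_⟩
    rintro C' ⟨hC', hxC'⟩
    obtain ⟨C, hC, rfl⟩ := mem_image.mp hC'
    obtain ⟨x', hx'C, hfx⟩ := mem_image.mp hxC'
    have : x' = x := hinj (hsub C hC hx'C) hxs hfx
    subst this
    rw [huniq C ⟨hC, hx'C⟩]
  · intro i j k l hik hkj hjl B' hB' C' hC' hBC' hi hj hk hl
    obtain ⟨B, hB, rfl⟩ := mem_image.mp hB'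
    obtain ⟨C, hC, rfl⟩ := mem_image.mp hC'
    obtain ⟨a, ha, rfl⟩ := mem_image.mp hi
    obtain ⟨b, hb, rfl⟩ := mem_image.mp hj
    obtain ⟨c, hc, rfl⟩ := mem_image.mp hk
    obtain ⟨d, hd, rfl⟩ := mem_image.mp hl
    have haS := hsub B hB ha
    have hbS := hsub B hB hb
    have hcS := hsub C hC hc
    have hdS := hsub C hC hd
    exact hnc a b c d ((hmono.lt_iff_lt haS hcS).mp hik)
      ((hmono.lt_iff_lt hcS hbS).mp hkj) ((hmono.lt_iff_lt hbS hdS).mp hjl)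
      B hB C hC (fun h => hBC' (by rw [h])) ha hb hc hd

variable {g : ℕ → ℕ}

lemma double_image_cancel {s : Finset ℕ} {f g : ℕ → ℕ} {P : Finset (Finset ℕ)}
    (hsub : ∀ B ∈ P, B ⊆ s) (hgf : ∀ x ∈ s, g (f x) = x) :
    (P.image (fun B => B.image f)).image (fun B => B.image g) = P := by
  rw [image_image]
  conv_rhs => rw [← P.image_id]
  refine Finset.image_congr fun B hB => ?_
  simp only [Function.comp, id]
  rw [image_image]
  conv_rhs => rw [← B.image_id]
  exact Finset.image_congr fun x hx => hgf x (hsub B hB hx)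

lemma ncp_card_congr (hft : ∀ x ∈ s, f x ∈ t) (hgs : ∀ y ∈ t, g y ∈ s)
    (hgf : ∀ x ∈ s, g (f x) = x) (hfg : ∀ y ∈ t, f (g y) = y)
    (hmono : StrictMonoOn f s) :
    (ncp s).card = (ncp t).card := by
  have hgmono : StrictMonoOn g t := by
    intro y1 h1 y2 h2 hlt
    have h1' : y1 ∈ t := h1
    have h2' : y2 ∈ t := h2
    rcases lt_trichotomy (g y1) (g y2) with h | h | h
    · exact h
    · exfalso
      apply hlt.ne
      rw [← hfg y1 h1', ← hfg y2 h2', h]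
    · exfalso
      have h2lt : y2 < y1 := by
        have hh := hmono (hgs y2 h2') (hgs y1 h1') h
        rwa [hfg y1 h1', hfg y2 h2'] at hh
      exact hlt.asymm h2lt
  have hfsurj : ∀ y ∈ t, ∃ x ∈ s, f x = y := fun y hy => ⟨g y, hgs y hy, hfg y hy⟩
  have hgsurj : ∀ x ∈ s, ∃ y ∈ t, g y = x := fun x hx => ⟨f x, hft x hx, hgf x hx⟩
  refine card_bij' (fun P _ => P.image (fun B => B.image f))
    (fun Q _ => Q.image (fun B => B.image g)) ?_ ?_ ?_ ?_
  · intro P hP; exact map_mem_ncp hft hfsurj hmono hP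
  · intro Q hQ; exact map_mem_ncp hgs hgsurj hgmono hQ
  · intro P hP
    exact double_image_cancel ((mem_ncp.mp hP).1).2.1 hgf
  · intro Q hQ
    exact double_image_cancel ((mem_ncp.mp hQ).1).2.1 hfg

lemma map_mem_ncm {s t : Finset ℕ} {f : ℕ → ℕ} (hft : ∀ x ∈ s, f x ∈ t)
    (hsurj : ∀ y ∈ t, ∃ x ∈ s, f x = y)
    (hmono : StrictMonoOn f s) {P : Finset (Finset ℕ)} (hP : P ∈ ncm s) :
    P.image (fun B => B.image f) ∈ ncm t := by
  rw [mem_ncm] at hP ⊢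
  refine ⟨mem_ncp.mp (map_mem_ncp hft hsurj hmono (mem_ncp.mpr hP.1)), ?_⟩
  intro B' hB'
  obtain ⟨B, hB, rfl⟩ := mem_image.mp hB'
  rw [card_image_of_injOn (hmono.injOn.mono (by exact_mod_cast hP.1.1.2.1 B hB))]
  exact hP.2 B hB

lemma ncm_card_congr (hft : ∀ x ∈ s, f x ∈ t) (hgs : ∀ y ∈ t, g y ∈ s)
    (hgf : ∀ x ∈ s, g (f x) = x) (hfg : ∀ y ∈ t, f (g y) = y)
    (hmono : StrictMonoOn f s) :
    (ncm s).card = (ncm t).card := by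
  have hgmono : StrictMonoOn g t := by
    intro y1 h1 y2 h2 hlt
    have h1' : y1 ∈ t := h1
    have h2' : y2 ∈ t := h2
    rcases lt_trichotomy (g y1) (g y2) with h | h | h
    · exact h
    · exfalso
      apply hlt.ne
      rw [← hfg y1 h1', ← hfg y2 h2', h]
    · exfalso
      have h2lt : y2 < y1 := by
        have hh := hmono (hgs y2 h2') (hgs y1 h1') h
        rwa [hfg y1 h1', hfg y2 h2'] at hh
      exact hlt.asymm h2lt
  have hfsurj : ∀ y ∈ t, ∃ x ∈ s, f x = y := fun y hy => ⟨g y, hgs y hy, hfg y hy⟩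
  have hgsurj : ∀ x ∈ s, ∃ y ∈ t, g y = x := fun x hx => ⟨f x, hft x hx, hgf x hx⟩
  refine card_bij' (fun P _ => P.image (fun B => B.image f))
    (fun Q _ => Q.image (fun B => B.image g)) ?_ ?_ ?_ ?_
  · intro P hP
    exact map_mem_ncm hft hfsurj hmono hP
  · intro Q hQ
    exact map_mem_ncm hgs hgsurj hgmono hQ
  · intro P hP
    exact double_image_cancel ((mem_ncm.mp hP).1.1).2.1 hgf
  · intro Q hQ
    exact double_image_cancel ((mem_ncm.mp hQ).1.1).2.1 hfg


lemma ncp_card_Ioo (a b : ℕ) :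
    (ncp (Ioo a b)).card = (ncp (range (b - a - 1))).card := by
  refine (ncp_card_congr (f := fun y => y - (a + 1)) (g := fun x => x + (a + 1))
    ?_ ?_ ?_ ?_ ?_)
  · intro y hy; simp only [mem_Ioo] at hy; simp only [mem_range]; beta_reduce; omega
  · intro x hx; simp only [mem_range] at hx; simp only [mem_Ioo]; beta_reduce; omega
  · intro y hy; simp only [mem_Ioo] at hy; beta_reduce; omega
  · intro x hx; simp only [mem_range] at hx; beta_reduce; omega
  · intro y1 h1 y2 h2 hlt
    simp only [coe_Ioo, Set.mem_Ioo] at h1 h2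
    beta_reduce
    omega

lemma ncm_card_Ioo (a b : ℕ) :
    (ncm (Ioo a b)).card = (ncm (range (b - a - 1))).card := by
  refine (ncm_card_congr (f := fun y => y - (a + 1)) (g := fun x => x + (a + 1))
    ?_ ?_ ?_ ?_ ?_)
  · intro y hy; simp only [mem_Ioo] at hy; simp only [mem_range]; beta_reduce; omega
  · intro x hx; simp only [mem_range] at hx; simp only [mem_Ioo]; beta_reduce; omega
  · intro y hy; simp only [mem_Ioo] at hy; beta_reduce; omega
  · intro x hx; simp only [mem_range] at hx; beta_reduce; omega
  · intro y1 h1 y2 h2 hlt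
    simp only [coe_Ioo, Set.mem_Ioo] at h1 h2
    beta_reduce
    omega

lemma ncp_card_Icc (a b : ℕ) :
    (ncp (Icc a b)).card = (ncp (range (b + 1 - a))).card := by
  refine (ncp_card_congr (f := fun y => y - a) (g := fun x => x + a)
    ?_ ?_ ?_ ?_ ?_)
  · intro y hy; simp only [mem_Icc] at hy; simp only [mem_range]; beta_reduce; omega
  · intro x hx; simp only [mem_range] at hx; simp only [mem_Icc]; beta_reduce; omega
  · intro y hy; simp only [mem_Icc] at hy; beta_reduce; omega
  · intro x hx; simp only [mem_range] at hx; beta_reduce; omega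
  · intro y1 h1 y2 h2 hlt
    simp only [coe_Icc, Set.mem_Icc] at h1 h2
    beta_reduce
    omega

section helpers
variable {s : Finset ℕ} {P : Finset (Finset ℕ)}

lemma parts_disjoint (h : IsPartOn s P) {B C : Finset ℕ} (hB : B ∈ P) (hC : C ∈ P)
    (hne : B ≠ C) {x : ℕ} (hxB : x ∈ B) (hxC : x ∈ C) : False := by
  obtain ⟨D, _, huniq⟩ := h.2.2 x (h.2.1 B hB hxB)
  exact hne ((huniq B ⟨hB, hxB⟩).trans (huniq C ⟨hC, hxC⟩).symm)

lemma isNC_subset {Q : Finset (Finset ℕ)} (h : IsNC P) (hQ : Q ⊆ P) : IsNC Q :=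
  fun i j k l hik hkj hjl B hB C hC hne hi hj hk hl =>
    h i j k l hik hkj hjl B (hQ hB) C (hQ hC) hne hi hj hk hl

lemma sum_card_parts (h : IsPartOn s P) : ∑ B ∈ P, B.card = s.card := by
  rw [← card_biUnion]
  · congr 1
    ext x
    simp only [mem_biUnion]
    constructor
    · rintro ⟨B, hB, hxB⟩; exact h.2.1 B hB hxB
    · intro hx
      obtain ⟨B, ⟨hB, hxB⟩, _⟩ := h.2.2 x hx
      exact ⟨B, hB, hxB⟩
  · intro B hB C hC hne
    simp only [Function.onFun, Finset.disjoint_left]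
    intro x hxB hxC
    exact parts_disjoint h hB hC hne hxB hxC

noncomputable def blk (P : Finset (Finset ℕ)) (x : ℕ) : Finset ℕ :=
  (P.filter fun B => x ∈ B).sup id

lemma blk_spec (h : IsPartOn s P) {x : ℕ} (hx : x ∈ s) : blk P x ∈ P ∧ x ∈ blk P x := by
  obtain ⟨B, ⟨hB, hxB⟩, huniq⟩ := h.2.2 x hx
  have hfil : P.filter (fun B => x ∈ B) = {B} := by
    apply Finset.eq_singleton_iff_unique_mem.mpr
    refine ⟨mem_filter.mpr ⟨hB, hxB⟩, ?_⟩
    intro C hC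
    obtain ⟨hC', hxC⟩ := mem_filter.mp hC
    exact huniq C ⟨hC', hxC⟩
  rw [blk, hfil, sup_singleton]
  exact ⟨hB, hxB⟩

lemma blk_eq (h : IsPartOn s P) {x : ℕ} (hx : x ∈ s) {B : Finset ℕ}
    (hB : B ∈ P) (hxB : x ∈ B) : blk P x = B :=
  ((h.2.2 x hx).unique ⟨(blk_spec h hx).1, (blk_spec h hx).2⟩ ⟨hB, hxB⟩)

/-- if a part `C` has a point strictly between two points of another part `B`,
then all of `C` lies strictly between them. -/
lemma block_inside (hP : IsPartOn s P) (hnc : IsNC P) {B C : Finset ℕ}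
    (hB : B ∈ P) (hC : C ∈ P) (hne : C ≠ B) {u v x : ℕ} (hu : u ∈ B) (hv : v ∈ B)
    (hx : x ∈ C) (hxu : u < x) (hxv : x < v) : C ⊆ Ioo u v := by
  intro y hy
  rw [mem_Ioo]
  rcases lt_trichotomy y u with h | h | h
  · exact absurd (hnc y x u v h hxu hxv C hC B hB hne hy hx hu hv) not_false
  · exact absurd (parts_disjoint hP hC hB hne (h ▸ hy) hu) not_false
  · refine ⟨h, ?_⟩
    rcases lt_trichotomy y v with h' | h' | h'
    · exact h'
    · exact absurd (parts_disjoint hP hC hB hne (h' ▸ hy) hv) not_false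
    · exact absurd (hnc u v x y hxu hxv h' B hB C hC (fun hh => hne hh.symm) hu hv hx hy)
        not_false

/-- if a part `C` has a point strictly above a point `v` of the part containing `0`,
then all of `C` lies strictly above `v`. -/
lemma block_gt (hP : IsPartOn s P) (hnc : IsNC P) {B C : Finset ℕ}
    (hB : B ∈ P) (hC : C ∈ P) (hne : C ≠ B) {v x : ℕ} (h0 : 0 ∈ B) (hv : v ∈ B)
    (hv0 : 0 < v) (hx : x ∈ C) (hxv : v < x) {y : ℕ} (hy : y ∈ C) : v < y := by
  rcases lt_trichotomy y v with h | h | h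
  · exfalso
    rcases Nat.eq_zero_or_pos y with h0y | h0y
    · exact parts_disjoint hP hC hB hne (h0y ▸ hy) h0
    · exact hnc 0 v y x h0y h hxv B hB C hC (fun hh => hne hh.symm) h0 hv hy hx
  · exact absurd (parts_disjoint hP hC hB hne (h ▸ hy) hv) not_false
  · exact h

end helpers

end transport

section matchrec
variable {n : ℕ}

lemma ncm_forward {P : Finset (Finset ℕ)} (hP : P ∈ ncm (range (2*n+2))) :
    ∃ k ≤ n, (blk P 0).sup id = 2*k+1 ∧
      P.filter (· ⊆ Ioo 0 (2*k+1)) ∈ ncm (Ioo 0 (2*k+1)) ∧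
      P.filter (· ⊆ Ioo (2*k+1) (2*n+2)) ∈ ncm (Ioo (2*k+1) (2*n+2)) ∧
      P = insert {0, 2*k+1} (P.filter (· ⊆ Ioo 0 (2*k+1)) ∪
            P.filter (· ⊆ Ioo (2*k+1) (2*n+2))) := by
  obtain ⟨⟨hpart, hnc⟩, h2⟩ := mem_ncm.mp hP
  have h0r : (0:ℕ) ∈ range (2*n+2) := by rw [mem_range]; omega
  obtain ⟨hBmem, h0B⟩ := blk_spec hpart h0r
  set B := blk P 0 with hBdef
  obtain ⟨a, b, hab, hBe⟩ := Finset.card_eq_two.mp (h2 B hBmem)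
  obtain ⟨m, hm0, hBm⟩ : ∃ m, m ≠ 0 ∧ B = {0, m} := by
    rw [hBe] at h0B
    rcases mem_insert.mp h0B with h | h
    · exact ⟨b, fun hb => hab (h ▸ hb ▸ rfl), by rw [hBe, ← h]⟩
    · rw [mem_singleton] at h
      exact ⟨a, fun ha => hab (ha ▸ h ▸ rfl), by rw [hBe, ← h, Finset.pair_comm]⟩
  have hmB : m ∈ B := by rw [hBm]; simp
  have hmlt : m < 2*n+2 := by
    have := hpart.2.1 B hBmem hmB
    rwa [mem_range] at this
  have hm0' : 0 < m := Nat.pos_of_ne_zero hm0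
  have hdich : ∀ C ∈ P, C ≠ B → C ⊆ Ioo 0 m ∨ C ⊆ Ioo m (2*n+2) := by
    intro C hC hne
    obtain ⟨x, hx⟩ := hpart.1 C hC
    have hx0 : x ≠ 0 := fun h => parts_disjoint hpart hC hBmem hne (h ▸ hx) h0B
    have hxm : x ≠ m := fun h => parts_disjoint hpart hC hBmem hne (h ▸ hx) hmB
    rcases lt_or_gt_of_ne hxm with h | h
    · exact Or.inl (block_inside hpart hnc hBmem hC hne h0B hmB hx
        (Nat.pos_of_ne_zero hx0) h)
    · refine Or.inr fun y hy => ?_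
      rw [mem_Ioo]
      refine ⟨block_gt hpart hnc hBmem hC hne h0B hmB hm0' hx h hy, ?_⟩
      have := hpart.2.1 C hC hy
      rwa [mem_range] at this
  -- generic filtering lemma
  have key : ∀ u v : ℕ, Ioo u v ⊆ range (2*n+2) → (∀ x ∈ Ioo u v, x ∉ B) →
      (∀ C ∈ P, C ≠ B → (∃ x ∈ C, x ∈ Ioo u v) → C ⊆ Ioo u v) →
      P.filter (· ⊆ Ioo u v) ∈ ncm (Ioo u v) := by
    intro u v hsubr hnB hstay
    rw [mem_ncm]
    refine ⟨⟨⟨fun C hC => hpart.1 C (mem_filter.mp hC).1,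
      fun C hC => (mem_filter.mp hC).2, ?_⟩,
      isNC_subset hnc (filter_subset _ _)⟩, fun C hC => h2 C (mem_filter.mp hC).1⟩
    intro x hx
    have hxr : x ∈ range (2*n+2) := hsubr hx
    obtain ⟨hCmem, hxC⟩ := blk_spec hpart hxr
    have hCne : blk P x ≠ B := fun h => hnB x hx (h ▸ hxC)
    have hsub : blk P x ⊆ Ioo u v := hstay _ hCmem hCne ⟨x, hxC, hx⟩
    refine ⟨blk P x, ⟨mem_filter.mpr ⟨hCmem, hsub⟩, hxC⟩, ?_⟩
    rintro C ⟨hC, hxC'⟩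
    exact ((hpart.2.2 x hxr).unique ⟨(mem_filter.mp hC).1, hxC'⟩ ⟨hCmem, hxC⟩)
  have hstay1 : ∀ C ∈ P, C ≠ B → (∃ x ∈ C, x ∈ Ioo 0 m) → C ⊆ Ioo 0 m := by
    intro C hC hne ⟨x, hxC, hx⟩
    rcases hdich C hC hne with h | h
    · exact h
    · exfalso
      have := mem_Ioo.mp (h hxC)
      have := mem_Ioo.mp hx
      omega
  have hstay2 : ∀ C ∈ P, C ≠ B → (∃ x ∈ C, x ∈ Ioo m (2*n+2)) → C ⊆ Ioo m (2*n+2) := by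
    intro C hC hne ⟨x, hxC, hx⟩
    rcases hdich C hC hne with h | h
    · exfalso
      have := mem_Ioo.mp (h hxC)
      have := mem_Ioo.mp hx
      omega
    · exact h
  have hmem1 : P.filter (· ⊆ Ioo 0 m) ∈ ncm (Ioo 0 m) := by
    refine key 0 m ?_ ?_ hstay1
    · intro x hx; rw [mem_range]; have := mem_Ioo.mp hx; omega
    · intro x hx; rw [hBm]; have := mem_Ioo.mp hx; simp; omega
  have hmem2 : P.filter (· ⊆ Ioo m (2*n+2)) ∈ ncm (Ioo m (2*n+2)) := by
    refine key m (2*n+2) ?_ ?_ hstay2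
    · intro x hx; rw [mem_range]; have := mem_Ioo.mp hx; omega
    · intro x hx; rw [hBm]; have := mem_Ioo.mp hx; simp; omega
  -- parity
  have hpar : m - 1 = 2 * (P.filter (· ⊆ Ioo 0 m)).card := by
    have h1 := sum_card_parts (((mem_ncm.mp hmem1).1).1)
    have h2' : ∑ C ∈ P.filter (· ⊆ Ioo 0 m), C.card
        = ∑ C ∈ P.filter (· ⊆ Ioo 0 m), 2 := by
      refine Finset.sum_congr rfl fun C hC => (mem_ncm.mp hmem1).2 C hC
    rw [h2', Finset.sum_const, Nat.card_Ioo, smul_eq_mul] at h1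
    omega
  have hodd : m = 2 * ((m-1)/2) + 1 := by omega
  refine ⟨(m-1)/2, by omega, ?_, ?_, ?_, ?_⟩
  · rw [← hodd, hBm]; simp
  · rw [← hodd]; exact hmem1
  · rw [← hodd]; exact hmem2
  · rw [← hodd, ← hBm]
    ext C
    simp only [mem_insert, mem_union, mem_filter]
    constructor
    · intro hC
      by_cases hne : C = B
      · exact Or.inl hne
      · rcases hdich C hC hne with h | h
        · exact Or.inr (Or.inl ⟨hC, h⟩)
        · exact Or.inr (Or.inr ⟨hC, h⟩)
    · rintro (rfl | ⟨hC, _⟩ | ⟨hC, _⟩)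
      · exact hBmem
      · exact hC
      · exact hC

lemma ncm_backward {k : ℕ} (hk : k ≤ n) {P₁ P₂ : Finset (Finset ℕ)}
    (h1 : P₁ ∈ ncm (Ioo 0 (2*k+1))) (h2 : P₂ ∈ ncm (Ioo (2*k+1) (2*n+2))) :
    insert {0, 2*k+1} (P₁ ∪ P₂) ∈ ncm (range (2*n+2)) ∧
    blk (insert {0, 2*k+1} (P₁ ∪ P₂)) 0 = {0, 2*k+1} ∧
    (insert ({0, 2*k+1} : Finset ℕ) (P₁ ∪ P₂)).filter (· ⊆ Ioo 0 (2*k+1)) = P₁ ∧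
    (insert ({0, 2*k+1} : Finset ℕ) (P₁ ∪ P₂)).filter (· ⊆ Ioo (2*k+1) (2*n+2)) = P₂ := by
  obtain ⟨⟨hpart1, hnc1⟩, hc1⟩ := mem_ncm.mp h1
  obtain ⟨⟨hpart2, hnc2⟩, hc2⟩ := mem_ncm.mp h2
  set m := 2*k+1 with hm
  have hb1 : ∀ C ∈ P₁, ∀ x ∈ C, 0 < x ∧ x < m := by
    intro C hC x hx
    exact mem_Ioo.mp (hpart1.2.1 C hC hx)
  have hb2 : ∀ C ∈ P₂, ∀ x ∈ C, m < x ∧ x < 2*n+2 := by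
    intro C hC x hx
    exact mem_Ioo.mp (hpart2.2.1 C hC hx)
  have hB0 : ∀ x ∈ ({0, m} : Finset ℕ), x = 0 ∨ x = m := by
    intro x hx
    rcases mem_insert.mp hx with h | h
    · exact Or.inl h
    · exact Or.inr (mem_singleton.mp h)
  have h0B0 : (0:ℕ) ∈ ({0, m} : Finset ℕ) := mem_insert_self _ _
  have hmB0 : m ∈ ({0, m} : Finset ℕ) := mem_insert_of_mem (mem_singleton_self _)
  set P' := insert ({0, m} : Finset ℕ) (P₁ ∪ P₂) with hP'
  have hmemP' : ∀ C ∈ P', C = {0, m} ∨ C ∈ P₁ ∨ C ∈ P₂ := by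
    intro C hC
    rcases mem_insert.mp hC with h | h
    · exact Or.inl h
    · rcases mem_union.mp h with h | h
      · exact Or.inr (Or.inl h)
      · exact Or.inr (Or.inr h)
  have hpartOn : IsPartOn (range (2*n+2)) P' := by
    refine ⟨?_, ?_, ?_⟩
    · intro C hC
      rcases hmemP' C hC with rfl | h | h
      · exact ⟨0, h0B0⟩
      · exact hpart1.1 C h
      · exact hpart2.1 C h
    · intro C hC x hx
      rw [mem_range]
      rcases hmemP' C hC with rfl | h | h
      · rcases hB0 x hx with rfl | rfl <;> omega
      · have := hb1 C h x hx; omega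
      · have := hb2 C h x hx; omega
    · intro x hx
      rw [mem_range] at hx
      rcases Nat.lt_trichotomy x m with hxm | rfl | hxm
      · rcases Nat.eq_zero_or_pos x with rfl | hx0
        · refine ⟨{0, m}, ⟨mem_insert_self _ _, h0B0⟩, ?_⟩
          rintro C ⟨hC, h0C⟩
          rcases hmemP' C hC with rfl | h | h
          · rfl
          · exact absurd (hb1 C h 0 h0C).1 (lt_irrefl 0)
          · exact absurd (hb2 C h 0 h0C).1 (by omega)
        · obtain ⟨C, ⟨hC, hxC⟩, huniq⟩ := hpart1.2.2 x (mem_Ioo.mpr ⟨hx0, hxm⟩)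
          refine ⟨C, ⟨mem_insert_of_mem (mem_union_left _ hC), hxC⟩, ?_⟩
          rintro D ⟨hD, hxD⟩
          rcases hmemP' D hD with rfl | h | h
          · rcases hB0 x hxD with rfl | rfl
            · omega
            · omega
          · exact huniq D ⟨h, hxD⟩
          · have := hb2 D h x hxD; omega
      · refine ⟨{0, m}, ⟨mem_insert_self _ _, hmB0⟩, ?_⟩
        rintro C ⟨hC, hmC⟩
        rcases hmemP' C hC with rfl | h | h
        · rfl
        · have := hb1 C h m hmC; omega
        · have := hb2 C h m hmC; omega
      · obtain ⟨C, ⟨hC, hxC⟩, huniq⟩ := hpart2.2.2 x (mem_Ioo.mpr ⟨hxm, by omega⟩)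
        refine ⟨C, ⟨mem_insert_of_mem (mem_union_right _ hC), hxC⟩, ?_⟩
        rintro D ⟨hD, hxD⟩
        rcases hmemP' D hD with rfl | h | h
        · rcases hB0 x hxD with rfl | rfl <;> omega
        · have := hb1 D h x hxD; omega
        · exact huniq D ⟨h, hxD⟩
  have hncP' : IsNC P' := by
    intro i j k' l hik hkj hjl B hB C hC hne hi hj hkk hl
    rcases hmemP' B hB with rfl | hB1 | hB2
    · rcases hmemP' C hC with rfl | hC1 | hC2
      · exact hne rfl
      · have h1' := hb1 C hC1 k' hkk
        have h2' := hb1 C hC1 l hl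
        rcases hB0 i hi with rfl | rfl <;> rcases hB0 j hj with rfl | rfl <;> omega
      · have h1' := hb2 C hC2 k' hkk
        rcases hB0 j hj with rfl | rfl <;> omega
    · rcases hmemP' C hC with rfl | hC1 | hC2
      · have h1' := hb1 B hB1 i hi
        rcases hB0 k' hkk with rfl | rfl <;> rcases hB0 l hl with rfl | rfl <;> omega
      · exact hnc1 i j k' l hik hkj hjl B hB1 C hC1 hne hi hj hkk hl
      · have := hb1 B hB1 j hj
        have := hb2 C hC2 k' hkk
        omega
    · rcases hmemP' C hC with rfl | hC1 | hC2
      · have h1' := hb2 B hB2 i hi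
        rcases hB0 k' hkk with rfl | rfl <;> rcases hB0 l hl with rfl | rfl <;> omega
      · have := hb2 B hB2 i hi
        have := hb1 C hC1 k' hkk
        omega
      · exact hnc2 i j k' l hik hkj hjl B hB2 C hC2 hne hi hj hkk hl
  have hmemncm : P' ∈ ncm (range (2*n+2)) := by
    rw [mem_ncm]
    refine ⟨⟨hpartOn, hncP'⟩, ?_⟩
    intro C hC
    rcases hmemP' C hC with rfl | h | h
    · exact Finset.card_pair (by omega)
    · exact hc1 C h
    · exact hc2 C h
  refine ⟨hmemncm, ?_, ?_, ?_⟩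
  · exact blk_eq hpartOn (by rw [mem_range]; omega) (mem_insert_self _ _) h0B0
  · ext C
    simp only [mem_filter]
    constructor
    · rintro ⟨hC, hsub⟩
      rcases hmemP' C hC with rfl | h | h
      · have := mem_Ioo.mp (hsub hmB0); omega
      · exact h
      · exfalso
        obtain ⟨x, hx⟩ := hpart2.1 C h
        have := hb2 C h x hx
        have := mem_Ioo.mp (hsub hx)
        omega
    · intro hC
      exact ⟨mem_insert_of_mem (mem_union_left _ hC), hpart1.2.1 C hC⟩
  · ext C
    simp only [mem_filter]
    constructor
    · rintro ⟨hC, hsub⟩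
      rcases hmemP' C hC with rfl | h | h
      · have := mem_Ioo.mp (hsub h0B0); omega
      · exfalso
        obtain ⟨x, hx⟩ := hpart1.1 C h
        have := hb1 C h x hx
        have := mem_Ioo.mp (hsub hx)
        omega
      · exact h
    · intro hC
      exact ⟨mem_insert_of_mem (mem_union_right _ hC), hpart2.2.1 C hC⟩

lemma sup_pair (m : ℕ) : (({0, m} : Finset ℕ)).sup id = m := by simp

lemma ncm_rec (n : ℕ) :
    (ncm (range (2*n+2))).card
      = ∑ k ∈ range (n+1), (ncm (Ioo 0 (2*k+1))).card * (ncm (Ioo (2*k+1) (2*n+2))).card := by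
  have hrhs : ∑ k ∈ range (n+1), (ncm (Ioo 0 (2*k+1))).card * (ncm (Ioo (2*k+1) (2*n+2))).card
      = ((range (n+1)).sigma fun k =>
          ncm (Ioo 0 (2*k+1)) ×ˢ ncm (Ioo (2*k+1) (2*n+2))).card := by
    rw [Finset.card_sigma]
    exact Finset.sum_congr rfl fun k _ => (Finset.card_product _ _).symm
  rw [hrhs]
  refine card_bij' (fun P _ => ⟨((blk P 0).sup id - 1)/2,
      (P.filter (· ⊆ Ioo 0 ((blk P 0).sup id)),
       P.filter (· ⊆ Ioo ((blk P 0).sup id) (2*n+2)))⟩)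
    (fun q _ => insert {0, 2*q.1+1} (q.2.1 ∪ q.2.2)) ?_ ?_ ?_ ?_
  · intro P hP
    obtain ⟨k, hk, hsup, hm1, hm2, _⟩ := ncm_forward hP
    rw [mem_sigma]
    constructor
    · dsimp only
      rw [hsup, mem_range]
      omega
    · dsimp only
      rw [hsup]
      have : (2*k+1-1)/2 = k := by omega
      rw [this, mem_product]
      exact ⟨hm1, hm2⟩
  · rintro ⟨k, P₁, P₂⟩ hq
    rw [mem_sigma] at hq
    obtain ⟨hk, hprod⟩ := hq
    rw [mem_range] at hk
    rw [mem_product] at hprod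
    exact (ncm_backward (by omega) hprod.1 hprod.2).1
  · intro P hP
    obtain ⟨k, hk, hsup, _, _, hdecomp⟩ := ncm_forward hP
    dsimp only
    rw [hsup]
    have : 2*((2*k+1-1)/2)+1 = 2*k+1 := by omega
    rw [this]
    exact hdecomp.symm
  · rintro ⟨k, P₁, P₂⟩ hq
    rw [mem_sigma] at hq
    obtain ⟨hk, hprod⟩ := hq
    rw [mem_range] at hk
    rw [mem_product] at hprod
    obtain ⟨_, hblk, hf1, hf2⟩ := ncm_backward (n := n) (by omega) hprod.1 hprod.2
    dsimp only
    rw [hblk, sup_pair]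
    have : (2*k+1-1)/2 = k := by omega
    rw [this, hf1, hf2]

lemma ncp_empty : ncp (∅ : Finset ℕ) = {∅} := by
  ext P
  rw [mem_ncp, mem_singleton]
  constructor
  · rintro ⟨⟨hne, hsub, _⟩, _⟩
    rw [Finset.eq_empty_iff_forall_notMem]
    intro B hB
    obtain ⟨x, hx⟩ := hne B hB
    exact absurd (hsub B hB hx) (Finset.notMem_empty x)
  · rintro rfl
    refine ⟨⟨?_, ?_, ?_⟩, ?_⟩
    · intro B hB; exact absurd hB (Finset.notMem_empty B)
    · intro B hB; exact absurd hB (Finset.notMem_empty B)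
    · intro x hx; exact absurd hx (Finset.notMem_empty x)
    · intro i j k l _ _ _ B hB; exact absurd hB (Finset.notMem_empty B)

lemma ncm_empty : ncm (∅ : Finset ℕ) = {∅} := by
  ext P
  rw [mem_ncm, ← mem_ncp, ncp_empty, mem_singleton]
  constructor
  · rintro ⟨rfl, _⟩; rfl
  · rintro rfl
    exact ⟨rfl, fun B hB => absurd hB (Finset.notMem_empty B)⟩

lemma ncm_card_catalan : ∀ n : ℕ, (ncm (range (2*n))).card = catalan n := by
  intro n
  induction n using Nat.strong_induction_on with
  | _ n ih =>
    match n with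
    | 0 => simp [range_zero, ncm_empty]
    | Nat.succ m =>
      have h2m : 2*(m+1) = 2*m+2 := by ring
      rw [h2m, ncm_rec m, catalan_succ,
        show ∑ i : Fin m.succ, catalan ↑i * catalan (m - ↑i)
            = ∑ i ∈ range (m+1), catalan i * catalan (m-i) from
          Fin.sum_univ_eq_sum_range (fun i => catalan i * catalan (m-i)) (m+1)]
      apply Finset.sum_congr rfl
      intro k hk
      rw [mem_range] at hk
      rw [ncm_card_Ioo, ncm_card_Ioo]
      have e1 : 2*k+1-0-1 = 2*k := by omega
      have e2 : 2*m+2-(2*k+1)-1 = 2*(m-k) := by omega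
      rw [e1, e2, ih k (by omega), ih (m-k) (by omega)]

end matchrec

section partrec
variable {n : ℕ}

/-- filtering a non-crossing partition to a downward/upward closed chunk -/
lemma filter_mem_ncp {s : Finset ℕ} {P : Finset (Finset ℕ)} (hP : P ∈ ncp s)
    {t : Finset ℕ} (hts : t ⊆ s) (hstay : ∀ x ∈ t, blk P x ⊆ t) :
    P.filter (· ⊆ t) ∈ ncp t := by
  obtain ⟨hpart, hnc⟩ := mem_ncp.mp hP
  rw [mem_ncp]
  refine ⟨⟨fun C hC => hpart.1 C (mem_filter.mp hC).1,
    fun C hC => (mem_filter.mp hC).2, ?_⟩, isNC_subset hnc (filter_subset _ _)⟩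
  intro x hx
  have hxs : x ∈ s := hts hx
  obtain ⟨hCmem, hxC⟩ := blk_spec hpart hxs
  refine ⟨blk P x, ⟨mem_filter.mpr ⟨hCmem, hstay x hx⟩, hxC⟩, ?_⟩
  rintro C ⟨hC, hxC'⟩
  exact (hpart.2.2 x hxs).unique ⟨(mem_filter.mp hC).1, hxC'⟩ ⟨hCmem, hxC⟩

noncomputable def bVal (n : ℕ) (P : Finset (Finset ℕ)) : ℕ :=
  if h : ((blk P 0).erase 0).Nonempty then ((blk P 0).erase 0).min' h else n+1

lemma ncp_forward {P : Finset (Finset ℕ)} (hP : P ∈ ncp (range (n+1))) :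
    ∃ k ≤ n, bVal n P = k+1 ∧
      P.filter (· ⊆ Ioo 0 (k+1)) ∈ ncp (Ioo 0 (k+1)) ∧
      (((P.filter (fun C => ¬ C ⊆ Ioo 0 (k+1))).image (fun C => C.erase 0)).erase ∅)
        ∈ ncp (Icc (k+1) n) ∧
      blk (((P.filter (fun C => ¬ C ⊆ Ioo 0 (k+1))).image (fun C => C.erase 0)).erase ∅) (k+1)
        = (blk P 0).erase 0 ∧
      P = insert (blk P 0)
          (P.filter (· ⊆ Ioo 0 (k+1)) ∪
           ((((P.filter (fun C => ¬ C ⊆ Ioo 0 (k+1))).image (fun C => C.erase 0)).erase ∅).erase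
             ((blk P 0).erase 0))) := by
  obtain ⟨hpart, hnc⟩ := mem_ncp.mp hP
  have h0r : (0:ℕ) ∈ range (n+1) := by rw [mem_range]; omega
  obtain ⟨hBmem, h0B⟩ := blk_spec hpart h0r
  set B := blk P 0 with hBdef
  set b := bVal n P with hbdef
  have hBsub : ∀ y ∈ B, y ≤ n := by
    intro y hy
    have := hpart.2.1 B hBmem hy
    rw [mem_range] at this; omega
  have hbfacts : 1 ≤ b ∧ b ≤ n+1 ∧ (B.erase 0 = ∅ ∨ b ∈ B.erase 0) ∧
      (∀ y ∈ B.erase 0, b ≤ y) ∧ (B.erase 0 = ∅ → b = n+1) := by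
    rw [hbdef, bVal]
    split_ifs with h
    · have hmem := Finset.min'_mem _ h
      obtain ⟨hb0, hbB⟩ := Finset.mem_erase.mp hmem
      refine ⟨by omega, ?_, Or.inr hmem, fun y hy => Finset.min'_le _ y hy,
        fun he => absurd h (by rw [he]; exact Finset.not_nonempty_empty)⟩
      have := hBsub _ hbB; omega
    · refine ⟨by omega, le_refl _, Or.inl (Finset.not_nonempty_iff_eq_empty.mp h),
        ?_, fun _ => rfl⟩
      intro y hy
      rw [Finset.not_nonempty_iff_eq_empty.mp h] at hy
      exact absurd hy (Finset.notMem_empty y)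
  obtain ⟨hb1, hbn, hbB, hbmin, hbempty⟩ := hbfacts
  have hyB : ∀ y ∈ B, y = 0 ∨ (b ≤ y ∧ y ≤ n) := by
    intro y hy
    rcases Nat.eq_zero_or_pos y with rfl | h
    · exact Or.inl rfl
    · exact Or.inr ⟨hbmin y (Finset.mem_erase.mpr ⟨by omega, hy⟩), hBsub y hy⟩
  have hdich : ∀ C ∈ P, C ≠ B → C ⊆ Ioo 0 b ∨ C ⊆ Icc b n := by
    intro C hC hne
    obtain ⟨x, hx⟩ := hpart.1 C hC
    have hxn : ∀ y ∈ C, y ≤ n := by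
      intro y hy
      have := hpart.2.1 C hC hy
      rw [mem_range] at this; omega
    have hx0 : ∀ y ∈ C, y ≠ 0 :=
      fun y hy h => parts_disjoint hpart hC hBmem hne (h ▸ hy) h0B
    rcases hbB with hBe | hbB
    · left
      intro y hy
      rw [mem_Ioo]
      have := hxn y hy
      have := hx0 y hy
      have := hbempty hBe
      omega
    · have hbinB : b ∈ B := (Finset.mem_erase.mp hbB).2
      rcases lt_trichotomy x b with h | h | h
      · exact Or.inl (block_inside hpart hnc hBmem hC hne h0B hbinB hx
          (Nat.pos_of_ne_zero (hx0 x hx)) h)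
      · exact absurd (parts_disjoint hpart hC hBmem hne (h ▸ hx) hbinB) not_false
      · right
        intro y hy
        rw [mem_Icc]
        have := block_gt hpart hnc hBmem hC hne h0B hbinB (by omega) hx h hy
        have := hxn y hy
        omega
  have h0Icc : (0:ℕ) ∉ Icc b n := by rw [mem_Icc]; omega
  have hBnotQ : B ∉ P.filter (· ⊆ Icc b n) := by
    intro h
    exact h0Icc ((mem_filter.mp h).2 h0B)
  have hQsplit : P.filter (fun C => ¬ C ⊆ Ioo 0 b) = insert B (P.filter (· ⊆ Icc b n)) := by
    ext C
    simp only [mem_filter, mem_insert]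
    constructor
    · rintro ⟨hC, hnsub⟩
      by_cases hne : C = B
      · exact Or.inl hne
      · rcases hdich C hC hne with h | h
        · exact absurd h hnsub
        · exact Or.inr ⟨hC, h⟩
    · rintro (rfl | ⟨hC, hsub⟩)
      · exact ⟨hBmem, fun h => by have := mem_Ioo.mp (h h0B); omega⟩
      · refine ⟨hC, fun h => ?_⟩
        obtain ⟨x, hx⟩ := hpart.1 C hC
        have h1 := mem_Icc.mp (hsub hx)
        have h2 := mem_Ioo.mp (h hx)
        omega
  have hQ0 : ∀ C ∈ P.filter (· ⊆ Icc b n), (0:ℕ) ∉ C :=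
    fun C hC h => h0Icc ((mem_filter.mp hC).2 h)
  have hP1 : P.filter (· ⊆ Ioo 0 b) ∈ ncp (Ioo 0 b) := by
    refine filter_mem_ncp hP ?_ ?_
    · intro x hx
      rw [mem_range]
      have := mem_Ioo.mp hx
      omega
    · intro x hx
      have hx' := mem_Ioo.mp hx
      have hxr : x ∈ range (n+1) := by rw [mem_range]; omega
      obtain ⟨hCmem, hxC⟩ := blk_spec hpart hxr
      have hne : blk P x ≠ B := by
        intro h
        rcases hyB x (h ▸ hxC) with h' | h' <;> omega
      rcases hdich _ hCmem hne with h | h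
      · exact h
      · exfalso
        have := mem_Icc.mp (h hxC)
        omega
  -- the second component
  have himQ : (P.filter (· ⊆ Icc b n)).image (fun C => C.erase 0)
      = P.filter (· ⊆ Icc b n) := by
    conv_rhs => rw [← Finset.image_id (s := P.filter (· ⊆ Icc b n))]
    refine Finset.image_congr fun C hC => ?_
    simp only [id]
    exact Finset.erase_eq_of_notMem (hQ0 C hC)
  have hP2eq : ((P.filter (fun C => ¬ C ⊆ Ioo 0 b)).image (fun C => C.erase 0)).erase ∅
      = if B.erase 0 = ∅ then (∅ : Finset (Finset ℕ))
        else insert (B.erase 0) (P.filter (· ⊆ Icc b n)) := by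
    rw [hQsplit, Finset.image_insert, himQ]
    split_ifs with h
    · rw [h]
      have hQempty : P.filter (· ⊆ Icc b n) = ∅ := by
        rw [Finset.eq_empty_iff_forall_notMem]
        intro C hC
        obtain ⟨x, hx⟩ := hpart.1 C (mem_filter.mp hC).1
        have := mem_Icc.mp ((mem_filter.mp hC).2 hx)
        have := hbempty h
        have := hBsub  -- unused
        have hxn : x ∈ range (n+1) := hpart.2.1 C (mem_filter.mp hC).1 hx
        rw [mem_range] at hxn
        omega
      rw [hQempty]
      simp
    · rw [Finset.erase_eq_of_notMem]
      rw [Finset.mem_insert, not_or]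
      refine ⟨fun hh => h hh.symm, ?_⟩
      intro hh
      exact (Finset.nonempty_iff_ne_empty.mp (hpart.1 _ (mem_filter.mp hh).1)) rfl
  set Q := P.filter (· ⊆ Icc b n) with hQdef
  set P2 := ((P.filter (fun C => ¬ C ⊆ Ioo 0 b)).image (fun C => C.erase 0)).erase ∅
    with hP2def
  have hP2mem : P2 ∈ ncp (Icc b n) ∧ blk P2 b = B.erase 0 ∧ P2.erase (B.erase 0) = Q := by
    by_cases hBe : B.erase 0 = ∅
    · have hbn1 : b = n+1 := hbempty hBe
      have hIcc : Icc b n = ∅ := Finset.Icc_eq_empty (by omega)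
      have hP2e : P2 = ∅ := by rw [hP2eq, if_pos hBe]
      have hQempty : Q = ∅ := by
        rw [hQdef, Finset.eq_empty_iff_forall_notMem]
        intro C hC
        obtain ⟨x, hx⟩ := hpart.1 C (mem_filter.mp hC).1
        have := mem_Icc.mp ((mem_filter.mp hC).2 hx)
        omega
      refine ⟨?_, ?_, ?_⟩
      · rw [hP2e, hIcc, ncp_empty]; exact mem_singleton_self _
      · rw [hP2e, hBe, blk]; simp
      · rw [hP2e, hBe, hQempty]; simp
    · have hbB' : b ∈ B.erase 0 := by
        rcases hbB with h | h
        · exact absurd h hBe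
        · exact h
      have hbinB : b ∈ B := (Finset.mem_erase.mp hbB').2
      have hbn' : b ≤ n := hBsub b hbinB
      have hP2i : P2 = insert (B.erase 0) Q := by rw [hP2eq, if_neg hBe]
      have hBen : B.erase 0 ∉ Q := by
        intro h
        have hne : B.erase 0 ≠ B := by
          intro hh
          exact (hh ▸ (Finset.notMem_erase 0 B)) h0B
        exact parts_disjoint hpart (mem_filter.mp h).1 hBmem hne hbB' hbinB
      have hmemP2 : ∀ D ∈ P2, D = B.erase 0 ∨ D ∈ Q := by
        intro D hD
        rw [hP2i] at hD
        exact mem_insert.mp hD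
      have hpart2 : IsPartOn (Icc b n) P2 := by
        refine ⟨?_, ?_, ?_⟩
        · intro C hC
          rcases hmemP2 C hC with rfl | h
          · exact ⟨b, hbB'⟩
          · exact hpart.1 C (mem_filter.mp h).1
        · intro C hC
          rcases hmemP2 C hC with rfl | h
          · intro y hy
            obtain ⟨hy0, hyB'⟩ := Finset.mem_erase.mp hy
            rw [mem_Icc]
            rcases hyB y hyB' with h' | h'
            · exact absurd h' hy0
            · omega
          · exact (mem_filter.mp h).2
        · intro x hx
          have hx' := mem_Icc.mp hx
          have hxr : x ∈ range (n+1) := by rw [mem_range]; omega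
          obtain ⟨hCmem, hxC⟩ := blk_spec hpart hxr
          have hx0 : x ≠ 0 := by omega
          by_cases hCB : blk P x = B
          · refine ⟨B.erase 0, ⟨hP2i ▸ mem_insert_self _ _,
              Finset.mem_erase.mpr ⟨hx0, hCB ▸ hxC⟩⟩, ?_⟩
            rintro D ⟨hD, hxD⟩
            rcases hmemP2 D hD with rfl | h
            · rfl
            · exfalso
              have hthis : blk P x = D := blk_eq hpart hxr (mem_filter.mp h).1 hxD
              have hDB : D = B := by rw [← hthis, hCB]
              exact hBnotQ (hDB ▸ h)
          · have hCQ : blk P x ∈ Q := by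
              rcases hdich _ hCmem hCB with h | h
              · exfalso
                have := mem_Ioo.mp (h hxC)
                omega
              · exact mem_filter.mpr ⟨hCmem, h⟩
            refine ⟨blk P x, ⟨hP2i ▸ mem_insert_of_mem hCQ, hxC⟩, ?_⟩
            rintro D ⟨hD, hxD⟩
            rcases hmemP2 D hD with rfl | h
            · exfalso
              have hxB : x ∈ B := (Finset.mem_erase.mp hxD).2
              exact hCB (blk_eq hpart hxr hBmem hxB)
            · exact (blk_eq hpart hxr (mem_filter.mp h).1 hxD).symm
      have hnc2 : IsNC P2 := by
        intro i j k' l hik hkj hjl D1 hD1 D2 hD2 hne hi hj hkk hl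
        by_cases hd1 : D1 = B.erase 0 <;> by_cases hd2 : D2 = B.erase 0
        · exact hne (hd1.trans hd2.symm)
        · have hD2Q : D2 ∈ Q := by
            rcases hmemP2 D2 hD2 with h | h
            · exact absurd h hd2
            · exact h
          refine hnc i j k' l hik hkj hjl B hBmem D2 (mem_filter.mp hD2Q).1
            (fun hh => hBnotQ (hh ▸ hD2Q)) ?_ ?_ hkk hl
          · exact Finset.erase_subset 0 B (hd1 ▸ hi)
          · exact Finset.erase_subset 0 B (hd1 ▸ hj)
        · have hD1Q : D1 ∈ Q := by
            rcases hmemP2 D1 hD1 with h | h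
            · exact absurd h hd1
            · exact h
          refine hnc i j k' l hik hkj hjl D1 (mem_filter.mp hD1Q).1 B hBmem
            (fun hh => hBnotQ (hh ▸ hD1Q)) hi hj ?_ ?_
          · exact Finset.erase_subset 0 B (hd2 ▸ hkk)
          · exact Finset.erase_subset 0 B (hd2 ▸ hl)
        · have hD1Q : D1 ∈ Q := by
            rcases hmemP2 D1 hD1 with h | h
            · exact absurd h hd1
            · exact h
          have hD2Q : D2 ∈ Q := by
            rcases hmemP2 D2 hD2 with h | h
            · exact absurd h hd2
            · exact h
          exact hnc i j k' l hik hkj hjl D1 (mem_filter.mp hD1Q).1 D2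
            (mem_filter.mp hD2Q).1 hne hi hj hkk hl
      refine ⟨mem_ncp.mpr ⟨hpart2, hnc2⟩, ?_, ?_⟩
      · exact blk_eq hpart2 (mem_Icc.mpr ⟨le_refl _, hbn'⟩)
          (hP2i ▸ mem_insert_self _ _) hbB'
      · rw [hP2i, Finset.erase_insert hBen]
  obtain ⟨hP2mem', hblkP2, hP2erase⟩ := hP2mem
  have hk1 : b - 1 + 1 = b := by omega
  refine ⟨b - 1, by omega, by omega, ?_, ?_, ?_, ?_⟩
  · rw [hk1]
    exact hP1
  · rw [hk1, ← hP2def]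
    exact hP2mem'
  · rw [hk1, ← hP2def]
    exact hblkP2
  · rw [hk1, ← hP2def, hP2erase]
    ext C
    simp only [mem_insert, mem_union, mem_filter]
    rw [hQdef]
    simp only [mem_filter]
    constructor
    · intro hC
      by_cases hne : C = B
      · exact Or.inl hne
      · rcases hdich C hC hne with h | h
        · exact Or.inr (Or.inl ⟨hC, h⟩)
        · exact Or.inr (Or.inr ⟨hC, h⟩)
    · rintro (rfl | ⟨hC, _⟩ | ⟨hC, _⟩)
      · exact hBmem
      · exact hC
      · exact hC

lemma blk_empty (x : ℕ) : blk (∅ : Finset (Finset ℕ)) x = ∅ := by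
  simp [blk]

lemma ncp_backward {k : ℕ} (hk : k ≤ n) {P₁ P₂ : Finset (Finset ℕ)}
    (h1 : P₁ ∈ ncp (Ioo 0 (k+1))) (h2 : P₂ ∈ ncp (Icc (k+1) n)) :
    insert (insert 0 (blk P₂ (k+1))) (P₁ ∪ P₂.erase (blk P₂ (k+1))) ∈ ncp (range (n+1)) ∧
    bVal n (insert (insert 0 (blk P₂ (k+1))) (P₁ ∪ P₂.erase (blk P₂ (k+1)))) = k+1 ∧
    (insert (insert 0 (blk P₂ (k+1))) (P₁ ∪ P₂.erase (blk P₂ (k+1)))).filter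
      (· ⊆ Ioo 0 (k+1)) = P₁ ∧
    ((((insert (insert 0 (blk P₂ (k+1))) (P₁ ∪ P₂.erase (blk P₂ (k+1)))).filter
        (fun C => ¬ C ⊆ Ioo 0 (k+1))).image (fun C => C.erase 0)).erase ∅) = P₂ := by
  obtain ⟨hpart1, hnc1⟩ := mem_ncp.mp h1
  obtain ⟨hpart2, hnc2⟩ := mem_ncp.mp h2
  set b := k + 1 with hbdef
  set Bb := blk P₂ b with hBbdef
  set B₀ := insert 0 Bb with hB0def
  set P' := insert B₀ (P₁ ∪ P₂.erase Bb) with hP'def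
  have hb1 : ∀ C ∈ P₁, ∀ x ∈ C, 0 < x ∧ x < b := by
    intro C hC x hx
    exact mem_Ioo.mp (hpart1.2.1 C hC hx)
  have hb2 : ∀ C ∈ P₂, ∀ x ∈ C, b ≤ x ∧ x ≤ n := by
    intro C hC x hx
    exact mem_Icc.mp (hpart2.2.1 C hC hx)
  have hc : (P₂ = ∅ ∧ Bb = ∅ ∧ k = n) ∨ (Bb ∈ P₂ ∧ b ∈ Bb) := by
    by_cases hkn : k = n
    · left
      have hIcc : Icc b n = ∅ := Finset.Icc_eq_empty (by omega)
      have hP2e : P₂ = ∅ := by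
        have := h2
        rw [hIcc, ncp_empty, mem_singleton] at this
        exact this
      exact ⟨hP2e, by rw [hBbdef, hP2e, blk_empty], hkn⟩
    · right
      exact blk_spec hpart2 (mem_Icc.mpr ⟨le_refl _, by omega⟩)
  have hBb_sub : ∀ x ∈ Bb, b ≤ x ∧ x ≤ n := by
    intro x hx
    rcases hc with ⟨_, hBbe, _⟩ | ⟨hBbm, _⟩
    · rw [hBbe] at hx
      exact absurd hx (Finset.notMem_empty x)
    · exact hb2 Bb hBbm x hx
  have h0Bb : 0 ∉ Bb := fun h => by have := hBb_sub 0 h; omega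
  have hB0mem : ∀ x ∈ B₀, x = 0 ∨ (b ≤ x ∧ x ≤ n) := by
    intro x hx
    rcases mem_insert.mp hx with rfl | h
    · exact Or.inl rfl
    · exact Or.inr (hBb_sub x h)
  have h0B0 : 0 ∈ B₀ := mem_insert_self _ _
  have hmemP' : ∀ C ∈ P', C = B₀ ∨ C ∈ P₁ ∨ (C ∈ P₂ ∧ C ≠ Bb) := by
    intro C hC
    rcases mem_insert.mp hC with h | h
    · exact Or.inl h
    · rcases mem_union.mp h with h | h
      · exact Or.inr (Or.inl h)
      · exact Or.inr (Or.inr (Finset.mem_erase.mp h).symm)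
  have hpart' : IsPartOn (range (n+1)) P' := by
    refine ⟨?_, ?_, ?_⟩
    · intro C hC
      rcases hmemP' C hC with rfl | h | ⟨h, _⟩
      · exact ⟨0, h0B0⟩
      · exact hpart1.1 C h
      · exact hpart2.1 C h
    · intro C hC x hx
      rw [mem_range]
      rcases hmemP' C hC with rfl | h | ⟨h, _⟩
      · rcases hB0mem x hx with rfl | h <;> omega
      · have := hb1 C h x hx; omega
      · have := hb2 C h x hx; omega
    · intro x hx
      rw [mem_range] at hx
      rcases Nat.eq_zero_or_pos x with rfl | hx0
      · refine ⟨B₀, ⟨mem_insert_self _ _, h0B0⟩, ?_⟩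
        rintro D ⟨hD, h0D⟩
        rcases hmemP' D hD with rfl | h | ⟨h, _⟩
        · rfl
        · have := hb1 D h 0 h0D; omega
        · have := hb2 D h 0 h0D; omega
      · rcases lt_or_ge x b with hxb | hxb
        · obtain ⟨C, ⟨hC, hxC⟩, huniq⟩ := hpart1.2.2 x (mem_Ioo.mpr ⟨hx0, hxb⟩)
          refine ⟨C, ⟨mem_insert_of_mem (mem_union_left _ hC), hxC⟩, ?_⟩
          rintro D ⟨hD, hxD⟩
          rcases hmemP' D hD with rfl | h | ⟨h, _⟩
          · rcases hB0mem x hxD with rfl | h <;> omega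
          · exact huniq D ⟨h, hxD⟩
          · have := hb2 D h x hxD; omega
        · have hxI : x ∈ Icc b n := mem_Icc.mpr ⟨hxb, by omega⟩
          obtain ⟨hCm, hxC⟩ := blk_spec hpart2 hxI
          by_cases hCBb : blk P₂ x = Bb
          · refine ⟨B₀, ⟨mem_insert_self _ _, mem_insert_of_mem (hCBb ▸ hxC)⟩, ?_⟩
            rintro D ⟨hD, hxD⟩
            rcases hmemP' D hD with rfl | h | ⟨h, hne⟩
            · rfl
            · exfalso; have := hb1 D h x hxD; omega
            · exfalso
              exact hne ((blk_eq hpart2 hxI h hxD).symm.trans hCBb)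
          · refine ⟨blk P₂ x, ⟨mem_insert_of_mem (mem_union_right _
              (Finset.mem_erase.mpr ⟨hCBb, hCm⟩)), hxC⟩, ?_⟩
            rintro D ⟨hD, hxD⟩
            rcases hmemP' D hD with rfl | h | ⟨h, hne⟩
            · exfalso
              rcases mem_insert.mp hxD with rfl | hxBb
              · omega
              · rcases hc with ⟨_, hBbe, _⟩ | ⟨hBbm, _⟩
                · rw [hBbe] at hxBb
                  exact absurd hxBb (Finset.notMem_empty x)
                · exact hCBb (blk_eq hpart2 hxI hBbm hxBb)
            · exfalso; have := hb1 D h x hxD; omega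
            · exact (blk_eq hpart2 hxI h hxD).symm
  have hBbP2 : Bb.Nonempty → Bb ∈ P₂ ∧ b ∈ Bb := by
    intro hne
    rcases hc with ⟨_, hBbe, _⟩ | h
    · rw [hBbe] at hne
      exact absurd hne (Finset.not_nonempty_empty)
    · exact h
  have hnc' : IsNC P' := by
    intro i j k' l hik hkj hjl D1 hD1 D2 hD2 hne hi hj hkk hl
    rcases hmemP' D1 hD1 with rfl | hD1' | ⟨hD1', hne1⟩
    · rcases hmemP' D2 hD2 with rfl | hD2' | ⟨hD2', hne2⟩
      · exact hne rfl
      · -- D2 ∈ P₁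
        have h1' := hb1 D2 hD2' k' hkk
        have h2' := hb1 D2 hD2' l hl
        rcases hB0mem j hj with rfl | hjb <;> [omega; (have := hjb; omega)]
      · -- D2 ∈ P₂ \ Bb
        have hkb := hb2 D2 hD2' k' hkk
        have hlb := hb2 D2 hD2' l hl
        have hjBb : j ∈ Bb := by
          rcases mem_insert.mp hj with rfl | h
          · omega
          · exact h
        obtain ⟨hBbm, hbBb⟩ := hBbP2 ⟨j, hjBb⟩
        rcases mem_insert.mp hi with rfl | hiBb
        · -- i = 0 : use b instead
          have hbk' : b < k' := by
            rcases Nat.lt_or_ge b k' with h | h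
            · exact h
            · exfalso
              have : k' = b := by omega
              exact parts_disjoint hpart2 hD2' hBbm (fun hh => hne2 hh) (this ▸ hkk) hbBb
          exact hnc2 b j k' l hbk' hkj hjl Bb hBbm D2 hD2'
            (fun hh => hne2 hh.symm) hbBb hjBb hkk hl
        · exact hnc2 i j k' l hik hkj hjl Bb hBbm D2 hD2'
            (fun hh => hne2 hh.symm) hiBb hjBb hkk hl
    · rcases hmemP' D2 hD2 with rfl | hD2' | ⟨hD2', hne2⟩
      · -- D1 ∈ P₁, D2 = B₀
        have hib := hb1 D1 hD1' i hi
        have hjb := hb1 D1 hD1' j hj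
        rcases hB0mem k' hkk with rfl | hkb
        · omega
        · omega
      · exact hnc1 i j k' l hik hkj hjl D1 hD1' D2 hD2' hne hi hj hkk hl
      · have := hb1 D1 hD1' j hj
        have := hb2 D2 hD2' k' hkk
        omega
    · rcases hmemP' D2 hD2 with rfl | hD2' | ⟨hD2', hne2⟩
      · -- D1 ∈ P₂', D2 = B₀
        have hib := hb2 D1 hD1' i hi
        have hjb := hb2 D1 hD1' j hj
        rcases hB0mem k' hkk with rfl | hkb
        · omega
        · have hlBb : l ∈ Bb := by
            rcases mem_insert.mp hl with rfl | h
            · omega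
            · exact h
          have hkBb : k' ∈ Bb := by
            rcases mem_insert.mp hkk with rfl | h
            · omega
            · exact h
          obtain ⟨hBbm, _⟩ := hBbP2 ⟨l, hlBb⟩
          exact hnc2 i j k' l hik hkj hjl D1 hD1' Bb hBbm
            (fun hh => hne1 hh) hi hj hkBb hlBb
      · have := hb2 D1 hD1' i hi
        have := hb1 D2 hD2' k' hkk
        omega
      · exact hnc2 i j k' l hik hkj hjl D1 hD1' D2 hD2' hne hi hj hkk hl
  have hmemncp : P' ∈ ncp (range (n+1)) := mem_ncp.mpr ⟨hpart', hnc'⟩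
  have hblk0 : blk P' 0 = B₀ :=
    blk_eq hpart' (by rw [mem_range]; omega) (mem_insert_self _ _) h0B0
  have hB0erase : B₀.erase 0 = Bb := by
    rw [hB0def, Finset.erase_insert h0Bb]
  refine ⟨hmemncp, ?_, ?_, ?_⟩
  · -- bVal
    rw [bVal, hblk0, hB0erase]
    split_ifs with h
    · obtain ⟨hBbm, hbBb⟩ := hBbP2 h
      refine le_antisymm (Finset.min'_le _ _ hbBb) (Finset.le_min' _ _ _ ?_)
      intro y hy
      exact (hBb_sub y hy).1
    · rcases hc with ⟨_, _, hkn⟩ | ⟨hBbm, hbBb⟩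
      · omega
      · exact absurd ⟨b, hbBb⟩ h
  · -- filter = P₁
    ext C
    simp only [mem_filter]
    constructor
    · rintro ⟨hC, hsub⟩
      rcases hmemP' C hC with rfl | h | ⟨h, _⟩
      · exfalso
        have := mem_Ioo.mp (hsub h0B0)
        omega
      · exact h
      · exfalso
        obtain ⟨x, hx⟩ := hpart2.1 C h
        have := hb2 C h x hx
        have := mem_Ioo.mp (hsub hx)
        omega
    · intro hC
      exact ⟨mem_insert_of_mem (mem_union_left _ hC), hpart1.2.1 C hC⟩
  · -- second component recovers P₂
    have hstep : P'.filter (fun C => ¬ C ⊆ Ioo 0 b) = insert B₀ (P₂.erase Bb) := by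
      ext C
      simp only [mem_filter, mem_insert]
      constructor
      · rintro ⟨hC, hnsub⟩
        rcases hmemP' C hC with rfl | h | ⟨h, hne⟩
        · exact Or.inl rfl
        · exact absurd (hpart1.2.1 C h) hnsub
        · exact Or.inr (Finset.mem_erase.mpr ⟨hne, h⟩)
      · rintro (rfl | h)
        · exact ⟨mem_insert_self _ _, fun hh => by
            have := mem_Ioo.mp (hh h0B0); omega⟩
        · obtain ⟨hne, hC⟩ := Finset.mem_erase.mp h
          refine ⟨mem_insert_of_mem (mem_union_right _ h), fun hh => ?_⟩
          obtain ⟨x, hx⟩ := hpart2.1 C hC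
          have := hb2 C hC x hx
          have := mem_Ioo.mp (hh hx)
          omega
    rw [hstep, Finset.image_insert, hB0erase]
    have him : (P₂.erase Bb).image (fun C => C.erase 0) = P₂.erase Bb := by
      conv_rhs => rw [← Finset.image_id (s := P₂.erase Bb)]
      refine Finset.image_congr fun C hC => ?_
      simp only [id]
      refine Finset.erase_eq_of_notMem fun h0C => ?_
      have := hb2 C (Finset.mem_erase.mp hC).2 0 h0C
      omega
    rw [him]
    rcases hc with ⟨hP2e, hBbe, _⟩ | ⟨hBbm, _⟩
    · rw [hP2e, hBbe]
      simp
    · rw [Finset.insert_erase hBbm]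
      refine Finset.erase_eq_of_notMem fun h => ?_
      obtain ⟨x, hx⟩ := hpart2.1 ∅ h
      exact absurd hx (Finset.notMem_empty x)

lemma ncp_rec (n : ℕ) :
    (ncp (range (n+1))).card
      = ∑ k ∈ range (n+1), (ncp (Ioo 0 (k+1))).card * (ncp (Icc (k+1) n)).card := by
  have hrhs : ∑ k ∈ range (n+1), (ncp (Ioo 0 (k+1))).card * (ncp (Icc (k+1) n)).card
      = ((range (n+1)).sigma fun k => ncp (Ioo 0 (k+1)) ×ˢ ncp (Icc (k+1) n)).card := by
    rw [Finset.card_sigma]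
    exact Finset.sum_congr rfl fun k _ => (Finset.card_product _ _).symm
  rw [hrhs]
  refine card_bij' (fun P _ => ⟨bVal n P - 1,
      (P.filter (· ⊆ Ioo 0 (bVal n P)),
       ((P.filter (fun C => ¬ C ⊆ Ioo 0 (bVal n P))).image (fun C => C.erase 0)).erase ∅)⟩)
    (fun q _ => insert (insert 0 (blk q.2.2 (q.1+1)))
      (q.2.1 ∪ q.2.2.erase (blk q.2.2 (q.1+1)))) ?_ ?_ ?_ ?_
  · intro P hP
    obtain ⟨k, hk, hb, hm1, hm2, _, _⟩ := ncp_forward hP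
    rw [mem_sigma]
    constructor
    · dsimp only
      rw [hb, Nat.add_sub_cancel, mem_range]
      omega
    · dsimp only
      rw [hb, Nat.add_sub_cancel, mem_product]
      exact ⟨hm1, hm2⟩
  · rintro ⟨k, P₁, P₂⟩ hq
    rw [mem_sigma] at hq
    obtain ⟨hk, hprod⟩ := hq
    rw [mem_range] at hk
    rw [mem_product] at hprod
    exact (ncp_backward (by omega) hprod.1 hprod.2).1
  · intro P hP
    obtain ⟨k, hk, hb, _, _, hblk, hdecomp⟩ := ncp_forward hP
    have h0B : 0 ∈ blk P 0 := by
      obtain ⟨hpart, _⟩ := mem_ncp.mp hP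
      exact (blk_spec hpart (by rw [mem_range]; omega)).2
    dsimp only
    rw [hb, Nat.add_sub_cancel, hblk, Finset.insert_erase h0B]
    exact hdecomp.symm
  · rintro ⟨k, P₁, P₂⟩ hq
    rw [mem_sigma] at hq
    obtain ⟨hk, hprod⟩ := hq
    rw [mem_range] at hk
    rw [mem_product] at hprod
    obtain ⟨_, hbval, hf1, hf2⟩ := ncp_backward (n := n) (by omega) hprod.1 hprod.2
    dsimp only
    rw [hbval, Nat.add_sub_cancel, hf1, hf2]

lemma ncp_card_catalan : ∀ n : ℕ, (ncp (range n)).card = catalan n := by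
  intro n
  induction n using Nat.strong_induction_on with
  | _ n ih =>
    match n with
    | 0 => simp [range_zero, ncp_empty]
    | Nat.succ m =>
      rw [ncp_rec m, catalan_succ,
        show ∑ i : Fin m.succ, catalan ↑i * catalan (m - ↑i)
            = ∑ i ∈ range (m+1), catalan i * catalan (m-i) from
          Fin.sum_univ_eq_sum_range (fun i => catalan i * catalan (m-i)) (m+1)]
      apply Finset.sum_congr rfl
      intro k hk
      rw [mem_range] at hk
      rw [ncp_card_Ioo, ncp_card_Icc]
      have e1 : k+1-0-1 = k := by omega
      have e2 : m+1-(k+1) = m-k := by omega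
      rw [e1, e2, ih k (by omega), ih (m-k) (by omega)]

section bridge
variable {N : ℕ}

noncomputable def natParts (π : Finpartition (univ : Finset (Fin N))) : Finset (Finset ℕ) :=
  π.parts.image (fun B => B.image Fin.val)

lemma natParts_partOn (π : Finpartition (univ : Finset (Fin N))) :
    IsPartOn (range N) (natParts π) := by
  refine ⟨?_, ?_, ?_⟩
  · intro B hB
    obtain ⟨D, hD, rfl⟩ := mem_image.mp hB
    exact (π.nonempty_of_mem_parts hD).image _
  · intro B hB x hx
    obtain ⟨D, hD, rfl⟩ := mem_image.mp hB
    obtain ⟨y, _, rfl⟩ := mem_image.mp hx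
    rw [mem_range]
    exact y.isLt
  · intro x hx
    rw [mem_range] at hx
    obtain ⟨D, ⟨hD, hxD⟩, huniq⟩ := π.existsUnique_mem (a := ⟨x, hx⟩) (mem_univ _)
    refine ⟨D.image Fin.val, ⟨mem_image_of_mem _ hD, mem_image_of_mem _ hxD⟩, ?_⟩
    rintro C ⟨hC, hxC⟩
    obtain ⟨E, hE, rfl⟩ := mem_image.mp hC
    obtain ⟨y, hyE, hyx⟩ := mem_image.mp hxC
    have hy : y = ⟨x, hx⟩ := Fin.ext hyx
    rw [huniq E ⟨hE, hy ▸ hyE⟩]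

lemma natParts_NC {π : Finpartition (univ : Finset (Fin N))} (h : IsNC π.parts) :
    IsNC (natParts π) := by
  intro i j k l hik hkj hjl B hB C hC hne hi hj hk hl
  obtain ⟨D1, hD1, rfl⟩ := mem_image.mp hB
  obtain ⟨D2, hD2, rfl⟩ := mem_image.mp hC
  obtain ⟨a, ha, rfl⟩ := mem_image.mp hi
  obtain ⟨b, hb, rfl⟩ := mem_image.mp hj
  obtain ⟨c, hc, rfl⟩ := mem_image.mp hk
  obtain ⟨d, hd, rfl⟩ := mem_image.mp hl
  exact h a b c d hik hkj hjl D1 hD1 D2 hD2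
    (fun hh => hne (by rw [hh])) ha hb hc hd

noncomputable def finParts {P : Finset (Finset ℕ)} (hP : P ∈ ncp (range N)) :
    Finpartition (univ : Finset (Fin N)) where
  parts := P.image (fun B => B.preimage Fin.val Fin.val_injective.injOn)
  supIndep := by
    rw [supIndep_iff_pairwiseDisjoint]
    rintro D1 hD1 D2 hD2 hne
    rw [mem_coe] at hD1 hD2
    obtain ⟨B1, hB1, rfl⟩ := mem_image.mp hD1
    obtain ⟨B2, hB2, rfl⟩ := mem_image.mp hD2
    have hBne : B1 ≠ B2 := fun hh => hne (by rw [hh])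
    simp only [Function.onFun, id]
    rw [Finset.disjoint_left]
    intro a ha1 ha2
    rw [Finset.mem_preimage] at ha1 ha2
    exact parts_disjoint (mem_ncp.mp hP).1 hB1 hB2 hBne ha1 ha2
  sup_parts := by
    ext a
    simp only [Finset.mem_sup, mem_univ, iff_true, id]
    have haN : (a : ℕ) ∈ range N := by rw [mem_range]; exact a.isLt
    obtain ⟨B, ⟨hB, haB⟩, _⟩ := (mem_ncp.mp hP).1.2.2 (a : ℕ) haN
    exact ⟨B.preimage Fin.val Fin.val_injective.injOn, mem_image_of_mem _ hB,
      Finset.mem_preimage.mpr haB⟩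
  bot_notMem := by
    intro h
    obtain ⟨B, hB, hBe⟩ := mem_image.mp h
    obtain ⟨x, hx⟩ := (mem_ncp.mp hP).1.1 B hB
    have hxN : x < N := by
      have := (mem_ncp.mp hP).1.2.1 B hB hx
      rwa [mem_range] at this
    have : (⟨x, hxN⟩ : Fin N) ∈ B.preimage Fin.val Fin.val_injective.injOn :=
      Finset.mem_preimage.mpr hx
    rw [hBe] at this
    exact absurd this (Finset.notMem_empty _)

lemma finParts_NC {P : Finset (Finset ℕ)} (hP : P ∈ ncp (range N)) :
    IsNC (finParts hP).parts := by
  intro i j k l hik hkj hjl B hB C hC hne hi hj hk hl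
  obtain ⟨B1, hB1, rfl⟩ := mem_image.mp hB
  obtain ⟨B2, hB2, rfl⟩ := mem_image.mp hC
  rw [Finset.mem_preimage] at hi hj hk hl
  exact (mem_ncp.mp hP).2 i j k l (by exact_mod_cast hik) (by exact_mod_cast hkj)
    (by exact_mod_cast hjl) B1 hB1 B2 hB2 (fun hh => hne (by rw [hh])) hi hj hk hl

lemma finParts_parts {P : Finset (Finset ℕ)} (hP : P ∈ ncp (range N)) :
    (finParts hP).parts = P.image (fun B => B.preimage Fin.val Fin.val_injective.injOn) :=
  rfl

lemma natParts_def (π : Finpartition (univ : Finset (Fin N))) :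
    natParts π = π.parts.image (fun B => B.image Fin.val) := rfl

lemma image_preimage_val {B : Finset ℕ} (hsub : ∀ x ∈ B, x < N) :
    (B.preimage (Fin.val : Fin N → ℕ) Fin.val_injective.injOn).image Fin.val = B := by
  rw [Finset.image_preimage]
  exact Finset.filter_true_of_mem fun x hx => ⟨⟨x, hsub x hx⟩, rfl⟩

lemma natParts_finParts {P : Finset (Finset ℕ)} (hP : P ∈ ncp (range N)) :
    natParts (finParts hP) = P := by
  rw [natParts_def, finParts_parts, image_image]
  conv_rhs => rw [← Finset.image_id (s := P)]
  refine Finset.image_congr fun B hB => ?_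
  simp only [Function.comp, id]
  refine image_preimage_val fun x hx => ?_
  have := (mem_ncp.mp hP).1.2.1 B hB hx
  rwa [mem_range] at this

lemma finParts_natParts {π : Finpartition (univ : Finset (Fin N))}
    (h : natParts π ∈ ncp (range N)) :
    (finParts h).parts = π.parts := by
  rw [finParts_parts, natParts_def, image_image]
  conv_rhs => rw [← Finset.image_id (s := π.parts)]
  refine Finset.image_congr fun D hD => ?_
  simp only [Function.comp, id]
  ext a
  rw [Finset.mem_preimage, Finset.mem_image]
  constructor
  · rintro ⟨b, hb, hba⟩
    rwa [Fin.val_injective hba] at hb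
  · intro ha
    exact ⟨a, ha, rfl⟩

noncomputable def eqvP (N : ℕ) :
    {π : Finpartition (univ : Finset (Fin N)) // IsNC π.parts} ≃
      {P : Finset (Finset ℕ) // P ∈ ncp (range N)} where
  toFun π := ⟨natParts π.1, mem_ncp.mpr ⟨natParts_partOn _, natParts_NC π.2⟩⟩
  invFun P := ⟨finParts P.2, finParts_NC P.2⟩
  left_inv := by
    rintro ⟨π, hπ⟩
    apply Subtype.ext
    apply Finpartition.ext
    exact finParts_natParts (mem_ncp.mpr ⟨natParts_partOn _, natParts_NC hπ⟩)
  right_inv := by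
    rintro ⟨P, hP⟩
    apply Subtype.ext
    exact natParts_finParts hP

lemma natParts_card2 {π : Finpartition (univ : Finset (Fin N))}
    (h : ∀ B ∈ π.parts, B.card = 2) : ∀ B ∈ natParts π, B.card = 2 := by
  intro B hB
  obtain ⟨D, hD, rfl⟩ := mem_image.mp hB
  rw [Finset.card_image_of_injective _ Fin.val_injective]
  exact h D hD

lemma finParts_card2 {P : Finset (Finset ℕ)} (hP : P ∈ ncp (range N))
    (h : ∀ B ∈ P, B.card = 2) : ∀ B ∈ (finParts hP).parts, B.card = 2 := by
  intro B hB
  rw [finParts_parts] at hB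
  obtain ⟨B1, hB1, rfl⟩ := mem_image.mp hB
  have hsub : ∀ x ∈ B1, x < N := by
    intro x hx
    have := (mem_ncp.mp hP).1.2.1 B1 hB1 hx
    rwa [mem_range] at this
  calc (B1.preimage (Fin.val : Fin N → ℕ) Fin.val_injective.injOn).card
      = ((B1.preimage (Fin.val : Fin N → ℕ) Fin.val_injective.injOn).image Fin.val).card :=
        (Finset.card_image_of_injective _ Fin.val_injective).symm
    _ = B1.card := by rw [image_preimage_val hsub]
    _ = 2 := h B1 hB1

noncomputable def eqvM (N : ℕ) :
    {π : Finpartition (univ : Finset (Fin N)) // IsNC π.parts ∧ ∀ B ∈ π.parts, B.card = 2} ≃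
      {P : Finset (Finset ℕ) // P ∈ ncm (range N)} where
  toFun π := ⟨natParts π.1, mem_ncm.mpr ⟨⟨natParts_partOn _, natParts_NC π.2.1⟩,
    natParts_card2 π.2.2⟩⟩
  invFun P := ⟨finParts (mem_ncp.mpr (mem_ncm.mp P.2).1),
    ⟨finParts_NC _, finParts_card2 _ (mem_ncm.mp P.2).2⟩⟩
  left_inv := by
    rintro ⟨π, hπ⟩
    apply Subtype.ext
    apply Finpartition.ext
    exact finParts_natParts (mem_ncp.mpr ⟨natParts_partOn _, natParts_NC hπ.1⟩)
  right_inv := by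
    rintro ⟨P, hP⟩
    apply Subtype.ext
    exact natParts_finParts (mem_ncp.mpr (mem_ncm.mp hP).1)

end bridge
end partrec

end TL

/-- Temperley–Lieb diagrams with `n` strands — i.e. non-crossing perfect
matchings of `2n` boundary points — are in bijection with non-crossing partitions of
`{1,...,n}` (the partition into black regions); in particular the number of
non-crossing partitions of `{1,...,n}` is the `n`-th Catalan number. -/
theorem stmt_5 (n : ℕ) :
    Nonempty
      ({M : Finpartition (Finset.univ : Finset (Fin (2 * n))) //
          IsNC M.parts ∧ ∀ B ∈ M.parts, B.card = 2} ≃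
        {π : Finpartition (Finset.univ : Finset (Fin n)) // IsNC π.parts}) ∧
    Fintype.card {π : Finpartition (Finset.univ : Finset (Fin n)) // IsNC π.parts}
      = catalan n := by
  have hP : Fintype.card {π : Finpartition (Finset.univ : Finset (Fin n)) // IsNC π.parts}
      = catalan n :=
    (Fintype.card_congr (TL.eqvP n)).trans
      ((Fintype.card_coe _).trans (TL.ncp_card_catalan n))
  have hM : Fintype.card {M : Finpartition (Finset.univ : Finset (Fin (2 * n))) //
        IsNC M.parts ∧ ∀ B ∈ M.parts, B.card = 2} = catalan n :=
    (Fintype.card_congr (TL.eqvM (2*n))).trans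
      ((Fintype.card_coe _).trans (TL.ncm_card_catalan n))
  exact ⟨Fintype.card_eq.mp (hM.trans hP.symm), hP⟩
end

section
/- Let π be a non-crossing partition of {1,...,n} and let L(π) be the closed diagram obtained by placing the Temperley–Lieb diagram TL(π) corresponding to π in a disc and connecting all its n through-points by a single enclosing string. Then the number N(π) of closed loops in L(π) satisfies N(π) − 2 = n − |π|, where |π| is the number of classes of π. -/
open scoped Classical

/-- The cyclically next element of the class of `i` in the partition `π`:
the smallest element of the class larger than `i`, or its minimum if `i` is
its largest element.  In the Temperley–Lieb diagram `TL(π)` this describes the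
strand leaving the right side of point `i`. -/
noncomputable def nextInBlock {n : ℕ} (π : Finpartition (Finset.univ : Finset (Fin n)))
    (i : Fin n) : Fin n :=
  if h : ((π.part i).filter (fun j => i < j)).Nonempty then
    ((π.part i).filter (fun j => i < j)).min' h
  else if h2 : (π.part i).Nonempty then (π.part i).min' h2
  else i

/-- Following a strand of the closed diagram `L(π)` from (the right side of) point `i`
to the next point it visits: the arc of `TL(π)` followed by the closure arc of `L(π)`
connecting consecutive points cyclically. -/
noncomputable def loopMap {n : ℕ} (π : Finpartition (Finset.univ : Finset (Fin n)))
    (i : Fin n) : Fin n :=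
  ⟨((nextInBlock π i).val + n - 1) % n, Nat.mod_lt _ i.pos⟩

/-- The number of loops `N(π)` of the closed diagram `L(π)`: the number of connected
components of the strands of the closure of `TL(π)` (equivalence classes of points
under the loop-following map, counted by their minimal representatives) plus one for
the enclosing string. -/
noncomputable def numLoops {n : ℕ} (π : Finpartition (Finset.univ : Finset (Fin n))) : ℕ :=
  (Finset.univ.filter fun i : Fin n =>
      ∀ j, Relation.EqvGen (fun a b => loopMap π a = b) i j → i ≤ j).card + 1

open Finset

section Basics

variable {n : ℕ} (π : Finpartition (Finset.univ : Finset (Fin n)))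

lemma mem_own_part (i : Fin n) : i ∈ π.part i := π.mem_part (mem_univ i)

lemma nextInBlock_mem (i : Fin n) : nextInBlock π i ∈ π.part i := by
  unfold nextInBlock
  split_ifs with h1 h2
  · exact mem_of_mem_filter _ (min'_mem _ h1)
  · exact min'_mem _ h2
  · exact mem_own_part π i

lemma nextInBlock_congr (π' : Finpartition (Finset.univ : Finset (Fin n))) (i : Fin n)
    (h : π.part i = π'.part i) : nextInBlock π i = nextInBlock π' i := by
  unfold nextInBlock; rw [h]

lemma nextInBlock_singleton {i : Fin n} (h : π.part i = {i}) : nextInBlock π i = i := by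
  unfold nextInBlock
  rw [h]
  have : ({i} : Finset (Fin n)).filter (fun j => i < j) = ∅ := by
    simp [Finset.filter_singleton]
  simp [this]

lemma loopMap_val (i : Fin n) : (loopMap π i).val = ((nextInBlock π i).val + n - 1) % n := rfl

lemma loopMap_of_nb {i j : Fin n} (h : nextInBlock π i = j) (hj : 1 ≤ j.val) :
    loopMap π i = ⟨j.val - 1, by omega⟩ := by
  apply Fin.ext
  rw [loopMap_val, h]
  have h1 : j.val + n - 1 = (j.val - 1) + n := by omega
  rw [h1, Nat.add_mod_right]
  exact Nat.mod_eq_of_lt (by omega)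

lemma mod_helper {m b nn : ℕ} (hm : m < nn) (h : (m + nn - 1) % nn = b) (hb : b + 1 < nn) :
    m = b + 1 := by
  rcases Nat.eq_zero_or_pos m with h0 | h1
  · subst h0
    rw [Nat.zero_add, Nat.mod_eq_of_lt (by omega)] at h
    omega
  · have h2 : m + nn - 1 = (m - 1) + nn := by omega
    rw [h2, Nat.add_mod_right, Nat.mod_eq_of_lt (by omega)] at h
    omega

lemma nb_val_of_loopMap {i : Fin n} {b : Fin n} (h : loopMap π i = b) (hb : b.val + 1 < n) :
    (nextInBlock π i).val = b.val + 1 := by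
  have := congrArg Fin.val h
  rw [loopMap_val] at this
  exact mod_helper (nextInBlock π i).isLt this hb

end Basics

section Split
variable {n : ℕ} (π : Finpartition (Finset.univ : Finset (Fin n))) (y : Fin n)

noncomputable def splitParts : Finset (Finset (Fin n)) :=
  insert {y} (insert ((π.part y).erase y) (π.parts.erase (π.part y)))

variable {π y}

lemma pd (hy : ((π.part y).erase y).Nonempty) :
    (splitParts π y : Set (Finset (Fin n))).PairwiseDisjoint id := by
  have hyy : y ∈ π.part y := π.mem_part (mem_univ y)
  have hpd : (π.parts : Set (Finset (Fin n))).PairwiseDisjoint id :=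
    Finset.supIndep_iff_pairwiseDisjoint.mp π.supIndep
  intro a ha b hb hab
  simp only [splitParts, coe_insert, Set.mem_insert_iff, mem_coe, mem_erase] at ha hb
  have dsing : ∀ C ∈ π.parts, C ≠ π.part y → Disjoint ({y} : Finset (Fin n)) C := by
    intro C hC hCy
    rw [Finset.disjoint_singleton_left]
    intro hyC
    exact hCy (π.eq_of_mem_parts hC (π.part_mem.mpr (mem_univ y)) hyC hyy)
  have dse : ∀ C ∈ π.parts, C ≠ π.part y → Disjoint ((π.part y).erase y) C := by
    intro C hC hCy
    exact Finset.disjoint_of_subset_left (erase_subset _ _)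
      (hpd (π.part_mem.mpr (mem_univ y)) hC (fun h => hCy h.symm))
  rcases ha with rfl | rfl | ⟨ha1, ha2⟩ <;> rcases hb with rfl | rfl | ⟨hb1, hb2⟩
  · exact absurd rfl hab
  · exact Finset.disjoint_singleton_left.mpr (notMem_erase y (π.part y))
  · exact dsing _ hb2 hb1
  · exact (Finset.disjoint_singleton_left.mpr (notMem_erase y (π.part y))).symm
  · exact absurd rfl hab
  · exact dse _ hb2 hb1
  · exact (dsing _ ha2 ha1).symm
  · exact (dse _ ha2 ha1).symm
  · exact hpd ha2 hb2 hab

lemma sup_splitParts : (splitParts π y).sup id = (Finset.univ : Finset (Fin n)) := by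
  apply le_antisymm
  · exact Finset.sup_le fun _ _ => subset_univ _
  · intro x _
    rw [Finset.mem_sup]
    by_cases hx : x ∈ π.part y
    · by_cases hxy : x = y
      · exact ⟨{y}, mem_insert_self _ _, by simp [hxy]⟩
      · exact ⟨(π.part y).erase y, mem_insert_of_mem (mem_insert_self _ _),
          mem_erase.mpr ⟨hxy, hx⟩⟩
    · refine ⟨π.part x, mem_insert_of_mem (mem_insert_of_mem (mem_erase.mpr
        ⟨?_, π.part_mem.mpr (mem_univ x)⟩)), π.mem_part (mem_univ x)⟩
      intro h
      exact hx (h ▸ π.mem_part (mem_univ x))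

noncomputable def splitFP (hy : ((π.part y).erase y).Nonempty) :
    Finpartition (Finset.univ : Finset (Fin n)) where
  parts := splitParts π y
  supIndep := Finset.supIndep_iff_pairwiseDisjoint.mpr (pd hy)
  sup_parts := sup_splitParts
  bot_notMem := by
    simp only [splitParts, bot_eq_empty, mem_insert]
    push_neg
    refine ⟨fun h => (Finset.singleton_ne_empty y) h.symm, ?_, ?_⟩
    · intro h; rw [← h] at hy; exact Finset.not_nonempty_empty hy
    · intro h
      exact π.bot_notMem (Finset.mem_of_mem_erase h)

lemma splitFP_card (hy : ((π.part y).erase y).Nonempty) :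
    (splitFP hy).parts.card = π.parts.card + 1 := by
  have hyy : y ∈ π.part y := π.mem_part (mem_univ y)
  have hByc : π.part y ∈ π.parts := π.part_mem.mpr (mem_univ y)
  have h1 : ({y} : Finset (Fin n)) ∉ insert ((π.part y).erase y) (π.parts.erase (π.part y)) := by
    simp only [mem_insert]
    rintro (h | h)
    · have : y ∈ (π.part y).erase y := h ▸ mem_singleton_self y
      exact notMem_erase _ _ this
    · rcases mem_erase.mp h with ⟨hne, hmem⟩
      exact hne (π.eq_of_mem_parts hmem hByc (mem_singleton_self y) hyy)
  have h2 : (π.part y).erase y ∉ π.parts.erase (π.part y) := by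
    intro h
    rcases mem_erase.mp h with ⟨hne, hmem⟩
    obtain ⟨w, hw⟩ := hy
    rcases mem_erase.mp hw with ⟨hwy, hwB⟩
    have := π.eq_of_mem_parts hmem hByc hw hwB
    exact hne this
  have hc : (splitFP hy).parts = splitParts π y := rfl
  rw [hc]
  unfold splitParts
  rw [card_insert_of_notMem h1, card_insert_of_notMem h2, card_erase_of_mem hByc]
  have : 1 ≤ π.parts.card := Finset.card_pos.mpr ⟨_, hByc⟩
  omega

lemma splitFP_part_y (hy : ((π.part y).erase y).Nonempty) : (splitFP hy).part y = {y} :=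
  (splitFP hy).part_eq_of_mem (mem_insert_self _ _) (mem_singleton_self y)

lemma splitFP_part_of_mem (hy : ((π.part y).erase y).Nonempty) {i : Fin n}
    (hi : i ∈ π.part y) (hiy : i ≠ y) : (splitFP hy).part i = (π.part y).erase y :=
  (splitFP hy).part_eq_of_mem (mem_insert_of_mem (mem_insert_self _ _))
    (mem_erase.mpr ⟨hiy, hi⟩)

lemma splitFP_part_of_not_mem (hy : ((π.part y).erase y).Nonempty) {i : Fin n}
    (hi : i ∉ π.part y) : (splitFP hy).part i = π.part i := by
  refine (splitFP hy).part_eq_of_mem (mem_insert_of_mem (mem_insert_of_mem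
    (mem_erase.mpr ⟨?_, π.part_mem.mpr (mem_univ i)⟩))) (π.mem_part (mem_univ i))
  intro h
  exact hi (h ▸ π.mem_part (mem_univ i))

lemma splitFP_isNC (hy : ((π.part y).erase y).Nonempty) (hπ : IsNC π.parts) :
    IsNC (splitFP hy).parts := by
  intro i j k l h1 h2 h3 B hB C hC hBC hiB hjB hkC hlC
  have key : ∀ D ∈ (splitFP hy).parts, D ≠ {y} →
      ∃ D0 ∈ π.parts, D ⊆ D0 ∧ (D = (π.part y).erase y → D0 = π.part y) ∧
        (D ≠ (π.part y).erase y → D = D0 ∧ D ≠ π.part y) := by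
    intro D hD hDy
    have : D ∈ splitParts π y := hD
    simp only [splitParts, mem_insert] at this
    rcases this with rfl | rfl | hD'
    · exact absurd rfl hDy
    · exact ⟨π.part y, π.part_mem.mpr (mem_univ y), erase_subset _ _, fun _ => rfl,
        fun h => absurd rfl h⟩
    · rcases mem_erase.mp hD' with ⟨hne, hmem⟩
      refine ⟨D, hmem, subset_rfl, fun h => ?_, fun _ => ⟨rfl, hne⟩⟩
      exfalso
      -- D = erase y of part y, and D ∈ π.parts : then D = part y, contra (y ∉ D)
      obtain ⟨w, hw⟩ := hy
      rw [← h] at hw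
      rcases mem_erase.mp (h ▸ hw) with ⟨hwy, hwB⟩
      have := π.eq_of_mem_parts hmem (π.part_mem.mpr (mem_univ y)) hw (h ▸ hw |> fun hh => hwB)
      exact hne this
  have hBy : B ≠ {y} := by
    rintro rfl
    rcases mem_singleton.mp hiB with rfl
    rcases mem_singleton.mp hjB
    exact absurd (h1.trans h2) (lt_irrefl _)
  have hCy : C ≠ {y} := by
    rintro rfl
    rcases mem_singleton.mp hkC with rfl
    rcases mem_singleton.mp hlC
    exact absurd (h2.trans h3) (lt_irrefl _)
  obtain ⟨B0, hB0, hBsub, hBe, hBne⟩ := key B hB hBy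
  obtain ⟨C0, hC0, hCsub, hCe, hCne⟩ := key C hC hCy
  by_cases hBC0 : B0 = C0
  · -- both inside same old part: contradiction with B ≠ C
    by_cases hBer : B = (π.part y).erase y
    · by_cases hCer : C = (π.part y).erase y
      · exact hBC (hBer.trans hCer.symm)
      · obtain ⟨hCeq, hCneq⟩ := hCne hCer
        exact hCneq (hCeq.trans (hBC0.symm.trans (hBe hBer)))
    · obtain ⟨hBeq, hBneq⟩ := hBne hBer
      by_cases hCer : C = (π.part y).erase y
      · exact hBneq (hBeq.trans (hBC0.trans (hCe hCer)))
      · obtain ⟨hCeq, _⟩ := hCne hCer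
        exact hBC (hBeq.trans (hBC0.trans hCeq.symm))
  · exact hπ i j k l h1 h2 h3 B0 hB0 C0 hC0 hBC0 (hBsub hiB) (hBsub hjB) (hCsub hkC) (hCsub hlC)

end Split
section Step
variable {n : ℕ} {π : Finpartition (Finset.univ : Finset (Fin n))} {p y : Fin n}

lemma part_p_eq (hpB : p ∈ π.part y) : π.part p = π.part y :=
  π.part_eq_of_mem (π.part_mem.mpr (mem_univ y)) hpB

lemma hBIoo (hsing : ∀ z : Fin n, p < z → z < y → π.part z = {z}) :
    ∀ z ∈ π.part y, ¬(p < z ∧ z < y) := by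
  rintro z hz ⟨h1, h2⟩
  have hzz : π.part z = π.part y := π.part_eq_of_mem (π.part_mem.mpr (mem_univ y)) hz
  rw [hsing z h1 h2] at hzz
  have : y ∈ ({z} : Finset (Fin n)) := hzz ▸ mem_own_part π y
  exact absurd (mem_singleton.mp this) (ne_of_gt h2)

lemma nb_p (hpy : p < y) (hpB : p ∈ π.part y)
    (hsing : ∀ z : Fin n, p < z → z < y → π.part z = {z}) :
    nextInBlock π p = y := by
  have hne : ((π.part p).filter (fun j => p < j)).Nonempty :=
    ⟨y, mem_filter.mpr ⟨part_p_eq hpB ▸ mem_own_part π y, hpy⟩⟩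
  unfold nextInBlock
  rw [dif_pos hne]
  apply le_antisymm
  · exact min'_le _ y (mem_filter.mpr ⟨part_p_eq hpB ▸ mem_own_part π y, hpy⟩)
  · apply le_min'
    intro b hb
    rcases mem_filter.mp hb with ⟨hbB, hpb⟩
    rw [part_p_eq hpB] at hbB
    by_contra hby
    exact hBIoo hsing b hbB ⟨hpb, lt_of_not_ge hby⟩

/-- erase-y nonempty -/
lemma hy_ne (hpy : p < y) (hpB : p ∈ π.part y) : ((π.part y).erase y).Nonempty :=
  ⟨p, mem_erase.mpr ⟨ne_of_lt hpy, hpB⟩⟩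

lemma min'_erase_y (hpy : p < y) (hpB : p ∈ π.part y)
    (h2 : ((π.part y).erase y).Nonempty) (h3 : (π.part y).Nonempty) :
    ((π.part y).erase y).min' h2 = (π.part y).min' h3 := by
  apply le_antisymm
  · apply min'_le
    refine mem_erase.mpr ⟨?_, min'_mem _ h3⟩
    have : (π.part y).min' h3 ≤ p := min'_le _ p hpB
    exact ne_of_lt (lt_of_le_of_lt this hpy)
  · exact min'_le _ _ (mem_of_mem_erase (min'_mem _ h2))

lemma nb_split_p (hpy : p < y) (hpB : p ∈ π.part y)
    (hsing : ∀ z : Fin n, p < z → z < y → π.part z = {z}) :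
    nextInBlock (splitFP (hy_ne hpy hpB)) p = nextInBlock π y := by
  set hy := hy_ne hpy hpB
  have hpart : (splitFP hy).part p = (π.part y).erase y :=
    splitFP_part_of_mem hy hpB (ne_of_lt hpy)
  have hfeq : ((π.part y).erase y).filter (fun j => p < j) =
      (π.part y).filter (fun j => y < j) := by
    ext x
    simp only [mem_filter, mem_erase]
    constructor
    · rintro ⟨⟨hxy, hxB⟩, hpx⟩
      refine ⟨hxB, ?_⟩
      rcases lt_or_ge y x with h | h
      · exact h
      · exact absurd ⟨hpx, lt_of_le_of_ne h hxy⟩ (hBIoo hsing x hxB)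
    · rintro ⟨hxB, hyx⟩
      exact ⟨⟨ne_of_gt hyx, hxB⟩, lt_trans hpy hyx⟩
  unfold nextInBlock
  rw [hpart, hfeq]
  by_cases hne : ((π.part y).filter (fun j => y < j)).Nonempty
  · rw [dif_pos hne, dif_pos hne]
  · rw [dif_neg hne, dif_neg hne, dif_pos (hy_ne hpy hpB), dif_pos ⟨y, mem_own_part π y⟩]
    exact min'_erase_y hpy hpB _ _

lemma nb_split_y (hpy : p < y) (hpB : p ∈ π.part y) :
    nextInBlock (splitFP (hy_ne hpy hpB)) y = y :=
  nextInBlock_singleton _ (splitFP_part_y (hy_ne hpy hpB))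

lemma nb_split_other (hpy : p < y) (hpB : p ∈ π.part y)
    (hsing : ∀ z : Fin n, p < z → z < y → π.part z = {z})
    {z : Fin n} (hzp : z ≠ p) (hzy : z ≠ y) :
    nextInBlock (splitFP (hy_ne hpy hpB)) z = nextInBlock π z := by
  set hy := hy_ne hpy hpB
  by_cases hzB : z ∈ π.part y
  · -- z in the block, z ≠ p, z ≠ y
    have hpart : (splitFP hy).part z = (π.part y).erase y := splitFP_part_of_mem hy hzB hzy
    have hpartz : π.part z = π.part y := π.part_eq_of_mem (π.part_mem.mpr (mem_univ y)) hzB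
    have hz_not_ioo : ¬(p < z ∧ z < y) := hBIoo hsing z hzB
    unfold nextInBlock
    rw [hpart, hpartz]
    rcases lt_trichotomy z y with hlt | heq | hgt
    · -- z < y so z < p
      have hzp' : z < p := by
        rcases lt_trichotomy z p with h | h | h
        · exact h
        · exact absurd h hzp
        · exact absurd ⟨h, hlt⟩ hz_not_ioo
      have hne1 : (((π.part y).erase y).filter (fun j => z < j)).Nonempty :=
        ⟨p, mem_filter.mpr ⟨mem_erase.mpr ⟨ne_of_lt hpy, hpB⟩, hzp'⟩⟩
      have hne2 : ((π.part y).filter (fun j => z < j)).Nonempty :=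
        ⟨p, mem_filter.mpr ⟨hpB, hzp'⟩⟩
      rw [dif_pos hne1, dif_pos hne2]
      apply le_antisymm
      · apply min'_le
        refine mem_filter.mpr ⟨mem_erase.mpr ⟨?_, (mem_filter.mp (min'_mem _ hne2)).1⟩,
          (mem_filter.mp (min'_mem _ hne2)).2⟩
        have hle : ((π.part y).filter (fun j => z < j)).min' hne2 ≤ p :=
          min'_le _ p (mem_filter.mpr ⟨hpB, hzp'⟩)
        exact ne_of_lt (lt_of_le_of_lt hle hpy)
      · apply min'_le
        exact mem_filter.mpr ⟨mem_of_mem_erase (mem_filter.mp (min'_mem _ hne1)).1,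
          (mem_filter.mp (min'_mem _ hne1)).2⟩
    · exact absurd heq hzy
    · -- z > y
      have hfeq : ((π.part y).erase y).filter (fun j => z < j) =
          (π.part y).filter (fun j => z < j) := by
        ext x
        simp only [mem_filter, mem_erase]
        constructor
        · rintro ⟨⟨_, hxB⟩, hzx⟩; exact ⟨hxB, hzx⟩
        · rintro ⟨hxB, hzx⟩; exact ⟨⟨ne_of_gt (lt_trans hgt hzx), hxB⟩, hzx⟩
      rw [hfeq]
      by_cases hne : ((π.part y).filter (fun j => z < j)).Nonempty
      · rw [dif_pos hne, dif_pos hne]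
      · rw [dif_neg hne, dif_neg hne, dif_pos (hy_ne hpy hpB), dif_pos ⟨y, mem_own_part π y⟩]
        exact min'_erase_y hpy hpB _ _
  · exact (nextInBlock_congr (splitFP hy) π z (splitFP_part_of_not_mem hy hzB)).symm
    |>.symm ▸ nextInBlock_congr _ π z (splitFP_part_of_not_mem hy hzB)

lemma lm_split_p (hpy : p < y) (hpB : p ∈ π.part y)
    (hsing : ∀ z : Fin n, p < z → z < y → π.part z = {z}) :
    loopMap (splitFP (hy_ne hpy hpB)) p = loopMap π y := by
  apply Fin.ext
  show ((nextInBlock (splitFP (hy_ne hpy hpB)) p).val + n - 1) % n = _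
  rw [nb_split_p hpy hpB hsing]
  rfl

lemma lm_p (hpy : p < y) (hpB : p ∈ π.part y)
    (hsing : ∀ z : Fin n, p < z → z < y → π.part z = {z}) :
    loopMap π p = ⟨y.val - 1, by omega⟩ :=
  loopMap_of_nb π (nb_p hpy hpB hsing) (by
    have := hpy; rw [Fin.lt_def] at this; omega)

lemma lm_split_y (hpy : p < y) (hpB : p ∈ π.part y)
    (hsing : ∀ z : Fin n, p < z → z < y → π.part z = {z}) :
    loopMap (splitFP (hy_ne hpy hpB)) y = loopMap π p := by
  rw [lm_p hpy hpB hsing]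
  exact loopMap_of_nb _ (nb_split_y hpy hpB) (by
    have := hpy; rw [Fin.lt_def] at this; omega)

lemma lm_split_other (hpy : p < y) (hpB : p ∈ π.part y)
    (hsing : ∀ z : Fin n, p < z → z < y → π.part z = {z})
    {z : Fin n} (hzp : z ≠ p) (hzy : z ≠ y) :
    loopMap (splitFP (hy_ne hpy hpB)) z = loopMap π z := by
  apply Fin.ext
  show ((nextInBlock (splitFP (hy_ne hpy hpB)) z).val + n - 1) % n = _
  rw [nb_split_other hpy hpB hsing hzp hzy]
  rfl

end Step
section Count

lemma count_merge {n : ℕ} (S S' : Fin n → Fin n → Prop) (p y : Fin n)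
    (Srefl : ∀ a, S a a) (Ssymm : ∀ a b, S a b → S b a)
    (Strans : ∀ a b c, S a b → S b c → S a c)
    (hSpy : ¬ S p y)
    (hiff : ∀ a b, S' a b ↔ (S a b ∨ (S a p ∧ S y b) ∨ (S a y ∧ S p b))) :
    (Finset.univ.filter fun i => ∀ j, S i j → i ≤ j).card
      = (Finset.univ.filter fun i => ∀ j, S' i j → i ≤ j).card + 1 := by
  set M := (Finset.univ.filter fun i => ∀ j, S i j → i ≤ j) with hMdef
  set M' := (Finset.univ.filter fun i => ∀ j, S' i j → i ≤ j) with hM'def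
  have memM : ∀ i, i ∈ M ↔ ∀ j, S i j → i ≤ j := by
    intro i; rw [hMdef, mem_filter]; exact ⟨fun h => h.2, fun h => ⟨mem_univ i, h⟩⟩
  have memM' : ∀ i, i ∈ M' ↔ ∀ j, S' i j → i ≤ j := by
    intro i; rw [hM'def, mem_filter]; exact ⟨fun h => h.2, fun h => ⟨mem_univ i, h⟩⟩
  have hc1ne : (Finset.univ.filter fun j => S p j).Nonempty :=
    ⟨p, mem_filter.mpr ⟨mem_univ _, Srefl p⟩⟩
  have hc2ne : (Finset.univ.filter fun j => S y j).Nonempty :=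
    ⟨y, mem_filter.mpr ⟨mem_univ _, Srefl y⟩⟩
  set c1 := (Finset.univ.filter fun j => S p j).min' hc1ne with hc1def
  set c2 := (Finset.univ.filter fun j => S y j).min' hc2ne with hc2def
  have hc1 : S p c1 := (mem_filter.mp (min'_mem _ hc1ne)).2
  have hc2 : S y c2 := (mem_filter.mp (min'_mem _ hc2ne)).2
  have hc1le : ∀ j, S p j → c1 ≤ j := fun j hj => min'_le _ j (mem_filter.mpr ⟨mem_univ _, hj⟩)
  have hc2le : ∀ j, S y j → c2 ≤ j := fun j hj => min'_le _ j (mem_filter.mpr ⟨mem_univ _, hj⟩)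
  have hne12 : c1 ≠ c2 := by
    intro h
    exact hSpy (Strans _ _ _ hc1 (h ▸ Ssymm _ _ hc2))
  -- generic claim, applied to the ordering of c1, c2
  have claim : ∀ (q z cq cz : Fin n), S q cq → S z cz → (∀ j, S q j → cq ≤ j) →
      (∀ j, S z j → cz ≤ j) → ¬ S q z → cq < cz →
      (∀ a b, S' a b ↔ (S a b ∨ (S a q ∧ S z b) ∨ (S a z ∧ S q b))) →
      M' = M.erase cz := by
    intro q z cq cz hcq hcz hcqle hczle hqz hlt hiff'
    ext i
    rw [Finset.mem_erase, memM', memM]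
    by_cases hiq : S i q
    · by_cases hiz : S i z
      · exact absurd (Strans _ _ _ (Ssymm _ _ hiq) hiz) hqz
      · -- i in class of q; both sides ↔ i = cq
        have hL : (∀ j, S' i j → i ≤ j) ↔ i = cq := by
          constructor
          · intro h
            refine le_antisymm (h cq ((hiff' i cq).mpr (Or.inl (Strans _ _ _ hiq hcq))))
              (hcqle i (Ssymm _ _ hiq))
          · rintro rfl
            intro j hj
            rcases (hiff' _ j).mp hj with h | ⟨_, h⟩ | ⟨hqz', _⟩
            · exact hcqle j (Strans _ _ _ hcq h)
            · exact le_trans (le_of_lt hlt) (hczle j h)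
            · exact absurd (Strans _ _ _ hcq hqz') hqz
        have hR : (∀ j, S i j → i ≤ j) ↔ i = cq := by
          constructor
          · intro h
            exact le_antisymm (h cq (Strans _ _ _ hiq hcq)) (hcqle i (Ssymm _ _ hiq))
          · rintro rfl
            intro j hj
            exact hcqle j (Strans _ _ _ hcq hj)
        rw [hL, hR]
        constructor
        · rintro rfl
          exact ⟨ne_of_lt hlt, rfl⟩
        · rintro ⟨_, rfl⟩; rfl
      -- done hiq case
    · by_cases hiz : S i z
      · -- i in class of z: i ∉ M' ; i ∈ M ↔ i = cz
        have hL : ¬ (∀ j, S' i j → i ≤ j) := by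
          intro h
          have h1 : i ≤ cq := h cq ((hiff' i cq).mpr (Or.inr (Or.inr ⟨hiz, hcq⟩)))
          have h2 : cz ≤ i := hczle i (Ssymm _ _ hiz)
          exact absurd (lt_of_lt_of_le hlt (le_trans h2 h1)) (lt_irrefl _)
        have hR : (∀ j, S i j → i ≤ j) ↔ i = cz := by
          constructor
          · intro h
            exact le_antisymm (h cz (Strans _ _ _ hiz hcz)) (hczle i (Ssymm _ _ hiz))
          · rintro rfl
            intro j hj
            exact hczle j (Strans _ _ _ hcz hj)
        simp only [hL, hR, false_iff]
        rintro ⟨hne, rfl⟩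
        exact hne rfl
      · -- i in neither class
        have hL : (∀ j, S' i j → i ≤ j) ↔ (∀ j, S i j → i ≤ j) := by
          constructor
          · intro h j hj
            exact h j ((hiff' i j).mpr (Or.inl hj))
          · intro h j hj
            rcases (hiff' i j).mp hj with h' | ⟨h', _⟩ | ⟨h', _⟩
            · exact h j h'
            · exact absurd h' hiq
            · exact absurd h' hiz
        rw [hL]
        constructor
        · intro h
          refine ⟨?_, h⟩
          rintro rfl
          exact hiz (Ssymm _ _ hcz)
        · exact fun h => h.2
  have hczM : ∀ (z cz : Fin n), S z cz → (∀ j, S z j → cz ≤ j) → cz ∈ M := by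
    intro z cz hcz hczle
    rw [memM]
    intro j hj
    exact hczle j (Strans _ _ _ hcz hj)
  rcases lt_or_gt_of_ne hne12 with hlt | hlt
  · have he := claim p y c1 c2 hc1 hc2 hc1le hc2le hSpy hlt hiff
    rw [he, Finset.card_erase_of_mem (hczM y c2 hc2 hc2le)]
    have : 1 ≤ M.card := Finset.card_pos.mpr ⟨c2, hczM y c2 hc2 hc2le⟩
    omega
  · have hSyp : ¬ S y p := fun h => hSpy (Ssymm _ _ h)
    have hiff' : ∀ a b, S' a b ↔ (S a b ∨ (S a y ∧ S p b) ∨ (S a p ∧ S y b)) := by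
      intro a b
      rw [hiff a b]
      tauto
    have he := claim y p c2 c1 hc2 hc1 hc2le hc1le hSyp hlt hiff'
    rw [he, Finset.card_erase_of_mem (hczM p c1 hc1 hc1le)]
    have : 1 ≤ M.card := Finset.card_pos.mpr ⟨c1, hczM p c1 hc1 hc1le⟩
    omega

end Count
section Rel
variable {n : ℕ} {π : Finpartition (Finset.univ : Finset (Fin n))} {p y : Fin n}

/-- descending chain from y to any j in [p, y] for the split partition -/
lemma chain_split (hpy : p < y) (hpB : p ∈ π.part y)
    (hsing : ∀ z : Fin n, p < z → z < y → π.part z = {z}) :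
    ∀ d (j : Fin n), p.val ≤ j.val → j.val + d = y.val →
      Relation.EqvGen (fun a b => loopMap (splitFP (hy_ne hpy hpB)) a = b) y j := by
  intro d
  induction d with
  | zero =>
    intro j _ h2
    have : j = y := Fin.ext (by omega)
    rw [this]
    exact Relation.EqvGen.refl y
  | succ d IH =>
    intro j h1 h2
    have hj1 : j.val + 1 < n := by have := y.isLt; omega
    have hIH := IH ⟨j.val + 1, hj1⟩ (by simp; omega) (by simp; omega)
    refine Relation.EqvGen.trans _ _ _ hIH (Relation.EqvGen.rel _ _ ?_)
    by_cases hj1y : (⟨j.val + 1, hj1⟩ : Fin n) = y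
    · rw [hj1y, lm_split_y hpy hpB hsing, lm_p hpy hpB hsing]
      have h3 : j.val + 1 = y.val := by rw [← hj1y]
      apply Fin.ext
      show y.val - 1 = j.val
      omega
    · have hlt : (⟨j.val + 1, hj1⟩ : Fin n) < y := by
        rw [Fin.lt_def]
        have hle : j.val + 1 ≤ y.val := by omega
        rcases lt_or_eq_of_le hle with h | h
        · exact h
        · exact absurd (Fin.ext h) hj1y
      have hgt : p < (⟨j.val + 1, hj1⟩ : Fin n) := by rw [Fin.lt_def]; simp; omega
      have hnp : (⟨j.val + 1, hj1⟩ : Fin n) ≠ p := ne_of_gt hgt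
      rw [lm_split_other hpy hpB hsing hnp hj1y]
      have hs := hsing _ hgt hlt
      rw [loopMap_of_nb π (nextInBlock_singleton π hs) (by simp)]
      apply Fin.ext
      simp

lemma S'py (hpy : p < y) (hpB : p ∈ π.part y)
    (hsing : ∀ z : Fin n, p < z → z < y → π.part z = {z}) :
    Relation.EqvGen (fun a b => loopMap (splitFP (hy_ne hpy hpB)) a = b) p y := by
  have hle : p.val ≤ y.val := le_of_lt hpy
  exact Relation.EqvGen.symm _ _
    (chain_split hpy hpB hsing (y.val - p.val) p (le_refl _) (by omega))

lemma S_le_S' (hpy : p < y) (hpB : p ∈ π.part y)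
    (hsing : ∀ z : Fin n, p < z → z < y → π.part z = {z}) :
    ∀ a b, Relation.EqvGen (fun a b => loopMap π a = b) a b →
      Relation.EqvGen (fun a b => loopMap (splitFP (hy_ne hpy hpB)) a = b) a b := by
  intro a b h
  induction h with
  | rel a b hab =>
    by_cases hap : a = p
    · subst hap
      refine Relation.EqvGen.trans _ _ _ (S'py hpy hpB hsing) (Relation.EqvGen.rel _ _ ?_)
      rw [lm_split_y hpy hpB hsing]
      exact hab
    · by_cases hay : a = y
      · subst hay
        refine Relation.EqvGen.trans _ _ _
          (Relation.EqvGen.symm _ _ (S'py hpy hpB hsing)) (Relation.EqvGen.rel _ _ ?_)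
        rw [lm_split_p hpy hpB hsing]
        exact hab
      · exact Relation.EqvGen.rel _ _ (by rw [lm_split_other hpy hpB hsing hap hay]; exact hab)
  | refl a => exact Relation.EqvGen.refl a
  | symm a b _ ih => exact Relation.EqvGen.symm _ _ ih
  | trans a b c _ _ ih1 ih2 => exact Relation.EqvGen.trans _ _ _ ih1 ih2

/-- the interval [p, y-1] is a union of classes of S -/
lemma inv_interval (hpy : p < y) (hpB : p ∈ π.part y)
    (hsing : ∀ z : Fin n, p < z → z < y → π.part z = {z}) :
    ∀ a b, Relation.EqvGen (fun a b => loopMap π a = b) a b →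
      ((p.val ≤ a.val ∧ a.val < y.val) ↔ (p.val ≤ b.val ∧ b.val < y.val)) := by
  intro a b h
  induction h with
  | refl a => exact Iff.rfl
  | symm a b _ ih => exact ih.symm
  | trans a b c _ _ ih1 ih2 => exact ih1.trans ih2
  | rel a b hab =>
    constructor
    · rintro ⟨h1, h2⟩
      by_cases hap : a = p
      · subst hap
        rw [lm_p hpy hpB hsing] at hab
        rw [← hab]
        have hpylt : a.val < y.val := hpy
        simp
        omega
      · have hpa : p < a := by
          rw [Fin.lt_def]
          rcases lt_or_eq_of_le h1 with h | h
          · exact h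
          · exact absurd (Fin.ext h.symm) hap
        have hs := hsing a hpa (Fin.lt_def.mpr h2)
        have ha1 : 1 ≤ a.val := by
          have : p.val < a.val := hpa
          omega
        rw [loopMap_of_nb π (nextInBlock_singleton π hs) ha1] at hab
        rw [← hab]
        simp
        have : p.val < a.val := hpa
        omega
    · rintro ⟨h1, h2⟩
      by_contra hna
      have hb1 : b.val + 1 < n := by have := y.isLt; omega
      have hnb : (nextInBlock π a).val = b.val + 1 := nb_val_of_loopMap π hab hb1
      have hw : nextInBlock π a ∈ π.part a := nextInBlock_mem π a
      by_cases hwy : b.val + 1 = y.val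
      · -- nextInBlock π a = y
        have hnby : nextInBlock π a = y := Fin.ext (by rw [hnb]; exact hwy)
        rw [hnby] at hw
        have haB : π.part y = π.part a := π.part_eq_of_mem (π.part_mem.mpr (mem_univ a)) hw
        have hpa : p ∈ π.part a := haB ▸ hpB
        have haa : a ∈ π.part y := haB ▸ mem_own_part π a
        have hnotIoo := hBIoo hsing a haa
        -- a ∉ [p,y): a < p or a ≥ y
        rcases lt_or_ge a.val p.val with hcase | hcase
        · -- a < p : nextInBlock π a ≤ p < y, contradiction
          have hne : ((π.part a).filter (fun j => a < j)).Nonempty :=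
            ⟨p, mem_filter.mpr ⟨hpa, Fin.lt_def.mpr hcase⟩⟩
          have hle : nextInBlock π a ≤ p := by
            unfold nextInBlock
            rw [dif_pos hne]
            exact min'_le _ p (mem_filter.mpr ⟨hpa, Fin.lt_def.mpr hcase⟩)
          rw [hnby] at hle
          exact absurd (lt_of_le_of_lt hle hpy) (lt_irrefl _)
        · have hay : y.val ≤ a.val := by omega
          by_cases hne : ((π.part a).filter (fun j => a < j)).Nonempty
          · have hmm : nextInBlock π a ∈ (π.part a).filter (fun j => a < j) := by
              unfold nextInBlock
              rw [dif_pos hne]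
              exact min'_mem _ hne
            have : a < nextInBlock π a := (mem_filter.mp hmm).2
            rw [hnby] at this
            have : y.val ≤ a.val ∧ a.val < y.val := ⟨hay, this⟩
            omega
          · have hle : nextInBlock π a ≤ p := by
              unfold nextInBlock
              rw [dif_neg hne, dif_pos ⟨a, mem_own_part π a⟩]
              exact min'_le _ p hpa
            rw [hnby] at hle
            exact absurd (lt_of_le_of_lt hle hpy) (lt_irrefl _)
      · -- p < b+1 < y : nextInBlock π a is an interior singleton
        have hw1 : p.val < b.val + 1 := by omega
        have hw2 : b.val + 1 < y.val := by
          have : b.val + 1 ≤ y.val := by omega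
          omega
        have hpw : p < nextInBlock π a := Fin.lt_def.mpr (by rw [hnb]; exact hw1)
        have hwy' : nextInBlock π a < y := Fin.lt_def.mpr (by rw [hnb]; exact hw2)
        have hs := hsing _ hpw hwy'
        have hpeq : π.part (nextInBlock π a) = π.part a :=
          π.part_eq_of_mem (π.part_mem.mpr (mem_univ a)) hw
        rw [hs] at hpeq
        have : a ∈ ({nextInBlock π a} : Finset (Fin n)) := hpeq ▸ mem_own_part π a
        have haw : a = nextInBlock π a := mem_singleton.mp this
        apply hna
        constructor
        · rw [haw, hnb]; omega
        · rw [haw, hnb]; omega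

lemma notSpy (hpy : p < y) (hpB : p ∈ π.part y)
    (hsing : ∀ z : Fin n, p < z → z < y → π.part z = {z}) :
    ¬ Relation.EqvGen (fun a b => loopMap π a = b) p y := by
  intro h
  have := (inv_interval hpy hpB hsing p y h).mp ⟨le_refl _, hpy⟩
  omega

/-- forward inclusion: S' is contained in the merge of S-classes of p and y -/
lemma S'_le_T (hpy : p < y) (hpB : p ∈ π.part y)
    (hsing : ∀ z : Fin n, p < z → z < y → π.part z = {z}) :
    ∀ a b, Relation.EqvGen (fun a b => loopMap (splitFP (hy_ne hpy hpB)) a = b) a b →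
      (Relation.EqvGen (fun a b => loopMap π a = b) a b ∨
        (Relation.EqvGen (fun a b => loopMap π a = b) a p ∧
          Relation.EqvGen (fun a b => loopMap π a = b) y b) ∨
        (Relation.EqvGen (fun a b => loopMap π a = b) a y ∧
          Relation.EqvGen (fun a b => loopMap π a = b) p b)) := by
  set S := Relation.EqvGen (fun a b => loopMap π a = b) with hS
  have hSpy : ¬ S p y := notSpy hpy hpB hsing
  have Ssymm : ∀ a b, S a b → S b a := fun a b h => Relation.EqvGen.symm _ _ h
  have Strans : ∀ a b c, S a b → S b c → S a c := fun a b c h1 h2 =>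
    Relation.EqvGen.trans _ _ _ h1 h2
  intro a b h
  induction h with
  | rel a b hab =>
    by_cases hap : a = p
    · subst hap
      rw [lm_split_p hpy hpB hsing] at hab
      exact Or.inr (Or.inl ⟨Relation.EqvGen.refl a, Relation.EqvGen.rel _ _ hab⟩)
    · by_cases hay : a = y
      · subst hay
        rw [lm_split_y hpy hpB hsing] at hab
        exact Or.inr (Or.inr ⟨Relation.EqvGen.refl a, Relation.EqvGen.rel _ _ hab⟩)
      · rw [lm_split_other hpy hpB hsing hap hay] at hab
        exact Or.inl (Relation.EqvGen.rel _ _ hab)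
  | refl a => exact Or.inl (Relation.EqvGen.refl a)
  | symm a b _ ih =>
    rcases ih with h | ⟨h1, h2⟩ | ⟨h1, h2⟩
    · exact Or.inl (Ssymm _ _ h)
    · exact Or.inr (Or.inr ⟨Ssymm _ _ h2, Ssymm _ _ h1⟩)
    · exact Or.inr (Or.inl ⟨Ssymm _ _ h2, Ssymm _ _ h1⟩)
  | trans a b c _ _ ih1 ih2 =>
    rcases ih1 with h | ⟨h1, h2⟩ | ⟨h1, h2⟩ <;> rcases ih2 with h' | ⟨h1', h2'⟩ | ⟨h1', h2'⟩
    · exact Or.inl (Strans _ _ _ h h')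
    · exact Or.inr (Or.inl ⟨Strans _ _ _ h h1', h2'⟩)
    · exact Or.inr (Or.inr ⟨Strans _ _ _ h h1', h2'⟩)
    · exact Or.inr (Or.inl ⟨h1, Strans _ _ _ h2 h'⟩)
    · exact absurd (Ssymm _ _ (Strans _ _ _ h2 h1')) hSpy
    · exact Or.inl (Strans _ _ _ h1 h2')
    · exact Or.inr (Or.inr ⟨h1, Strans _ _ _ h2 h'⟩)
    · exact Or.inl (Strans _ _ _ h1 h2')
    · exact absurd (Strans _ _ _ h2 h1') hSpy

end Rel
section Main
variable {n : ℕ}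

lemma all_singleton_of_card (π : Finpartition (Finset.univ : Finset (Fin n)))
    (hc : π.parts.card = n) : ∀ i : Fin n, π.part i = {i} := by
  have hsum : ∑ t ∈ π.parts, t.card = n := by
    rw [π.sum_card_parts, Finset.card_univ, Fintype.card_fin]
  have h1 : ∀ t ∈ π.parts, 1 ≤ t.card :=
    fun t ht => Finset.card_pos.mpr (π.nonempty_of_mem_parts ht)
  have h0 : ∀ t ∈ π.parts, t.card = 1 := by
    have e : ∑ t ∈ π.parts, t.card = ∑ t ∈ π.parts, ((t.card - 1) + 1) :=
      Finset.sum_congr rfl (fun t ht => by have := h1 t ht; omega)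
    rw [e, Finset.sum_add_distrib, Finset.sum_const, smul_eq_mul, mul_one, hc] at hsum
    have hz : ∑ t ∈ π.parts, (t.card - 1) = 0 := by omega
    intro t ht
    have := (Finset.sum_eq_zero_iff).mp hz t ht
    have := h1 t ht
    omega
  intro i
  have hp := π.part_mem.mpr (mem_univ i)
  obtain ⟨a, ha⟩ := Finset.card_eq_one.mp (h0 _ hp)
  have hi : i ∈ π.part i := mem_own_part π i
  rw [ha] at hi ⊢
  rw [mem_singleton.mp hi]

lemma numLoops_of_all_singleton (hn : n ≠ 0) (π : Finpartition (Finset.univ : Finset (Fin n)))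
    (h : ∀ i : Fin n, π.part i = {i}) : numLoops π = 2 := by
  have hpos : 0 < n := Nat.pos_of_ne_zero hn
  set S := Relation.EqvGen (fun a b => loopMap π a = b) with hSdef
  have hS0 : ∀ (m : ℕ) (i : Fin n), i.val = m → S i ⟨0, hpos⟩ := by
    intro m
    induction m with
    | zero =>
      intro i hi
      have : i = ⟨0, hpos⟩ := Fin.ext hi
      rw [this]
      exact Relation.EqvGen.refl _
    | succ m IHm =>
      intro i hi
      have hm : m < n := by have := i.isLt; omega
      have hlm : loopMap π i = ⟨m, hm⟩ := by
        rw [loopMap_of_nb π (nextInBlock_singleton π (h i)) (by omega)]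
        exact Fin.ext (by simp [hi])
      exact Relation.EqvGen.trans _ _ _ (Relation.EqvGen.rel _ _ hlm) (IHm ⟨m, hm⟩ rfl)
  have hfil : (Finset.univ.filter fun i : Fin n =>
      ∀ j, Relation.EqvGen (fun a b => loopMap π a = b) i j → i ≤ j) = {⟨0, hpos⟩} := by
    ext i
    rw [mem_filter, mem_singleton]
    constructor
    · rintro ⟨-, hi⟩
      have h2 := Fin.le_def.mp (hi ⟨0, hpos⟩ (hS0 i.val i rfl))
      have h3 : (⟨0, hpos⟩ : Fin n).val = 0 := rfl
      exact Fin.ext (by omega)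
    · rintro rfl
      refine ⟨mem_univ _, ?_⟩
      intro j _
      exact Fin.le_def.mpr (by simp)
  unfold numLoops
  rw [hfil, Finset.card_singleton]

lemma main_lemma (hn : n ≠ 0) :
    ∀ k (π : Finpartition (Finset.univ : Finset (Fin n))), IsNC π.parts →
      n - π.parts.card = k → numLoops π = n - π.parts.card + 2 := by
  intro k
  induction k using Nat.strong_induction_on with
  | _ k IH =>
    intro π hπ hk
    have hcard_le : π.parts.card ≤ n := by
      have := π.card_parts_le_card
      rwa [Finset.card_univ, Fintype.card_fin] at this
    rcases Nat.eq_zero_or_pos k with rfl | hkpos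
    · have hc : π.parts.card = n := by omega
      rw [numLoops_of_all_singleton hn π (all_singleton_of_card π hc), hc]
      omega
    · have hclt : π.parts.card < n := by omega
      -- there is a pair of distinct elements in a common part
      have hex : ∃ q : Fin n × Fin n, q.1 < q.2 ∧ π.part q.1 = π.part q.2 := by
        by_contra hno
        push_neg at hno
        have hall : ∀ i : Fin n, π.part i = {i} := by
          intro i
          refine Finset.eq_singleton_iff_unique_mem.mpr ⟨mem_own_part π i, ?_⟩
          intro w hw
          by_contra hwi
          have hww : π.part w = π.part i := π.part_eq_of_mem (π.part_mem.mpr (mem_univ i)) hw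
          rcases lt_or_gt_of_ne hwi with hlt | hgt
          · exact hno (w, i) hlt hww
          · exact hno (i, w) hgt hww.symm
        have hparts : π.parts = Finset.univ.image (fun i : Fin n => ({i} : Finset (Fin n))) := by
          ext t
          rw [Finset.mem_image]
          constructor
          · intro ht
            obtain ⟨i, hi⟩ := π.nonempty_of_mem_parts ht
            refine ⟨i, mem_univ _, ?_⟩
            rw [← hall i]
            exact π.part_eq_of_mem ht hi
          · rintro ⟨i, -, rfl⟩
            rw [← hall i]
            exact π.part_mem.mpr (mem_univ i)
        have : π.parts.card = n := by
          rw [hparts, Finset.card_image_of_injective _ Finset.singleton_injective,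
            Finset.card_univ, Fintype.card_fin]
        omega
      set Q := (Finset.univ ×ˢ Finset.univ : Finset (Fin n × Fin n)).filter
        (fun q => q.1 < q.2 ∧ π.part q.1 = π.part q.2) with hQdef
      have hQne : Q.Nonempty := by
        obtain ⟨q, hq1, hq2⟩ := hex
        exact ⟨q, mem_filter.mpr ⟨Finset.mem_product.mpr ⟨mem_univ _, mem_univ _⟩, hq1, hq2⟩⟩
      obtain ⟨q, hqQ, hqmin⟩ := Finset.exists_min_image Q (fun q => q.2.val - q.1.val) hQne
      obtain ⟨-, hpy, hpeq⟩ := mem_filter.mp hqQ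
      set p := q.1 with hpdef
      set y := q.2 with hydef
      have hpB : p ∈ π.part y := hpeq ▸ mem_own_part π p
      have hsing : ∀ z : Fin n, p < z → z < y → π.part z = {z} := by
        intro z h1 h2
        refine Finset.eq_singleton_iff_unique_mem.mpr ⟨mem_own_part π z, ?_⟩
        intro w hw
        by_contra hwz
        have hww : π.part w = π.part z := π.part_eq_of_mem (π.part_mem.mpr (mem_univ z)) hw
        by_cases hzB : π.part z = π.part y
        · have hin : (p, z) ∈ Q := mem_filter.mpr ⟨Finset.mem_product.mpr ⟨mem_univ _, mem_univ _⟩,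
            h1, hpeq.trans hzB.symm⟩
          have := hqmin (p, z) hin
          have hv1 : p.val < z.val := h1
          have hv2 : z.val < y.val := h2
          have hv3 : p.val < y.val := hpy
          simp only at this
          omega
        · have hwp : w ≠ p := by
            rintro rfl
            exact hzB (hww.symm.trans hpeq)
          have hwy : w ≠ y := by
            rintro rfl
            exact hzB hww.symm
          -- position of w
          rcases lt_or_gt_of_ne hwp with hw1 | hw1
          · -- w < p < z < y : crossing with part z and part y
            exact hπ w z p y hw1 h1 h2 (π.part z) (π.part_mem.mpr (mem_univ z)) (π.part y)
              (π.part_mem.mpr (mem_univ y)) hzB hw (mem_own_part π z) hpB (mem_own_part π y)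
          · rcases lt_or_gt_of_ne hwy with hw2 | hw2
            · -- p < w < y, w ≠ z : smaller pair in part z
              have hq' : (min w z, max w z) ∈ Q := by
                refine mem_filter.mpr ⟨Finset.mem_product.mpr ⟨mem_univ _, mem_univ _⟩, ?_, ?_⟩
                · rcases lt_or_gt_of_ne hwz with h | h
                  · simp [min_eq_left (le_of_lt h), max_eq_right (le_of_lt h), h]
                  · simp [min_eq_right (le_of_lt h), max_eq_left (le_of_lt h), h]
                · rcases lt_or_gt_of_ne hwz with h | h
                  · rw [min_eq_left (le_of_lt h), max_eq_right (le_of_lt h)]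
                    exact hww
                  · rw [min_eq_right (le_of_lt h), max_eq_left (le_of_lt h)]
                    exact hww.symm
              have := hqmin _ hq'
              simp only at this
              have hv1 : p.val < w.val := hw1
              have hv2 : w.val < y.val := hw2
              have hv3 : p.val < z.val := h1
              have hv4 : z.val < y.val := h2
              have hv5 : w.val ≠ z.val := fun h => hwz (Fin.ext h)
              rcases le_total w z with h | h
              · rw [min_eq_left h, max_eq_right h] at this
                have : y.val - p.val ≤ z.val - w.val := this
                omega
              · rw [min_eq_right h, max_eq_left h] at this
                have : y.val - p.val ≤ w.val - z.val := this
                omega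
            · -- p < z < y < w : crossing
              exact hπ p y z w h1 h2 hw2 (π.part y) (π.part_mem.mpr (mem_univ y)) (π.part z)
                (π.part_mem.mpr (mem_univ z)) (Ne.symm hzB) hpB (mem_own_part π y) (mem_own_part π z) hw
      -- build the split partition
      have hπ' : IsNC (splitFP (hy_ne hpy hpB)).parts := splitFP_isNC (hy_ne hpy hpB) hπ
      have hcard' : (splitFP (hy_ne hpy hpB)).parts.card = π.parts.card + 1 :=
        splitFP_card (hy_ne hpy hpB)
      have hIH := IH (k - 1) (by omega) (splitFP (hy_ne hpy hpB)) hπ' (by omega)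
      have hcount := count_merge
        (Relation.EqvGen (fun a b => loopMap π a = b))
        (Relation.EqvGen (fun a b => loopMap (splitFP (hy_ne hpy hpB)) a = b))
        p y
        (fun a => Relation.EqvGen.refl a)
        (fun a b h => Relation.EqvGen.symm _ _ h)
        (fun a b c h1 h2 => Relation.EqvGen.trans _ _ _ h1 h2)
        (notSpy hpy hpB hsing)
        (by
          intro a b
          constructor
          · exact S'_le_T hpy hpB hsing a b
          · rintro (h | ⟨h1, h2⟩ | ⟨h1, h2⟩)
            · exact S_le_S' hpy hpB hsing a b h
            · exact Relation.EqvGen.trans _ _ _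
                (Relation.EqvGen.trans _ _ _ (S_le_S' hpy hpB hsing a p h1)
                  (S'py hpy hpB hsing))
                (S_le_S' hpy hpB hsing y b h2)
            · exact Relation.EqvGen.trans _ _ _
                (Relation.EqvGen.trans _ _ _ (S_le_S' hpy hpB hsing a y h1)
                  (Relation.EqvGen.symm _ _ (S'py hpy hpB hsing)))
                (S_le_S' hpy hpB hsing p b h2))
      unfold numLoops at hIH ⊢
      rw [hcard'] at hIH
      omega

end Main

/-- for a non-crossing partition `π` of `{1,...,n}`, the number of loops
of the closure `L(π)` of the Temperley–Lieb diagram `TL(π)` satisfies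
`N(π) − 2 = n − |π|`, i.e. `N(π) = n − |π| + 2`. -/
theorem stmt_6 (n : ℕ) (hn : n ≠ 0) (π : Finpartition (Finset.univ : Finset (Fin n)))
    (hπ : IsNC π.parts) :
    numLoops π = n - π.parts.card + 2 ∧ numLoops π - 2 = n - π.parts.card := by
  have h := main_lemma hn (n - π.parts.card) π hπ rfl
  exact ⟨h, by omega⟩
end

section
/- Let (A, φ) be a non-commutative probability space and d ∈ ℕ, and equip M_d(A) with the functional φ^d(X) = (1/d) Σ_i φ(x_ii). If X = (x_ij) ∈ M_d(A) is uniformly R-cyclic with determining sequence (α_t), i.e. κ_t(x_{i_1 j_1},...,x_{i_t j_t}) = α_t when j_1 = i_2, j_2 = i_3, ..., j_t = i_1 and 0 otherwise, then the free cumulants of X in (M_d(A), φ^d) satisfy κ^d_t(X, X, ..., X) = d^{t-1} α_t for all t ≥ 1. -/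
open scoped Classical

/-- The non-crossing partition lattice `NC(n)` of `{1,...,n}`. -/
abbrev NCP (n : ℕ) := {π : Finpartition (Finset.univ : Finset (Fin n)) // IsNC π.parts}

/-- The multiplicative extension `f_π(x₁,...,xₙ) = ∏_{C ∈ π} f_{|C|}(x_c : c ∈ C)`
of a family of functions, the arguments in each factor listed in increasing order. -/
noncomputable def extMul {X : Type*} (f : ∀ k, (Fin k → X) → ℂ) {n : ℕ}
    (π : Finpartition (Finset.univ : Finset (Fin n))) (x : Fin n → X) : ℂ :=
  ∏ C ∈ π.parts, f C.card (fun i => x (C.orderIsoOfFin rfl i).1)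

/-- The family `κ` satisfies the moment–cumulant relations
`φ(a₁ ⋯ aₙ) = Σ_{π ∈ NC(n)} κ_π(a₁,...,aₙ)` for the linear functional `φ`,
i.e. `κ` is the family of free cumulants of `(A, φ)`. -/
def MomentCumulant {A : Type*} [Ring A] [Algebra ℂ A]
    (φ : A →ₗ[ℂ] ℂ) (κ : ∀ k, (Fin k → A) → ℂ) : Prop :=
  ∀ (n : ℕ) (_ : n ≠ 0) (a : Fin n → A),
    φ (List.ofFn a).prod = ∑ π : NCP n, extMul κ π.1 a

noncomputable section
namespace Stmt9Aux

lemma vadd1 {n : ℕ} (s : Fin (n+1)) : ((s+1 : Fin (n+1))).val = (s.val+1) % (n+1) := by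
  rw [Fin.add_def]; show (s.val + (1 : Fin (n+1)).val) % (n+1) = _
  rw [Fin.val_one', Nat.add_mod_mod]

variable {t : ℕ} [NeZero t]

lemma val_add_one (s : Fin t) : ((s+1 : Fin t)).val = (s.val+1) % t := by
  cases t with
  | zero => exact absurd rfl (NeZero.ne 0)
  | succ n => exact vadd1 s

lemma val_sub_succ_of_lt {s y : Fin t} (h : s.val < y.val) :
    (y - (s+1)).val = y.val - s.val - 1 := by
  have hy := y.isLt
  have hs1 : ((s+1 : Fin t)).val = (s.val + 1) % t := val_add_one s
  rw [Nat.mod_eq_of_lt (by omega)] at hs1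
  rw [Fin.sub_def]; show (t - ((s+1 : Fin t)).val + y.val) % t = _
  rw [hs1]
  have : t - (s.val + 1) + y.val = t + (y.val - s.val - 1) := by omega
  rw [this, Nat.add_mod_left, Nat.mod_eq_of_lt (by omega)]

lemma val_sub_succ_of_le {s y : Fin t} (h : y.val ≤ s.val) :
    (y - (s+1)).val = y.val + t - s.val - 1 := by
  have ht : 0 < t := Nat.pos_of_ne_zero (NeZero.ne t)
  have hy := y.isLt
  have hs := s.isLt
  have hs1 : ((s+1 : Fin t)).val = (s.val + 1) % t := val_add_one s
  rw [Fin.sub_def]; show (t - ((s+1 : Fin t)).val + y.val) % t = _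
  rcases Nat.lt_or_ge (s.val + 1) t with h' | h'
  · rw [Nat.mod_eq_of_lt h'] at hs1
    rw [hs1, Nat.mod_eq_of_lt (by omega)]; omega
  · have hst : s.val + 1 = t := by omega
    have : (s.val + 1) % t = 0 := by rw [hst, Nat.mod_self]
    rw [this] at hs1
    rw [hs1, Nat.sub_zero, Nat.add_comm, Nat.add_mod_right, Nat.mod_eq_of_lt hy]
    omega

/-- cyclic successor of `s` within `S`. -/
noncomputable def csucc (S : Finset (Fin t)) (s : Fin t) : Fin t :=
  if h : S.Nonempty then ((S.image (· - (s+1))).min' (h.image _)) + (s + 1) else s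

lemma csucc_mem {S : Finset (Fin t)} (h : S.Nonempty) (s : Fin t) : csucc S s ∈ S := by
  rw [csucc, dif_pos h]
  have := (S.image (· - (s+1))).min'_mem (h.image _)
  rw [Finset.mem_image] at this
  obtain ⟨x, hx, hx2⟩ := this
  rwa [← hx2, sub_add_cancel]

lemma csucc_min {S : Finset (Fin t)} {x : Fin t} (hx : x ∈ S) (s : Fin t) :
    csucc S s - (s+1) ≤ x - (s+1) := by
  have h : S.Nonempty := ⟨x, hx⟩
  rw [csucc, dif_pos h, add_sub_cancel_right]
  exact Finset.min'_le _ _ (Finset.mem_image_of_mem _ hx)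

lemma csucc_eq {S : Finset (Fin t)} {x s : Fin t} (hx : x ∈ S)
    (hmin : ∀ y ∈ S, x - (s+1) ≤ y - (s+1)) : csucc S s = x := by
  have h : S.Nonempty := ⟨x, hx⟩
  have h1 := csucc_min hx s
  have h2 := hmin _ (csucc_mem h s)
  have h3 : csucc S s - (s+1) = x - (s+1) := le_antisymm h1 h2
  have h4 := congrArg (· + (s+1)) h3
  simpa [sub_add_cancel] using h4

lemma csucc_univ (s : Fin t) : csucc (Finset.univ : Finset (Fin t)) s = s + 1 := by
  apply csucc_eq (Finset.mem_univ _)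
  intro y _
  rw [sub_self]
  exact Fin.zero_le _

lemma csucc_max' {B : Finset (Fin t)} (hB : B.Nonempty) :
    csucc B (B.max' hB) = B.min' hB := by
  apply csucc_eq (B.min'_mem hB)
  intro y hy
  set b := B.max' hB with hbdef
  have hyb : y.val ≤ b.val := Fin.le_def.1 (B.le_max' y hy)
  have hay : (B.min' hB).val ≤ y.val := Fin.le_def.1 (B.min'_le y hy)
  have hab : (B.min' hB).val ≤ b.val := le_trans hay hyb
  rw [Fin.le_def, val_sub_succ_of_le hab, val_sub_succ_of_le hyb]
  have := b.isLt
  omega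

lemma Dval (s y : Fin t) : (y - (s+1)).val =
    if s.val < y.val then y.val - s.val - 1 else y.val + t - s.val - 1 := by
  split
  · exact val_sub_succ_of_lt ‹_›
  · exact val_sub_succ_of_le (le_of_not_gt ‹_›)

lemma csucc_eq_of_val {C : Finset (Fin t)} {x y : Fin t} (hy : y ∈ C)
    (hmin : ∀ z ∈ C, (y - (x+1)).val ≤ (z - (x+1)).val) : csucc C x = y :=
  csucc_eq hy (fun z hz => Fin.le_def.2 (hmin z hz))

lemma csucc_min_val {C : Finset (Fin t)} {z : Fin t} (hz : z ∈ C) (x : Fin t) :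
    (csucc C x - (x+1)).val ≤ (z - (x+1)).val :=
  Fin.le_def.1 (csucc_min hz x)

lemma csucc_adj {C : Finset (Fin t)} {x y : Fin t} (hy : y ∈ C) (hxy : x.val < y.val)
    (hmin : ∀ z ∈ C, x.val < z.val → y.val ≤ z.val) : csucc C x = y := by
  apply csucc_eq_of_val hy
  intro z hz
  have h2 := y.isLt
  have h3 := z.isLt
  rcases Nat.lt_or_ge x.val z.val with hc | hc
  · have h4 := hmin z hz hc
    rw [Dval, Dval]; split_ifs <;> omega
  · rw [Dval, Dval]; split_ifs <;> omega

lemma csucc_gt_of_gt {C : Finset (Fin t)} {x w : Fin t} (hw : w ∈ C) (hxw : x.val < w.val) :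
    x.val < (csucc C x).val ∧ (csucc C x).val ≤ w.val := by
  have hm := csucc_min_val hw x
  have h2 := w.isLt
  have h3 := (csucc C x).isLt
  rw [Dval, Dval] at hm
  split_ifs at hm <;> omega

section Interval
variable {S B : Finset (Fin t)}

lemma out_of_interval (hB : B.Nonempty)
    (hint : ∀ x ∈ S, (B.min' hB).val ≤ x.val → x.val ≤ (B.max' hB).val → x ∈ B)
    {x : Fin t} (hx : x ∈ S) (hxB : x ∉ B) :
    x.val < (B.min' hB).val ∨ (B.max' hB).val < x.val := by
  by_contra h
  push_neg at h
  exact hxB (hint x hx (by omega) (by omega))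

lemma interval_F1 (hB : B.Nonempty) (hBS : B ⊆ S)
    (hint : ∀ x ∈ S, (B.min' hB).val ≤ x.val → x.val ≤ (B.max' hB).val → x ∈ B)
    {s : Fin t} (hs : s ∈ B) (hsb : s ≠ B.max' hB) : csucc S s = csucc B s := by
  have hsbv : s.val < (B.max' hB).val :=
    lt_of_le_of_ne (Fin.le_def.1 (B.le_max' s hs)) (fun h => hsb (Fin.ext h))
  obtain ⟨h1, h2⟩ := csucc_gt_of_gt (B.max'_mem hB) hsbv
  apply csucc_adj (hBS (csucc_mem ⟨s, hs⟩ s)) h1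
  intro z hz hsz
  rcases Nat.lt_or_ge (B.max' hB).val z.val with hc | hc
  · omega
  · have hzB : z ∈ B := hint z hz (by have := Fin.le_def.1 (B.min'_le s hs); omega) hc
    have hm := csucc_min_val hzB s
    rw [Dval, Dval] at hm
    split_ifs at hm <;> omega

lemma interval_F3 (hB : B.Nonempty) (hBS : B ⊆ S)
    (hint : ∀ x ∈ S, (B.min' hB).val ≤ x.val → x.val ≤ (B.max' hB).val → x ∈ B)
    (hne : B ≠ S) : csucc S (B.max' hB) ∉ B := by
  intro hmem
  obtain ⟨y, hyS, hyB⟩ := Finset.exists_of_ssubset (lt_of_le_of_ne hBS hne)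
  have hm := csucc_min_val hyS (B.max' hB)
  have hcb : (csucc S (B.max' hB)).val ≤ (B.max' hB).val :=
    Fin.le_def.1 (B.le_max' _ hmem)
  have hac : (B.min' hB).val ≤ (csucc S (B.max' hB)).val :=
    Fin.le_def.1 (B.min'_le _ hmem)
  have hyout := out_of_interval hB hint hyS hyB
  have hy2 := y.isLt
  have hb2 := (B.max' hB).isLt
  rw [Dval, Dval] at hm
  split_ifs at hm <;> omega

lemma interval_F4a (hB : B.Nonempty) (hBS : B ⊆ S)
    (hint : ∀ x ∈ S, (B.min' hB).val ≤ x.val → x.val ≤ (B.max' hB).val → x ∈ B)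
    {s : Fin t} (hsS : s ∈ S) (hsB : s ∉ B) (hc : csucc S s ∈ B) :
    csucc S s = B.min' hB := by
  by_contra hne
  have hac : (B.min' hB).val < (csucc S s).val :=
    lt_of_le_of_ne (Fin.le_def.1 (B.min'_le _ hc)) (fun h => hne (Fin.ext h.symm))
  have hsout := out_of_interval hB hint hsS hsB
  have hm := csucc_min_val (hBS (B.min'_mem hB)) s
  have hcb : (csucc S s).val ≤ (B.max' hB).val := Fin.le_def.1 (B.le_max' _ hc)
  have h1 := (csucc S s).isLt
  have h2 := (B.min' hB).isLt
  have h3 := s.isLt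
  rw [Dval, Dval] at hm
  split_ifs at hm <;> omega

lemma interval_F5 {s : Fin t} (hsS : s ∈ S) (hc : csucc S s ∉ B) :
    csucc (S \ B) s = csucc S s := by
  apply csucc_eq_of_val (Finset.mem_sdiff.2 ⟨csucc_mem ⟨s, hsS⟩ s, hc⟩)
  intro y hy
  exact csucc_min_val (Finset.mem_sdiff.1 hy).1 s

lemma interval_F4b (hB : B.Nonempty) (hBS : B ⊆ S)
    (hint : ∀ x ∈ S, (B.min' hB).val ≤ x.val → x.val ≤ (B.max' hB).val → x ∈ B)
    (hne : B ≠ S) {s : Fin t} (hsS : s ∈ S) (hsB : s ∉ B) (hc : csucc S s ∈ B) :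
    csucc (S \ B) s = csucc S (B.max' hB) := by
  have hca : csucc S s = B.min' hB := interval_F4a hB hBS hint hsS hsB hc
  have hpB : csucc S (B.max' hB) ∉ B := interval_F3 hB hBS hint hne
  have hpS : csucc S (B.max' hB) ∈ S := csucc_mem ⟨s, hsS⟩ _
  apply csucc_eq_of_val (Finset.mem_sdiff.2 ⟨hpS, hpB⟩)
  intro y hy
  obtain ⟨hyS, hyB⟩ := Finset.mem_sdiff.1 hy
  have h1y := csucc_min_val hyS s
  have h1p := csucc_min_val hpS s
  rw [hca] at h1y h1p
  have h2y := csucc_min_val hyS (B.max' hB)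
  have h2a := csucc_min_val (hBS (B.min'_mem hB)) (B.max' hB)
  have hsout := out_of_interval hB hint hsS hsB
  have hyout := out_of_interval hB hint hyS hyB
  have hpout := out_of_interval hB hint hpS hpB
  have hab : (B.min' hB).val ≤ (B.max' hB).val :=
    Fin.le_def.1 (B.min'_le _ (B.max'_mem hB))
  have i1 := y.isLt
  have i2 := s.isLt
  have i3 := (B.min' hB).isLt
  have i4 := (B.max' hB).isLt
  have i5 := (csucc S (B.max' hB)).isLt
  rw [Dval, Dval] at h1y h1p h2y h2a ⊢
  split_ifs at h1y h1p h2y h2a ⊢ <;> omega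

end Interval

abbrev IsNC' {α : Type*} [LinearOrder α] (parts : Finset (Finset α)) : Prop :=
  IsNC parts

lemma sup_val_eq_max' {C : Finset (Fin t)} (h : C.Nonempty) :
    C.sup Fin.val = (C.max' h).val := by
  apply le_antisymm
  · exact Finset.sup_le fun x hx => Fin.le_def.1 (C.le_max' x hx)
  · exact Finset.le_sup (C.max'_mem h)

lemma sup_tsub_val {C : Finset (Fin t)} (h : C.Nonempty) :
    C.sup (fun x => t - x.val) = t - (C.min' h).val := by
  apply le_antisymm
  · apply Finset.sup_le
    intro x hx
    have := Fin.le_def.1 (C.min'_le x hx)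
    omega
  · exact Finset.le_sup (f := fun x : Fin t => t - x.val) (C.min'_mem h)

lemma exists_interval_block {P : Finset (Finset (Fin t))} (hP : P.Nonempty)
    (hne : ∅ ∉ P) (hdis : (P : Set (Finset (Fin t))).PairwiseDisjoint id)
    (hnc : IsNC' P) :
    ∃ B ∈ P, ∃ hB : B.Nonempty,
      ∀ x ∈ P.sup id, (B.min' hB).val ≤ x.val → x.val ≤ (B.max' hB).val → x ∈ B := by
  obtain ⟨B, hBP, hBmin⟩ :=
    P.exists_min_image (fun C => C.sup Fin.val + C.sup (fun x => t - x.val)) hP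
  have hB : B.Nonempty := Finset.nonempty_iff_ne_empty.2 (fun h => hne (h ▸ hBP))
  refine ⟨B, hBP, hB, ?_⟩
  intro x hxS hax hxb
  by_contra hxB
  obtain ⟨C, hCP, hxC⟩ := Finset.mem_sup.1 hxS
  have hCB : C ≠ B := fun h => hxB (h ▸ hxC)
  have hC : C.Nonempty := ⟨x, hxC⟩
  have hdisBC : ∀ y, y ∈ B → y ∈ C → False := by
    intro y h1 h2
    exact Finset.disjoint_left.1 (hdis hBP hCP (Ne.symm hCB)) h1 h2
  set a := B.min' hB with hadef
  set b := B.max' hB with hbdef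
  have hax' : a.val < x.val :=
    lt_of_le_of_ne hax (fun h => hxB (Fin.ext h.symm ▸ B.min'_mem hB))
  have hxb' : x.val < b.val := by
    rcases lt_or_eq_of_le hxb with h | h
    · exact h
    · exact absurd ((Fin.ext h : x = b) ▸ B.max'_mem hB) hxB
  have hkey : ∀ y ∈ C, a.val < y.val ∧ y.val < b.val := by
    intro y hyC
    constructor
    · by_contra hya
      push_neg at hya
      rcases lt_or_eq_of_le hya with h | h
      · exact hnc y x a b (Fin.lt_def.2 h) (Fin.lt_def.2 hax') (Fin.lt_def.2 hxb')
          C hCP B hBP hCB hyC hxC (B.min'_mem hB) (B.max'_mem hB)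
      · exact hdisBC y (Fin.ext h ▸ B.min'_mem hB) hyC
    · by_contra hby
      push_neg at hby
      rcases lt_or_eq_of_le hby with h | h
      · exact hnc a b x y (Fin.lt_def.2 hax') (Fin.lt_def.2 hxb') (Fin.lt_def.2 h)
          B hBP C hCP (Ne.symm hCB) (B.min'_mem hB) (B.max'_mem hB) hxC hyC
      · exact hdisBC y ((Fin.ext h.symm : y = b) ▸ B.max'_mem hB) hyC
  have h1 : (C.max' hC).val < b.val := (hkey _ (C.max'_mem hC)).2
  have h2 : a.val < (C.min' hC).val := (hkey _ (C.min'_mem hC)).1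
  have h3 := hBmin C hCP
  rw [sup_val_eq_max' hB, sup_tsub_val hB, sup_val_eq_max' hC, sup_tsub_val hC] at h3
  have h5 := (B.max' hB).isLt
  have h6 := (C.max' hC).isLt
  have h4 : (C.min' hC).val ≤ (C.max' hC).val := Fin.le_def.1 (C.min'_le _ (C.max'_mem hC))
  omega

def Conds (d : ℕ) (S : Finset (Fin t)) (P : Finset (Finset (Fin t)))
    (j : Fin t → Fin d) : Prop :=
  ∀ C ∈ P, ∀ s ∈ C, j (csucc S s) = j (csucc C s)

lemma card_tie {d : ℕ} {a p : Fin t} (hap : a ≠ p) (Q : (Fin t → Fin d) → Prop)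
    (hQ : ∀ j v, Q (Function.update j a v) ↔ Q j) :
    (Finset.univ.filter fun j : Fin t → Fin d => Q j ∧ j a = j p).card * d =
      (Finset.univ.filter fun j : Fin t → Fin d => Q j).card := by
  classical
  have hcp : ((Finset.univ.filter fun j : Fin t → Fin d => Q j ∧ j a = j p) ×ˢ
      (Finset.univ : Finset (Fin d))).card =
      (Finset.univ.filter fun j : Fin t → Fin d => Q j ∧ j a = j p).card * d := by
    rw [Finset.card_product, Finset.card_univ, Fintype.card_fin]
  rw [← hcp]
  apply Finset.card_bij (fun (x : (Fin t → Fin d) × Fin d) _ => Function.update x.1 a x.2)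
  · rintro ⟨j, v⟩ hx
    rw [Finset.mem_product, Finset.mem_filter] at hx
    rw [Finset.mem_filter]
    exact ⟨Finset.mem_univ _, (hQ j v).2 hx.1.2.1⟩
  · rintro ⟨j, v⟩ hx ⟨j', v'⟩ hx' heq
    rw [Finset.mem_product, Finset.mem_filter] at hx hx'
    have hv : v = v' := by
      have := congrFun heq a
      simpa using this
    have hp : j p = j' p := by
      have := congrFun heq p
      simpa [Function.update_of_ne (Ne.symm hap)] using this
    have hj : j = j' := by
      funext x
      by_cases hxa : x = a
      · subst hxa
        exact hx.1.2.2.trans (hp.trans hx'.1.2.2.symm)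
      · have := congrFun heq x
        simpa [Function.update_of_ne hxa] using this
    rw [hj, hv]
  · intro k hk
    rw [Finset.mem_filter] at hk
    refine ⟨⟨Function.update k a (k p), k a⟩, ?_, ?_⟩
    · rw [Finset.mem_product, Finset.mem_filter]
      refine ⟨⟨Finset.mem_univ _, ⟨(hQ k (k p)).2 hk.2, ?_⟩⟩, Finset.mem_univ _⟩
      simp [Function.update_of_ne (Ne.symm hap)]
    · rw [Function.update_idem, Function.update_eq_self]

lemma isnc_subset {P Q : Finset (Finset (Fin t))} (h : P ⊆ Q) (hnc : IsNC' Q) : IsNC' P :=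
  fun i j k l h1 h2 h3 B hB C hC hBC hi hj hk hl =>
    hnc i j k l h1 h2 h3 B (h hB) C (h hC) hBC hi hj hk hl

lemma count_main (d : ℕ) (hd : 0 < d) :
    ∀ (n : ℕ) (P : Finset (Finset (Fin t))), P.card = n → P.Nonempty → ∅ ∉ P →
      (P : Set (Finset (Fin t))).PairwiseDisjoint id → IsNC' P →
      (Finset.univ.filter fun j : Fin t → Fin d => Conds d (P.sup id) P j).card =
        d ^ (t + 1 - P.card) := by
  intro n
  induction n using Nat.strong_induction_on with
  | _ n IH =>
  intro P hPn hP hne hdis hnc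
  obtain ⟨B, hBP, hB, hint⟩ := exists_interval_block hP hne hdis hnc
  by_cases hsing : P = {B}
  · subst hsing
    have hS : ({B} : Finset (Finset (Fin t))).sup id = B := Finset.sup_singleton
    have htriv : ∀ j : Fin t → Fin d, Conds d (({B} : Finset _).sup id) {B} j := by
      intro j C hC s hs
      rw [Finset.mem_singleton] at hC
      subst hC
      rw [hS]
    rw [Finset.filter_true_of_mem (fun j _ => htriv j), Finset.card_singleton,
      Finset.card_univ, Fintype.card_fun, Fintype.card_fin, Fintype.card_fin]
    congr 1
  · obtain ⟨C, hCP, hCB⟩ : ∃ C ∈ P, C ≠ B := by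
      by_contra h
      push_neg at h
      exact hsing (Finset.eq_singleton_iff_unique_mem.2 ⟨hBP, fun x hx => h x hx⟩)
    have hCne : C.Nonempty := Finset.nonempty_iff_ne_empty.2 (fun h => hne (h ▸ hCP))
    set S := P.sup id with hSdef
    set P' := P.erase B with hP'def
    have hsubP : P' ⊆ P := Finset.erase_subset _ _
    have hBS : B ⊆ S := fun x hx => Finset.mem_sup.2 ⟨B, hBP, hx⟩
    have hS' : P'.sup id = S \ B := by
      apply Finset.ext
      intro x
      constructor
      · intro hx
        obtain ⟨D, hD, hxD⟩ := Finset.mem_sup.1 hx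
        obtain ⟨hDB, hDP⟩ := Finset.mem_erase.1 hD
        exact Finset.mem_sdiff.2 ⟨Finset.mem_sup.2 ⟨D, hDP, hxD⟩,
          fun hxB => Finset.disjoint_left.1 (hdis hDP hBP hDB) hxD hxB⟩
      · intro hx
        obtain ⟨hxS, hxB⟩ := Finset.mem_sdiff.1 hx
        obtain ⟨D, hDP, hxD⟩ := Finset.mem_sup.1 hxS
        exact Finset.mem_sup.2 ⟨D, Finset.mem_erase.2 ⟨fun h => hxB (h ▸ hxD), hDP⟩, hxD⟩
    have hBneS : B ≠ S := by
      obtain ⟨x, hx⟩ := hCne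
      intro h
      have hxB : x ∉ B :=
        fun hxB => Finset.disjoint_left.1 (hdis hCP hBP hCB) hx hxB
      exact hxB (h ▸ (Finset.mem_sup.2 ⟨C, hCP, hx⟩ : x ∈ S))
    have hSne : S.Nonempty := hB.mono hBS
    set p := csucc S (B.max' hB) with hpdef
    have hpS : p ∈ S := csucc_mem hSne _
    have hpB : p ∉ B := interval_F3 hB hBS hint hBneS
    have haB : B.min' hB ∈ B := B.min'_mem hB
    have hap : B.min' hB ≠ p := fun h => hpB (h ▸ haB)
    have hiff : ∀ j : Fin t → Fin d,
        Conds d S P j ↔ (Conds d (P'.sup id) P' j ∧ j (B.min' hB) = j p) := by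
      intro j
      constructor
      · intro h
        have htie : j (B.min' hB) = j p := by
          have h1 := h B hBP (B.max' hB) (B.max'_mem hB)
          rw [csucc_max' hB] at h1
          exact h1.symm
        refine ⟨?_, htie⟩
        intro D hD s hs
        have hDP : D ∈ P := hsubP hD
        have hDB : D ≠ B := (Finset.mem_erase.1 hD).1
        have hsB : s ∉ B :=
          fun hsB => Finset.disjoint_left.1 (hdis hDP hBP hDB) hs hsB
        have hsS : s ∈ S := Finset.mem_sup.2 ⟨D, hDP, hs⟩
        rw [hS']
        by_cases hcs : csucc S s ∈ B
        · rw [interval_F4b hB hBS hint hBneS hsS hsB hcs]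
          have h2 := h D hDP s hs
          rw [interval_F4a hB hBS hint hsS hsB hcs] at h2
          rw [← hpdef, ← htie]
          exact h2
        · rw [interval_F5 hsS hcs]
          exact h D hDP s hs
      · rintro ⟨h, htie⟩
        intro D hD s hs
        by_cases hDB : D = B
        · subst hDB
          by_cases hsb : s = D.max' hB
          · rw [hsb, csucc_max' hB]
            exact htie.symm
          · rw [interval_F1 hB hBS hint hs hsb]
        · have hDP' : D ∈ P' := Finset.mem_erase.2 ⟨hDB, hD⟩
          have h2 := h D hDP' s hs
          rw [hS'] at h2
          have hsB : s ∉ B :=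
            fun hsB => Finset.disjoint_left.1 (hdis hD hBP hDB) hs hsB
          have hsS : s ∈ S := Finset.mem_sup.2 ⟨D, hD, hs⟩
          by_cases hcs : csucc S s ∈ B
          · rw [interval_F4a hB hBS hint hsS hsB hcs]
            rw [interval_F4b hB hBS hint hBneS hsS hsB hcs, ← hpdef] at h2
            rw [htie]
            exact h2
          · rw [interval_F5 hsS hcs] at h2
            exact h2
    have hP'ne : P'.Nonempty := ⟨C, Finset.mem_erase.2 ⟨hCB, hCP⟩⟩
    have hext : ∀ f g : Fin t → Fin d, (∀ x ∈ P'.sup id, f x = g x) →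
        Conds d (P'.sup id) P' f → Conds d (P'.sup id) P' g := by
      intro f g hfg hc D hD s hs
      have hsup : s ∈ P'.sup id := Finset.mem_sup.2 ⟨D, hD, hs⟩
      have h1 : csucc (P'.sup id) s ∈ P'.sup id := csucc_mem ⟨s, hsup⟩ _
      have h2 : csucc D s ∈ P'.sup id :=
        Finset.mem_sup.2 ⟨D, hD, csucc_mem ⟨s, hs⟩ _⟩
      rw [← hfg _ h1, ← hfg _ h2]
      exact hc D hD s hs
    have hQ : ∀ (j : Fin t → Fin d) (v : Fin d),
        Conds d (P'.sup id) P' (Function.update j (B.min' hB) v) ↔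
          Conds d (P'.sup id) P' j := by
      intro j v
      have hkey : ∀ x ∈ P'.sup id, Function.update j (B.min' hB) v x = j x := by
        intro x hx
        apply Function.update_of_ne
        rw [hS'] at hx
        exact fun hxa => (Finset.mem_sdiff.1 hx).2 (hxa ▸ haB)
      exact ⟨hext _ _ hkey, hext _ _ (fun x hx => (hkey x hx).symm)⟩
    have hc1 : (Finset.univ.filter fun j : Fin t → Fin d => Conds d S P j).card * d =
        (Finset.univ.filter fun j : Fin t → Fin d => Conds d (P'.sup id) P' j).card := by
      rw [Finset.filter_congr (fun j (_ : j ∈ Finset.univ) => hiff j)]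
      exact card_tie hap _ hQ
    have hP'card : P'.card = P.card - 1 := Finset.card_erase_of_mem hBP
    have hPpos : 0 < P.card := Finset.card_pos.2 hP
    have hIH := IH (P.card - 1) (by omega) P' (by omega) hP'ne
      (fun h => hne (hsubP h)) (hdis.subset (Finset.coe_subset.2 hsubP))
      (isnc_subset hsubP hnc)
    have hPt : P.card ≤ t := by
      have hcard : S.card = ∑ C ∈ P, C.card := by
        rw [hSdef, Finset.sup_eq_biUnion]
        exact Finset.card_biUnion (fun x hx y hy hxy => hdis hx hy hxy)
      have h1 : P.card ≤ S.card := by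
        rw [hcard]
        calc P.card = ∑ _C ∈ P, 1 := by rw [Finset.sum_const, smul_eq_mul, mul_one]
        _ ≤ ∑ C ∈ P, C.card := Finset.sum_le_sum (fun C hC => Finset.card_pos.2
            (Finset.nonempty_iff_ne_empty.2 fun h => hne (h ▸ hC)))
      have h2 : S.card ≤ t := by
        have := Finset.card_le_univ S
        rwa [Fintype.card_fin] at this
      omega
    have hfin := hc1.trans hIH
    rw [hP'card] at hfin
    have hexp : d ^ (t + 1 - (P.card - 1)) = d ^ (t + 1 - P.card) * d := by
      rw [← pow_succ]
      congr 1
      omega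
    rw [hexp] at hfin
    exact Nat.eq_of_mul_eq_mul_right hd hfin

section MatrixProd
variable {R : Type*} [Ring R] {d : ℕ}

lemma prod_entry : ∀ (n : ℕ) (M : Fin n → Matrix (Fin d) (Fin d) R) (i k : Fin d),
    (List.ofFn M).prod i k =
      ∑ j : Fin (n+1) → Fin d,
        if j 0 = i ∧ j (Fin.last n) = k
        then (List.ofFn fun s : Fin n => (M s) (j s.castSucc) (j s.succ)).prod else 0 := by
  intro n
  induction n with
  | zero =>
    intro M i k
    show (List.ofFn M).prod i k =
      ∑ j : Fin 1 → Fin d,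
        if j 0 = i ∧ j (Fin.last 0) = k
        then (List.ofFn fun s : Fin 0 => (M s) (j s.castSucc) (j s.succ)).prod else 0
    have he : (∑ j : Fin 1 → Fin d, if j 0 = i ∧ j (Fin.last 0) = k
          then (List.ofFn fun s : Fin 0 => (M s) (j s.castSucc) (j s.succ)).prod else 0)
        = ∑ v : Fin d, if v = i ∧ v = k then (1:R) else 0 :=
      Fintype.sum_equiv (Equiv.funUnique (Fin 1) (Fin d)) _ _ (fun j => by
        simp [List.ofFn_zero])
    rw [he, List.ofFn_zero, List.prod_nil]
    by_cases hik : i = k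
    · subst hik
      rw [Matrix.one_apply_eq]
      simp
    · rw [Matrix.one_apply_ne hik, Finset.sum_eq_zero]
      intro v _
      rw [if_neg]
      rintro ⟨rfl, rfl⟩
      exact hik rfl
  | succ n ih =>
    intro M i k
    rw [List.ofFn_succ, List.prod_cons, Matrix.mul_apply]
    have h1 : ∀ m : Fin d, (M 0) i m * (List.ofFn fun s : Fin n => M s.succ).prod m k =
        ∑ j' : Fin (n+1) → Fin d, if j' 0 = m ∧ j' (Fin.last n) = k
          then (M 0) i m *
            (List.ofFn fun s : Fin n => (M s.succ) (j' s.castSucc) (j' s.succ)).prod else 0 := by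
      intro m
      rw [ih (fun s => M s.succ) m k, Finset.mul_sum]
      apply Finset.sum_congr rfl
      intro j' _
      rw [mul_ite, mul_zero]
    simp only [h1]
    have he2 : (∑ q : Fin d × (Fin (n+1) → Fin d),
          if q.1 = i ∧ q.2 (Fin.last n) = k
          then (M 0) q.1 (q.2 0) *
            (List.ofFn fun s : Fin n => (M s.succ) (q.2 s.castSucc) (q.2 s.succ)).prod else 0)
        = ∑ j : Fin (n+1+1) → Fin d,
          if j 0 = i ∧ j (Fin.last (n+1)) = k
          then (List.ofFn fun s : Fin (n+1) => (M s) (j s.castSucc) (j s.succ)).prod else 0 := by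
      apply Fintype.sum_equiv (Fin.consEquiv (fun _ : Fin (n+1+1) => Fin d))
      rintro ⟨x, j'⟩
      simp only [Fin.consEquiv_apply]
      rw [Fin.cons_zero, ← Fin.succ_last, Fin.cons_succ, List.ofFn_succ, List.prod_cons]
      simp only [Fin.castSucc_zero, Fin.cons_zero, Fin.cons_succ, ← Fin.succ_castSucc]
    rw [← he2, Fintype.sum_prod_type]
    conv_rhs => rw [Finset.sum_comm]
    conv_lhs => rw [Finset.sum_comm]
    apply Finset.sum_congr rfl
    intro j' _
    by_cases hP : j' (Fin.last n) = k
    · simp only [hP, and_true]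
      rw [Finset.sum_ite_eq Finset.univ (j' 0), Finset.sum_ite_eq' Finset.univ i]
      simp
    · simp [hP]

end MatrixProd

section Trace
variable {R : Type*} [Ring R] {d : ℕ}

lemma trace_prod (n : ℕ) [NeZero n] (M : Fin n → Matrix (Fin d) (Fin d) R) :
    ∑ i : Fin d, (List.ofFn M).prod i i =
      ∑ j : Fin n → Fin d, (List.ofFn fun s : Fin n => (M s) (j s) (j (s+1))).prod := by
  have npos : 0 < n := Nat.pos_of_ne_zero (NeZero.ne n)
  have h1 : ∑ i : Fin d, (List.ofFn M).prod i i =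
      ∑ j : Fin (n+1) → Fin d, if j (Fin.last n) = j 0
        then (List.ofFn fun s : Fin n => (M s) (j s.castSucc) (j s.succ)).prod else 0 := by
    simp only [prod_entry n M]
    rw [Finset.sum_comm]
    apply Finset.sum_congr rfl
    intro j _
    simp only [ite_and]
    rw [Finset.sum_ite_eq Finset.univ (j 0)]
    simp
  rw [h1, ← Finset.sum_filter]
  apply Finset.sum_nbij' (i := fun (j : Fin (n+1) → Fin d) => fun s : Fin n => j s.castSucc)
    (j := fun (j' : Fin n → Fin d) => fun s : Fin (n+1) => j' ⟨s.val % n, Nat.mod_lt _ npos⟩)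
  · intro a _
    exact Finset.mem_univ _
  · intro j' _
    rw [Finset.mem_filter]
    refine ⟨Finset.mem_univ _, ?_⟩
    refine congrArg j' (Fin.ext ?_)
    show (Fin.last n).val % n = (0 : Fin (n+1)).val % n
    rw [Fin.val_last]
    simp [Nat.mod_self]
  · intro j hj
    rw [Finset.mem_filter] at hj
    funext s
    by_cases hs : s.val < n
    · show j (Fin.castSucc ⟨s.val % n, _⟩) = j s
      congr 1
      apply Fin.ext
      show s.val % n = s.val
      exact Nat.mod_eq_of_lt hs
    · have hsl : s = Fin.last n := Fin.ext (by rw [Fin.val_last]; have := s.isLt; omega)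
      show j (Fin.castSucc ⟨s.val % n, _⟩) = j s
      rw [hsl]
      have : (Fin.last n).val % n = 0 := by rw [Fin.val_last]; exact Nat.mod_self n
      have h0 : Fin.castSucc (⟨(Fin.last n).val % n, Nat.mod_lt _ npos⟩ : Fin n) =
          (0 : Fin (n+1)) := by
        apply Fin.ext
        simpa using this
      rw [h0, hj.2]
  · intro j' _
    funext s
    show j' ⟨(Fin.castSucc s).val % n, _⟩ = j' s
    congr 1
    apply Fin.ext
    show s.val % n = s.val
    exact Nat.mod_eq_of_lt s.isLt
  · intro j hj
    rw [Finset.mem_filter] at hj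
    have harg : ∀ s : Fin n, j s.succ = j (Fin.castSucc (s + 1)) := by
      intro s
      by_cases hs : s.val + 1 < n
      · congr 1
        apply Fin.ext
        rw [Fin.val_succ, Fin.coe_castSucc, val_add_one, Nat.mod_eq_of_lt hs]
      · have hsn : s.val + 1 = n := by have := s.isLt; omega
        have h2 : s.succ = Fin.last n := Fin.ext (by rw [Fin.val_succ, hsn, Fin.val_last])
        have h3 : (s + 1 : Fin n) = ⟨0, npos⟩ := Fin.ext (by
          rw [val_add_one, hsn, Nat.mod_self])
        rw [h2, h3, hj.2]
        exact congrArg j (Fin.ext (by simp))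
    simp only [← harg]

end Trace

section Bridge
variable {t : ℕ} [NeZero t]

lemma csucc_orderIso {C : Finset (Fin t)} (hC : C.Nonempty) (i : Fin C.card) :
    csucc C (C.orderIsoOfFin rfl i).1 =
      (C.orderIsoOfFin rfl ⟨(i.val + 1) % C.card,
        Nat.mod_lt _ (Finset.card_pos.2 hC)⟩).1 := by
  set c := C.orderIsoOfFin (rfl : C.card = C.card) with hc
  have hpos : 0 < C.card := Finset.card_pos.2 hC
  have hmono : ∀ {m m' : Fin C.card}, m ≤ m' → ((c m).1 : Fin t) ≤ (c m').1 := by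
    intro m m' h
    exact Subtype.coe_le_coe.2 (c.le_iff_le.2 h)
  have hmonos : ∀ {m m' : Fin C.card}, m < m' → ((c m).1 : Fin t) < (c m').1 := by
    intro m m' h
    exact Subtype.coe_lt_coe.2 (c.lt_iff_lt.2 h)
  by_cases hik : i.val + 1 < C.card
  · have hidx : (⟨(i.val + 1) % C.card, Nat.mod_lt _ hpos⟩ : Fin C.card) =
        ⟨i.val + 1, hik⟩ := Fin.ext (Nat.mod_eq_of_lt hik)
    rw [hidx]
    apply csucc_adj (c ⟨i.val + 1, hik⟩).2
    · exact Fin.lt_def.1 (hmonos (by rw [Fin.lt_def]; exact Nat.lt_succ_self _))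
    · intro z hz hlt
      obtain ⟨m, hm⟩ := c.surjective ⟨z, hz⟩
      have hmz : (c m).1 = z := by rw [hm]
      rcases le_or_gt m i with hmi | hmi
      · have := Fin.le_def.1 (hmono hmi)
        omega
      · have : (⟨i.val + 1, hik⟩ : Fin C.card) ≤ m := by
          rw [Fin.le_def]
          exact Fin.lt_def.1 hmi
        have := Fin.le_def.1 (hmono this)
        omega
  · have hik' : i.val + 1 = C.card := by have := i.isLt; omega
    have hci : (c i).1 = C.max' hC := by
      apply le_antisymm (C.le_max' _ (c i).2)
      obtain ⟨m, hm⟩ := c.surjective ⟨C.max' hC, C.max'_mem hC⟩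
      have : (c m).1 = C.max' hC := by rw [hm]
      rw [← this]
      apply hmono
      rw [Fin.le_def]
      have := m.isLt
      omega
    have hidx : (⟨(i.val + 1) % C.card, Nat.mod_lt _ hpos⟩ : Fin C.card) =
        ⟨0, hpos⟩ := Fin.ext (by
          show (i.val + 1) % C.card = 0
          rw [hik', Nat.mod_self])
    have hc0 : (c ⟨0, hpos⟩).1 = C.min' hC := by
      apply le_antisymm
      · obtain ⟨m, hm⟩ := c.surjective ⟨C.min' hC, C.min'_mem hC⟩
        have : (c m).1 = C.min' hC := by rw [hm]
        rw [← this]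
        apply hmono
        rw [Fin.le_def]
        exact Nat.zero_le _
      · exact C.min'_le _ (c ⟨0, hpos⟩).2
    calc csucc C (c i).1 = C.min' hC := by rw [hci, csucc_max' hC]
      _ = (c ⟨0, hpos⟩).1 := hc0.symm
      _ = (c ⟨(i.val + 1) % C.card, Nat.mod_lt _ hpos⟩).1 :=
        (congrArg (fun m => ((c m).1 : Fin t)) hidx).symm

lemma blockcond_iff {d : ℕ} {C : Finset (Fin t)} (hC : C.Nonempty) (j : Fin t → Fin d) :
    (∀ i : Fin C.card, j ((C.orderIsoOfFin rfl i).1 + 1) =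
        j ((C.orderIsoOfFin rfl ⟨(i.val + 1) % C.card,
          Nat.mod_lt _ (Finset.card_pos.2 hC)⟩).1)) ↔
      ∀ s ∈ C, j (csucc Finset.univ s) = j (csucc C s) := by
  constructor
  · intro h s hs
    obtain ⟨m, hm⟩ := (C.orderIsoOfFin rfl).surjective ⟨s, hs⟩
    have hms : ((C.orderIsoOfFin rfl m).1 : Fin t) = s := by rw [hm]
    rw [csucc_univ, ← hms, csucc_orderIso hC m]
    exact h m
  · intro h i
    rw [← csucc_orderIso hC i]
    have := h _ ((C.orderIsoOfFin rfl i)).2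
    rw [csucc_univ] at this
    exact this

end Bridge

lemma prod_ite_all {β : Type*} (P : Finset β) (p : β → Prop) {Dp : ∀ C, Decidable (p C)}
    {D : Decidable (∀ C ∈ P, p C)} (f : β → ℂ) :
    ∏ C ∈ P, (@ite _ (p C) (Dp C) (f C) 0) =
      @ite _ (∀ C ∈ P, p C) D (∏ C ∈ P, f C) 0 := by
  by_cases h : ∀ C ∈ P, p C
  · rw [if_pos h]
    exact Finset.prod_congr rfl (fun C hC => if_pos (h C hC))
  · rw [if_neg h]
    push_neg at h
    obtain ⟨C, hC, hpC⟩ := h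
    exact Finset.prod_eq_zero hC (if_neg hpC)

end Stmt9Aux

open Stmt9Aux

/-- if `X = (x_{ij}) ∈ M_d(A)` is uniformly R-cyclic with determining
sequence `(α_t)` — that is, `κ_t(x_{i₁j₁},...,x_{i_tj_t}) = α_t` when
`j₁ = i₂, ..., j_{t−1} = i_t, j_t = i₁` and `0` otherwise — then in
`(M_d(A), φ^d)` with `φ^d(X) = (1/d) Σᵢ φ(x_{ii})` the free cumulants of `X`
are `κ^d_t(X,...,X) = d^{t−1} α_t`. -/
theorem stmt_9 {A : Type*} [Ring A] [Algebra ℂ A]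
    (φ : A →ₗ[ℂ] ℂ) (hunit : φ 1 = 1)
    (κ : ∀ k, (Fin k → A) → ℂ) (hκ : MomentCumulant φ κ)
    (d : ℕ) (hd : 0 < d)
    (φd : Matrix (Fin d) (Fin d) A →ₗ[ℂ] ℂ)
    (hφd : ∀ Y : Matrix (Fin d) (Fin d) A, φd Y = (d : ℂ)⁻¹ * ∑ i, φ (Y i i))
    (κd : ∀ k, (Fin k → Matrix (Fin d) (Fin d) A) → ℂ)
    (hκd : MomentCumulant φd κd)
    (X : Matrix (Fin d) (Fin d) A) (α : ℕ → ℂ)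
    (hX : ∀ (t : ℕ) (ht : t ≠ 0) (ij : Fin t → Fin d × Fin d),
      κ t (fun s => X (ij s).1 (ij s).2) =
        if ∀ s : Fin t,
            (ij s).2 = (ij ⟨(s.val + 1) % t, Nat.mod_lt _ (Nat.pos_of_ne_zero ht)⟩).1
          then α t else 0) :
    ∀ (t : ℕ), t ≠ 0 → κd t (fun _ => X) = (d : ℂ) ^ (t - 1) * α t := by
  intro t
  induction t using Nat.strong_induction_on with
  | _ t IH =>
  intro ht
  haveI : NeZero t := ⟨ht⟩
  haveI : Nonempty (Fin t) := ⟨⟨0, Nat.pos_of_ne_zero ht⟩⟩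
  have hdC : (d:ℂ) ≠ 0 := Nat.cast_ne_zero.2 hd.ne'
  have hsum_card : ∀ π : NCP t, ∑ C ∈ π.1.parts, C.card = t := by
    intro π
    rw [Finpartition.sum_card_parts, Finset.card_univ, Fintype.card_fin]
  have hple : ∀ π : NCP t, π.1.parts.card ≤ t := by
    intro π
    calc π.1.parts.card = ∑ _C ∈ π.1.parts, 1 := by
          rw [Finset.sum_const, smul_eq_mul, mul_one]
      _ ≤ ∑ C ∈ π.1.parts, C.card := Finset.sum_le_sum (fun C hC =>
          Finset.card_pos.2 (π.1.nonempty_of_mem_parts hC))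
      _ = t := hsum_card π
  have hsumsub : ∀ π : NCP t, ∑ C ∈ π.1.parts, (C.card - 1) = t - π.1.parts.card := by
    intro π
    have h1 := hsum_card π
    have h2 : ∑ C ∈ π.1.parts, (C.card - 1 + 1) = ∑ C ∈ π.1.parts, C.card :=
      Finset.sum_congr rfl (fun C hC => by
        have := Finset.card_pos.2 (π.1.nonempty_of_mem_parts hC); omega)
    rw [Finset.sum_add_distrib, Finset.sum_const, smul_eq_mul, mul_one] at h2
    have := hple π
    omega
  have hcount : ∀ π : NCP t,
      (Finset.univ.filter fun j : Fin t → Fin d =>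
        Conds d Finset.univ π.1.parts j).card = d ^ (t + 1 - π.1.parts.card) := by
    intro π
    have h0 := count_main (t := t) d hd π.1.parts.card π.1.parts rfl
      (π.1.parts_nonempty Finset.univ_nonempty.ne_empty)
      π.1.bot_notMem π.1.supIndep.pairwiseDisjoint π.2
    rwa [π.1.sup_parts] at h0
  have hterm : ∀ (j : Fin t → Fin d) (π : NCP t),
      extMul κ π.1 (fun s => X (j s) (j (s+1))) =
        if Conds d Finset.univ π.1.parts j then ∏ C ∈ π.1.parts, α C.card else 0 := by
    intro j π
    have hfac : ∀ C ∈ π.1.parts,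
        κ C.card (fun i => X (j ((C.orderIsoOfFin rfl i).1))
            (j ((C.orderIsoOfFin rfl i).1 + 1))) =
          if (∀ s ∈ C, j (csucc Finset.univ s) = j (csucc C s)) then α C.card else 0 := by
      intro C hC
      have hCne : C.Nonempty := π.1.nonempty_of_mem_parts hC
      have hCc : C.card ≠ 0 := (Finset.card_pos.2 hCne).ne'
      have h2 := hX C.card hCc
        (fun i => (j ((C.orderIsoOfFin rfl i).1), j ((C.orderIsoOfFin rfl i).1 + 1)))
      by_cases hcond : ∀ s ∈ C, j (csucc Finset.univ s) = j (csucc C s)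
      · rw [if_pos hcond]
        rw [if_pos ((blockcond_iff hCne j).2 hcond)] at h2
        exact h2
      · rw [if_neg hcond]
        rw [if_neg (fun hc => hcond ((blockcond_iff hCne j).1 hc))] at h2
        exact h2
    calc extMul κ π.1 (fun s => X (j s) (j (s+1)))
        = ∏ C ∈ π.1.parts,
            (if (∀ s ∈ C, j (csucc Finset.univ s) = j (csucc C s))
              then α C.card else 0) := Finset.prod_congr rfl hfac
      _ = if (∀ C ∈ π.1.parts, ∀ s ∈ C, j (csucc Finset.univ s) = j (csucc C s))
            then ∏ C ∈ π.1.parts, α C.card else 0 := prod_ite_all _ _ _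
      _ = if Conds d Finset.univ π.1.parts j then ∏ C ∈ π.1.parts, α C.card else 0 :=
        if_congr Iff.rfl rfl rfl
  have key : (∑ π : NCP t, extMul κd π.1 (fun _ : Fin t => X)) =
      ∑ π : NCP t, ((d:ℂ)⁻¹ *
        ((d:ℂ) ^ (t + 1 - π.1.parts.card) * ∏ C ∈ π.1.parts, α C.card)) := by
    rw [← hκd t ht (fun _ => X), hφd]
    have htr : ∑ i, φ (((List.ofFn fun _ : Fin t => X).prod) i i)
        = ∑ j : Fin t → Fin d,
            φ ((List.ofFn fun s : Fin t => X (j s) (j (s+1))).prod) := by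
      rw [← map_sum, ← map_sum]
      exact congrArg φ (trace_prod t (fun _ => X))
    rw [htr]
    have h3 : ∀ j : Fin t → Fin d,
        φ ((List.ofFn fun s : Fin t => X (j s) (j (s+1))).prod)
          = ∑ π : NCP t, (if Conds d Finset.univ π.1.parts j
              then ∏ C ∈ π.1.parts, α C.card else 0) := by
      intro j
      rw [hκ t ht]
      exact Finset.sum_congr rfl (fun π _ => hterm j π)
    rw [Finset.sum_congr rfl (fun j _ => h3 j), Finset.sum_comm, Finset.mul_sum]
    apply Finset.sum_congr rfl
    intro π _
    congr 1
    rw [← Finset.sum_filter, Finset.sum_const, hcount π, nsmul_eq_mul, Nat.cast_pow]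
  have hFext : ∀ π : NCP t, extMul κd π.1 (fun _ : Fin t => X) =
      ∏ C ∈ π.1.parts, κd C.card (fun _ => X) := fun π => rfl
  have hGeq : ∀ π : NCP t, (d:ℂ)⁻¹ *
      ((d:ℂ) ^ (t + 1 - π.1.parts.card) * ∏ C ∈ π.1.parts, α C.card) =
        ∏ C ∈ π.1.parts, ((d:ℂ) ^ (C.card - 1) * α C.card) := by
    intro π
    have hk : t + 1 - π.1.parts.card = (t - π.1.parts.card) + 1 := by
      have := hple π
      have : 0 < π.1.parts.card :=
        Finset.card_pos.2 (π.1.parts_nonempty Finset.univ_nonempty.ne_empty)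
      omega
    rw [Finset.prod_mul_distrib, Finset.prod_pow_eq_pow_sum, hsumsub π, hk, pow_succ]
    field_simp
  rw [Finset.sum_congr rfl (fun π _ => hFext π),
    Finset.sum_congr rfl (fun π _ => hGeq π)] at key
  have hune : (Finset.univ : Finset (Fin t)).Nonempty := Finset.univ_nonempty
  have hnctop : IsNC (Finpartition.indiscrete (a := (Finset.univ : Finset (Fin t)))
      hune.ne_empty).parts := by
    intro i j' k l h1 h2 h3 B hB C hC hBC _ _ _ _
    rw [show (Finpartition.indiscrete (a := (Finset.univ : Finset (Fin t)))
      hune.ne_empty).parts = {Finset.univ} from rfl, Finset.mem_singleton] at hB hC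
    exact hBC (hB.trans hC.symm)
  set πtop : NCP t := ⟨Finpartition.indiscrete hune.ne_empty, hnctop⟩ with hπtop
  have htop_parts : πtop.1.parts = {(Finset.univ : Finset (Fin t))} := rfl
  have hcardu : (Finset.univ : Finset (Fin t)).card = t := by
    rw [Finset.card_univ, Fintype.card_fin]
  have haux : ∀ (k : ℕ) (_ : k = t), κd k (fun _ => X) = κd t (fun _ => X) := by
    intro k hk
    subst hk
    rfl
  have hFtop : (∏ C ∈ πtop.1.parts, κd C.card (fun _ => X)) = κd t (fun _ => X) := by
    rw [htop_parts, Finset.prod_singleton]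
    exact haux _ hcardu
  have hGtop : (∏ C ∈ πtop.1.parts, ((d:ℂ) ^ (C.card - 1) * α C.card)) =
      (d:ℂ) ^ (t - 1) * α t := by
    rw [htop_parts, Finset.prod_singleton, hcardu]
  have hothers : ∀ π ∈ Finset.univ.erase πtop,
      (∏ C ∈ π.1.parts, κd C.card (fun _ => X)) =
        ∏ C ∈ π.1.parts, ((d:ℂ) ^ (C.card - 1) * α C.card) := by
    intro π hπ
    have hneq := (Finset.mem_erase.1 hπ).1
    apply Finset.prod_congr rfl
    intro C hC
    have hCne := π.1.nonempty_of_mem_parts hC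
    have hCc : C.card ≠ 0 := (Finset.card_pos.2 hCne).ne'
    have hle : C.card ≤ t := by
      have := Finset.card_le_univ C
      rwa [Fintype.card_fin] at this
    have hlt : C.card < t := by
      rcases lt_or_eq_of_le hle with h | h
      · exact h
      · exfalso
        apply hneq
        have hCu : C = Finset.univ :=
          Finset.eq_univ_of_card C (by rw [Fintype.card_fin]; exact h)
        apply Subtype.ext
        apply Finpartition.ext
        rw [htop_parts]
        apply Finset.eq_singleton_iff_unique_mem.2
        refine ⟨hCu ▸ hC, ?_⟩
        intro D hD
        by_contra hDu
        have hDC : D ≠ C := fun h' => hDu (h'.trans hCu)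
        have hdisj := π.1.supIndep.pairwiseDisjoint hD hC hDC
        obtain ⟨x, hx⟩ := π.1.nonempty_of_mem_parts hD
        exact (Finset.disjoint_left.1 hdisj hx) (hCu ▸ Finset.mem_univ x)
    exact IH C.card hlt hCc
  rw [← Finset.add_sum_erase _ _ (Finset.mem_univ πtop),
      ← Finset.add_sum_erase _ _ (Finset.mem_univ πtop),
      Finset.sum_congr rfl hothers] at key
  have hfin := add_right_cancel key
  rw [hFtop, hGtop] at hfin
  exact hfin
end
end

section
/- For real numbers δ > 1 and integers N ≥ 1, define the 'free dimension' arithmetic by the rules of Dykema: the free product of N copies of (ℂ ⊕ L𝔽_1) with weights (1−δ^{-1}, δ^{-1}), computed by iterating the two-case formula of Proposition 1.7 of Dykema, yields LF(N(2δ^{-1} − δ^{-2})) if N ≥ δ, and ℂ ⊕ LF(2 − 1/N) with weights (1 − Nδ^{-1}, Nδ^{-1}) if N ≤ δ. Formally: prove by induction on N that iterating the map ((1−α, r), (1−β, s)) ↦ LF(rα² + 2α(1−α) + sβ² + 2β(1−β)) if α+β ≥ 1, and (1−α−β) ⊕ LF((α+β)^{-2}(rα² + sβ² + 4αβ)) with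 weight α+β if α+β ≤ 1, starting from N copies of (α, r) = (δ^{-1}, 1), gives parameters N(2δ^{-1} − δ^{-2}) in the first case and (Nδ^{-1}, 2 − 1/N) in the second. -/
/-- The one-step free-product combination rule of Dykema (Proposition 1.7):
a state `(w, r)` represents `ℂ ⊕ LF(r)` with weights `(1 − w, w)`
(with `w = 1` representing the factor `LF(r)` itself). -/
noncomputable def dykemaStep (p q : ℝ × ℝ) : ℝ × ℝ :=
  if 1 ≤ p.1 + q.1 then
    (1, p.2 * p.1 ^ 2 + 2 * p.1 * (1 - p.1) + q.2 * q.1 ^ 2 + 2 * q.1 * (1 - q.1))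
  else
    (p.1 + q.1, (p.1 + q.1) ^ (-2 : ℤ) * (p.2 * p.1 ^ 2 + q.2 * q.1 ^ 2 + 4 * p.1 * q.1))

/-- The `N`-fold iterated combination of copies of `(δ⁻¹, 1)`,
i.e. of `ℂ ⊕ L𝔽₁ = ℂ ⊕ Lℤ` with weights `(1 − δ⁻¹, δ⁻¹)`. -/
noncomputable def dykemaIter (δ : ℝ) : ℕ → ℝ × ℝ
  | 0 => (δ⁻¹, 1)
  | Nat.succ m => dykemaStep (dykemaIter δ m) (δ⁻¹, 1)


lemma dykemaStep_pos {a b ra rb : ℝ} (h : 1 ≤ a + b) :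
    dykemaStep (a, ra) (b, rb) =
      (1, ra * a ^ 2 + 2 * a * (1 - a) + rb * b ^ 2 + 2 * b * (1 - b)) := by
  simp [dykemaStep, h]

lemma dykemaStep_neg {a b ra rb : ℝ} (h : ¬ 1 ≤ a + b) :
    dykemaStep (a, ra) (b, rb) =
      (a + b, (a + b) ^ (-2 : ℤ) * (ra * a ^ 2 + rb * b ^ 2 + 4 * a * b)) := by
  simp [dykemaStep, h]

/-- `(ℂ ⊕ Lℤ)^{*N}` (with weights `(1 − δ⁻¹, δ⁻¹)`), computed by
iterating Dykema's two-case formula, is `LF(N(2δ⁻¹ − δ⁻²))` if `N ≥ δ`, and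
`ℂ ⊕ LF(2 − 1/N)` with weights `(1 − Nδ⁻¹, Nδ⁻¹)` if `N ≤ δ`. -/
theorem stmt_14 (δ : ℝ) (hδ : 1 < δ) (N : ℕ) (hN : 1 ≤ N) :
    ((δ ≤ (N : ℝ)) → dykemaIter δ (N - 1) = (1, (N : ℝ) * (2 * δ⁻¹ - δ⁻¹ ^ 2))) ∧
    (((N : ℝ) ≤ δ) → dykemaIter δ (N - 1) = ((N : ℝ) * δ⁻¹, 2 - 1 / (N : ℝ))) := by
  have hδ0 : (0:ℝ) < δ := lt_trans one_pos hδ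
  have hi0 : (0:ℝ) < δ⁻¹ := inv_pos.mpr hδ0
  have hδi : δ * δ⁻¹ = 1 := mul_inv_cancel₀ (ne_of_gt hδ0)
  obtain ⟨m, rfl⟩ : ∃ m, N = m + 1 := ⟨N - 1, (Nat.succ_pred_eq_of_pos hN).symm⟩
  clear hN
  induction m with
  | zero =>
      simp only [Nat.add_sub_cancel, dykemaIter]
      constructor
      · intro h; push_cast at h; linarith
      · intro _; norm_num
  | succ k ih =>
      simp only [Nat.add_sub_cancel] at ih ⊢
      push_cast at ih ⊢
      have hk0 : (0:ℝ) < (k:ℝ) + 1 := by positivity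
      have hk1 : ((k:ℝ) + 1) ≠ 0 := ne_of_gt hk0
      have hk2 : ((k:ℝ) + 1 + 1) ≠ 0 := by positivity
      have hδne : δ ≠ 0 := ne_of_gt hδ0
      show (_ → dykemaStep (dykemaIter δ k) (δ⁻¹, 1) = _) ∧
           (_ → dykemaStep (dykemaIter δ k) (δ⁻¹, 1) = _)
      by_cases hc : δ ≤ ((k:ℝ) + 1)
      · rw [ih.1 hc, dykemaStep_pos (by linarith)]
        constructor
        · intro _
          rw [Prod.mk.injEq]
          exact ⟨rfl, by ring⟩
        · intro h2; linarith
      · push_neg at hc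
        rw [ih.2 (le_of_lt hc)]
        constructor
        · intro h1
          have hcond : (1:ℝ) ≤ ((k:ℝ) + 1) * δ⁻¹ + δ⁻¹ := by
            have h := mul_le_mul_of_nonneg_right h1 (le_of_lt hi0)
            rw [hδi] at h
            nlinarith [h]
          rw [dykemaStep_pos hcond, Prod.mk.injEq]
          refine ⟨rfl, ?_⟩
          field_simp
          ring
        · intro h1
          by_cases hcond : (1:ℝ) ≤ ((k:ℝ) + 1) * δ⁻¹ + δ⁻¹
          · -- boundary case: δ = k + 2
            have hle : δ ≤ (k:ℝ) + 2 := by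
              have h := mul_le_mul_of_nonneg_right hcond (le_of_lt hδ0)
              rw [one_mul] at h
              have he : (((k:ℝ) + 1) * δ⁻¹ + δ⁻¹) * δ = (k:ℝ) + 2 := by
                field_simp; ring
              linarith [he ▸ h]
            have hδeq : δ = (k:ℝ) + 2 := le_antisymm hle (by linarith)
            have hk2' : ((k:ℝ) + 2) ≠ 0 := by positivity
            rw [dykemaStep_pos hcond, Prod.mk.injEq]
            constructor
            · rw [hδeq]; field_simp; ring
            · rw [hδeq]; field_simp; ring
          · rw [dykemaStep_neg hcond, Prod.mk.injEq]
            constructor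
            · ring
            · rw [show ((k:ℝ)+1)*δ⁻¹+δ⁻¹ = ((k:ℝ)+2)*δ⁻¹ by ring, zpow_neg,
                  show ((2:ℤ)) = ((2:ℕ):ℤ) from rfl, zpow_natCast]
              have hk2' : ((k:ℝ) + 2) ≠ 0 := by positivity
              field_simp
              ring
end
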